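/- arXiv:2007.00123 — 11 statements merged into one kernel-verified Lean document; each statement's English description precedes it below -/
import Mathlib

section
/- Let p be a prime and let n, k be positive integers such that n is odd and k divides n^p − 1. For every prime ℓ dividing k, write α = ν_ℓ(k), β = ν_ℓ(gcd(n−1, k)) and γ = ν_ℓ(gcd(n^(p−1) + n^(p−2) + ⋯ + n + 1, k)). Then: (a) if ℓ ≠ p, then either (β = 0 and γ = α) or (β = α and γ = 0); (b) if ℓ = p and α = 1, then β = 1 and γ = 1; (c) if ℓ = p = 2 and α = 2, then either (β = 1 and γ = 2) or (β = 2 and γ = 1); (d) if ℓ = p = 2 and α > 2, then either (β = 1 and γ ∈ {α−1, α}) or (γ = 1 and β ∈ {α−1, α}); (e) if ℓ = p > 2 and α ≥ 2, then β ∈ {α−1, α} and γ = 1. -/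
set_option maxHeartbeats 1000000

private lemma padic_gcd_min {ℓ x y : ℕ} (hℓ : ℓ.Prime) (hx : x ≠ 0) (hy : y ≠ 0) :
    padicValNat ℓ (Nat.gcd x y) = min (padicValNat ℓ x) (padicValNat ℓ y) := by
  rw [← Nat.factorization_def _ hℓ, ← Nat.factorization_def _ hℓ, ← Nat.factorization_def _ hℓ,
    Nat.factorization_gcd hx hy, Finsupp.inf_apply]

/-- Lemma 2.2: key arithmetic lemma on valuations of gcd(n-1,k) and
gcd(n^(p-1)+...+n+1, k) when k ∣ n^p - 1. -/
theorem stmt_0 (p n k : ℕ) (hp : p.Prime) (hn : 0 < n) (hk : 0 < k)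
    (hodd : Odd n) (hdvd : k ∣ n ^ p - 1)
    (ℓ : ℕ) (hℓ : ℓ.Prime) (hℓk : ℓ ∣ k)
    (α β γ : ℕ)
    (hα : α = padicValNat ℓ k)
    (hβ : β = padicValNat ℓ (Nat.gcd (n - 1) k))
    (hγ : γ = padicValNat ℓ (Nat.gcd (∑ i ∈ Finset.range p, n ^ i) k)) :
    (ℓ ≠ p → (β = 0 ∧ γ = α) ∨ (β = α ∧ γ = 0)) ∧
    (ℓ = p → α = 1 → β = 1 ∧ γ = 1) ∧
    (ℓ = p → p = 2 → α = 2 → (β = 1 ∧ γ = 2) ∨ (β = 2 ∧ γ = 1)) ∧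
    (ℓ = p → p = 2 → 2 < α →
      (β = 1 ∧ (γ = α - 1 ∨ γ = α)) ∨ (γ = 1 ∧ (β = α - 1 ∨ β = α))) ∧
    (ℓ = p → 2 < p → 2 ≤ α → (β = α - 1 ∨ β = α) ∧ γ = 1) := by
  haveI : Fact ℓ.Prime := ⟨hℓ⟩
  subst hα hβ hγ
  have hvpos : 1 ≤ padicValNat ℓ k := one_le_padicValNat_of_dvd hk.ne' hℓk
  rcases eq_or_lt_of_le (Nat.succ_le_of_lt hn : 1 ≤ n) with h1 | h2
  · -- n = 1
    have hn1 : n = 1 := h1.symm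
    subst hn1
    have hg1 : Nat.gcd (1 - 1) k = k := by simp
    have hS : (∑ i ∈ Finset.range p, 1 ^ i) = p := by simp
    rw [hg1, hS]
    constructor
    · intro hne
      right
      refine ⟨rfl, padicValNat.eq_zero_of_not_dvd ?_⟩
      intro h
      exact hne ((Nat.prime_dvd_prime_iff_eq hℓ hp).mp (h.trans (Nat.gcd_dvd_left p k)))
    · have hcase : ℓ = p → padicValNat ℓ (Nat.gcd p k) = 1 := by
        rintro rfl
        rw [Nat.gcd_eq_left hℓk]
        exact padicValNat.self hℓ.one_lt
      refine ⟨fun h h1 => ⟨h1, hcase h⟩, fun h _ h2 => Or.inr ⟨h2, hcase h⟩,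
        fun h _ _ => Or.inr ⟨hcase h, Or.inr rfl⟩, fun h _ _ => ⟨Or.inr rfl, hcase h⟩⟩
  · -- 2 ≤ n
    have hn1 : n - 1 ≠ 0 := by omega
    have hSpos : 0 < ∑ i ∈ Finset.range p, n ^ i :=
      Finset.sum_pos (fun i _ => pow_pos hn i) ⟨0, Finset.mem_range.mpr hp.pos⟩
    have hnple : 1 ≤ n ^ p := Nat.one_le_pow _ _ hn
    have hmul : (n - 1) * (∑ i ∈ Finset.range p, n ^ i) = n ^ p - 1 := by
      have h := geom_sum_mul (n : ℤ) p
      zify [Nat.one_le_of_lt h2, hnple]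
      push_cast
      linarith [h]
    have hknp : k ∣ (n - 1) * (∑ i ∈ Finset.range p, n ^ i) := hmul ▸ hdvd
    have hnpne : (n - 1) * (∑ i ∈ Finset.range p, n ^ i) ≠ 0 := mul_ne_zero hn1 hSpos.ne'
    have hab : padicValNat ℓ ((n - 1) * (∑ i ∈ Finset.range p, n ^ i)) =
        padicValNat ℓ (n - 1) + padicValNat ℓ (∑ i ∈ Finset.range p, n ^ i) :=
      padicValNat.mul hn1 hSpos.ne'
    have hαab : padicValNat ℓ k ≤
        padicValNat ℓ (n - 1) + padicValNat ℓ (∑ i ∈ Finset.range p, n ^ i) := by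
      rw [← hab]
      exact (padicValNat_dvd_iff_le hnpne).mp (pow_padicValNat_dvd.trans hknp)
    have hbeta : padicValNat ℓ (Nat.gcd (n - 1) k) =
        min (padicValNat ℓ (n - 1)) (padicValNat ℓ k) :=
      padic_gcd_min hℓ hn1 hk.ne'
    have hgamma : padicValNat ℓ (Nat.gcd (∑ i ∈ Finset.range p, n ^ i) k) =
        min (padicValNat ℓ (∑ i ∈ Finset.range p, n ^ i)) (padicValNat ℓ k) :=
      padic_gcd_min hℓ hSpos.ne' hk.ne'
    -- gcd (n-1) S divides p
    have hgcdp : Nat.gcd (n - 1) (∑ i ∈ Finset.range p, n ^ i) ∣ p := by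
      have hd1 : ((Nat.gcd (n - 1) (∑ i ∈ Finset.range p, n ^ i) : ℕ) : ℤ) ∣ (n : ℤ) - 1 := by
        have h := Nat.gcd_dvd_left (n - 1) (∑ i ∈ Finset.range p, n ^ i)
        have h' := Int.natCast_dvd_natCast.mpr h
        rwa [Nat.cast_sub (by omega), Nat.cast_one] at h'
      have hdS : ((Nat.gcd (n - 1) (∑ i ∈ Finset.range p, n ^ i) : ℕ) : ℤ) ∣
          ((∑ i ∈ Finset.range p, n ^ i : ℕ) : ℤ) :=
        Int.natCast_dvd_natCast.mpr (Nat.gcd_dvd_right _ _)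
      have key : ((n : ℤ) - 1) ∣ ((∑ i ∈ Finset.range p, n ^ i : ℕ) : ℤ) - p := by
        have hEq : ((∑ i ∈ Finset.range p, n ^ i : ℕ) : ℤ) - p =
            ∑ i ∈ Finset.range p, ((n : ℤ) ^ i - 1) := by
          rw [Finset.sum_sub_distrib, Finset.sum_const, Finset.card_range]
          push_cast
          ring
        rw [hEq]
        exact Finset.dvd_sum fun i _ => by
          simpa using sub_dvd_pow_sub_pow (n : ℤ) 1 i
      have hfin : ((Nat.gcd (n - 1) (∑ i ∈ Finset.range p, n ^ i) : ℕ) : ℤ) ∣ (p : ℤ) := by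
        have h1 := hd1.trans key
        have h2' := dvd_sub hdS h1
        simpa using h2'
      exact_mod_cast hfin
    -- ℓ = p facts
    have hFermat : ℓ = p → ℓ ∣ n - 1 := by
      rintro rfl
      have h1 : ℓ ∣ n ^ ℓ - 1 := hℓk.trans hdvd
      have h2' : ((n : ZMod ℓ)) - 1 = 0 := by
        have h0 := (ZMod.natCast_eq_zero_iff _ _).mpr h1
        push_cast [Nat.cast_sub hnple] at h0
        have hpc : (n : ZMod ℓ) ^ ℓ = (n : ZMod ℓ) := ZMod.pow_card _
        rw [hpc] at h0
        exact h0
      have h3 : ((n - 1 : ℕ) : ZMod ℓ) = 0 := by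
        push_cast [Nat.cast_sub (by omega : 1 ≤ n)]
        exact h2'
      exact (ZMod.natCast_eq_zero_iff _ _).mp h3
    have hna : ℓ = p → 1 ≤ padicValNat ℓ (n - 1) := fun h =>
      one_le_padicValNat_of_dvd (by omega) (hFermat h)
    have hpS : ℓ = p → 1 ≤ padicValNat ℓ (∑ i ∈ Finset.range p, n ^ i) := by
      intro h
      refine one_le_padicValNat_of_dvd hSpos.ne' ?_
      have hone : (n : ZMod ℓ) = 1 := by
        have h0 := (ZMod.natCast_eq_zero_iff _ _).mpr (hFermat h)
        push_cast [Nat.cast_sub (by omega : 1 ≤ n)] at h0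
        linear_combination h0
      have h3 : ((∑ i ∈ Finset.range p, n ^ i : ℕ) : ZMod ℓ) = 0 := by
        push_cast
        rw [hone]
        simp only [one_pow]
        rw [Finset.sum_const, Finset.card_range, nsmul_eq_mul, mul_one, ← h]
        exact ZMod.natCast_self ℓ
      exact (ZMod.natCast_eq_zero_iff _ _).mp h3
    have hb1 : ℓ = p → 2 < p → padicValNat ℓ (∑ i ∈ Finset.range p, n ^ i) = 1 := by
      intro h hp2
      subst h
      have hla : ℓ ∣ n - 1 := hFermat rfl
      have hndvd : ¬ ℓ ∣ n := by
        intro hcon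
        have hd : ℓ ∣ n - (n - 1) := Nat.dvd_sub hcon hla
        rw [(by omega : n - (n - 1) = 1)] at hd
        exact hℓ.one_lt.ne' (Nat.dvd_one.mp hd)
      have hoddℓ : Odd ℓ := hℓ.odd_of_ne_two (by omega)
      have hkey := padicValNat.pow_sub_pow (p := ℓ) hoddℓ (by omega : 1 < n) hla hndvd
        (n := ℓ) hℓ.pos.ne'
      rw [one_pow, padicValNat.self hℓ.one_lt, ← hmul, hab] at hkey
      omega
    -- p = 2 facts
    have h2facts : ℓ = p → p = 2 → 3 ≤ padicValNat ℓ (n - 1) +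
        padicValNat ℓ (∑ i ∈ Finset.range p, n ^ i) ∧
        ¬(2 ≤ padicValNat ℓ (n - 1) ∧
          2 ≤ padicValNat ℓ (∑ i ∈ Finset.range p, n ^ i)) := by
      rintro rfl h2'
      subst h2'
      obtain ⟨m, hm⟩ := hodd
      have hS2 : (∑ i ∈ Finset.range 2, n ^ i) = n + 1 := by
        rw [Finset.sum_range_succ, Finset.sum_range_one, pow_zero, pow_one]
        omega
      constructor
      · rw [← hab]
        refine (padicValNat_dvd_iff_le hnpne).mp ?_
        rcases Nat.even_mul_succ_self m with ⟨t, ht⟩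
        refine ⟨t, ?_⟩
        rw [hS2, (by omega : n - 1 = 2 * m), hm]
        have h2t : m * (m + 1) = 2 * t := by omega
        calc 2 * m * (2 * m + 1 + 1) = 4 * (m * (m + 1)) := by ring
          _ = 4 * (2 * t) := by rw [h2t]
          _ = 2 ^ 3 * t := by ring
      · rintro ⟨ha2, hb2⟩
        have hd1 : (2:ℕ) ^ 2 ∣ n - 1 := (pow_dvd_pow 2 ha2).trans pow_padicValNat_dvd
        have hd2 : (2:ℕ) ^ 2 ∣ (∑ i ∈ Finset.range 2, n ^ i) :=
          (pow_dvd_pow 2 hb2).trans pow_padicValNat_dvd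
        rw [hS2] at hd2
        norm_num at hd1 hd2
        omega
    refine ⟨?_, ?_, ?_, ?_, ?_⟩
    · intro hne
      have hab0 : padicValNat ℓ (n - 1) = 0 ∨
          padicValNat ℓ (∑ i ∈ Finset.range p, n ^ i) = 0 := by
        by_contra hcon
        push_neg at hcon
        have h1 : ℓ ∣ n - 1 := dvd_of_one_le_padicValNat (by omega)
        have h2' : ℓ ∣ (∑ i ∈ Finset.range p, n ^ i) := dvd_of_one_le_padicValNat (by omega)
        have h3 : ℓ ∣ p := (Nat.dvd_gcd h1 h2').trans hgcdp
        exact hne ((Nat.prime_dvd_prime_iff_eq hℓ hp).mp h3)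
      omega
    · intro h hα1
      have := hna h; have := hpS h
      omega
    · intro h h2' hα2
      have := h2facts h h2'
      have := hna h; have := hpS h
      omega
    · intro h h2' hα3
      have := h2facts h h2'
      have := hna h; have := hpS h
      omega
    · intro h hpgt hα2
      have := hb1 h hpgt
      have := hna h
      omega
end

section
/- Let p be a prime and let n be a positive integer with gcd(n, m) = 1 such that m divides n^p − 1, and set d = gcd(n−1, m). Then for every prime ℓ dividing m, writing α = ν_ℓ(m) and β = ν_ℓ(d): β ∈ {0, α} if ℓ ≠ p; β = 1 if ℓ = p and α = 1; β ∈ {1, α−1, α} if ℓ = p = 2 and α ≥ 2; and β ∈ {α−1, α} if ℓ = p > 2 and α ≥ 2. -/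
lemma aux_geom (n k : ℕ) (hn : 1 ≤ n) :
    (n - 1) * (∑ i ∈ Finset.range k, n ^ i) = n ^ k - 1 := by
  have h : ((n : ℤ) - 1) * (∑ i ∈ Finset.range k, (n : ℤ) ^ i) = (n : ℤ) ^ k - 1 := by
    rw [mul_comm]; exact geom_sum_mul (n : ℤ) k
  have h1 : (1 : ℕ) ≤ n ^ k := Nat.one_le_pow _ _ hn
  zify [hn, h1]
  exact h

lemma aux_two_odd (p n : ℕ) (hodd : Odd p) (h2 : 2 ∣ n - 1) (hn : 2 ≤ n) :
    padicValNat 2 (n ^ p - 1) = padicValNat 2 (n - 1) := by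
  have hn1 : n - 1 ≠ 0 := by omega
  set S := ∑ i ∈ Finset.range p, n ^ i with hS
  have hfac : (n - 1) * S = n ^ p - 1 := aux_geom n p (by omega)
  have hSodd : ¬ 2 ∣ S := by
    rw [← ZMod.natCast_eq_zero_iff]
    have hcast : (n : ZMod 2) = 1 := by
      have : n % 2 = 1 := by omega
      rw [← ZMod.natCast_mod, this]; norm_num
    have : (S : ZMod 2) = (p : ZMod 2) := by
      rw [hS]; push_cast [hcast]; simp
    rw [this]
    have : p % 2 = 1 := Nat.odd_iff.mp hodd
    rw [← ZMod.natCast_mod, this]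
    norm_num
  have hS0 : S ≠ 0 := by intro h; rw [h] at hSodd; exact hSodd ⟨0, rfl⟩
  haveI : Fact (Nat.Prime 2) := ⟨Nat.prime_two⟩
  rw [← hfac, padicValNat.mul hn1 hS0, padicValNat.eq_zero_of_not_dvd hSodd, add_zero]

lemma aux_core (p n m : ℕ) (hp : p.Prime) (hn : 2 ≤ n) (hm0 : m ≠ 0)
    (hdvd : m ∣ n ^ p - 1) (ℓ : ℕ) (hℓ : ℓ.Prime) (hℓm : ℓ ∣ m)
    (α β : ℕ) (hα : α = padicValNat ℓ m) (hβ : β = padicValNat ℓ (Nat.gcd (n - 1) m)) :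
    (ℓ ≠ p → β = 0 ∨ β = α) ∧
    (ℓ = p → α = 1 → β = 1) ∧
    (ℓ = p → p = 2 → 2 ≤ α → β = 1 ∨ β = α - 1 ∨ β = α) ∧
    (ℓ = p → 2 < p → 2 ≤ α → β = α - 1 ∨ β = α) := by
  haveI : Fact ℓ.Prime := ⟨hℓ⟩
  have hn1 : n - 1 ≠ 0 := by omega
  have hN0 : n ^ p - 1 ≠ 0 := by
    have : 2 ^ 1 ≤ n ^ p := Nat.pow_le_pow_left hn p |>.trans' (Nat.pow_le_pow_right (by norm_num) hp.one_lt.le)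
    omega
  set e := padicValNat ℓ (n - 1) with he
  -- β = min e α
  have hβmin : β = min e α := by
    rw [hβ, ← Nat.factorization_def _ hℓ, Nat.factorization_gcd hn1 hm0]
    simp [Nat.factorization_def _ hℓ, he, hα]
  have hα1 : 1 ≤ α := hα ▸ one_le_padicValNat_of_dvd hm0 hℓm
  have hαN : α ≤ padicValNat ℓ (n ^ p - 1) := by
    rw [← padicValNat_dvd_iff_le hN0]
    exact dvd_trans (hα ▸ pow_padicValNat_dvd) hdvd
  refine ⟨?_, ?_, ?_, ?_⟩
  · -- ℓ ≠ p
    intro hne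
    by_cases hℓn : ℓ ∣ n - 1
    · right
      have hLTE : padicValNat ℓ (n ^ p - 1) = e := by
        rcases eq_or_ne ℓ 2 with h2 | h2
        · subst h2
          exact aux_two_odd p n (hp.odd_of_ne_two (by tauto)) hℓn hn
        · have hodd : Odd ℓ := hℓ.odd_of_ne_two h2
          have hx : ¬ ℓ ∣ n := by
            intro h
            have h1 : ℓ ∣ n - (n - 1) := Nat.dvd_sub h hℓn
            rw [(by omega : n - (n - 1) = 1)] at h1
            exact hℓ.one_lt.ne' (Nat.eq_one_of_dvd_one h1)
          have := padicValNat.pow_sub_pow (p := ℓ) hodd (x := n) (y := 1)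
            (by omega) (by simpa using hℓn) hx (n := p) hp.ne_zero
          simpa [padicValNat.eq_zero_of_not_dvd
            ((Nat.Prime.coprime_iff_not_dvd hℓ).mp ((Nat.coprime_primes hℓ hp).mpr hne))] using this
      omega
    · left
      have : e = 0 := padicValNat.eq_zero_of_not_dvd hℓn
      omega
  all_goals intro hlp
  all_goals subst hlp
  all_goals haveI : Fact ℓ.Prime := ⟨hp⟩
  all_goals
    have hpn1 : ℓ ∣ n - 1 := by
      have h1 : ℓ ∣ n ^ ℓ - 1 := hℓm.trans hdvd
      have h2 : ((n ^ ℓ - 1 : ℕ) : ZMod ℓ) = 0 := by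
        rw [ZMod.natCast_eq_zero_iff]; exact h1
      have h3 : (n : ZMod ℓ) ^ ℓ = (n : ZMod ℓ) := ZMod.pow_card _
      have h4 : (n : ZMod ℓ) = 1 := by
        have : (n : ZMod ℓ) ^ ℓ - 1 = 0 := by
          push_cast [Nat.one_le_pow _ _ (by omega : 0 < n)] at h2
          exact h2
        rw [h3] at this
        linear_combination this
      rw [← ZMod.natCast_eq_zero_iff]
      push_cast [(by omega : 1 ≤ n)]
      rw [h4]; ring
  all_goals have he1 : 1 ≤ e := he ▸ one_le_padicValNat_of_dvd (by omega) hpn1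
  · intro ha1; omega
  · -- p = 2 case
    intro h2 hα2
    subst h2
    rcases eq_or_lt_of_le he1 with heq | h2e
    · left; omega
    · have h4 : 4 ∣ n - 1 := by
        have : (2:ℕ) ^ 2 ∣ n - 1 := (padicValNat_dvd_iff_le hn1).mpr (by omega)
        simpa using this
      have hnu : padicValNat 2 (n + 1) = 1 := by
        have hl : 1 ≤ padicValNat 2 (n + 1) :=
          one_le_padicValNat_of_dvd (by omega) (by omega)
        have hu : ¬ 2 ≤ padicValNat 2 (n + 1) := by
          intro h
          have : (2:ℕ) ^ 2 ∣ n + 1 := (padicValNat_dvd_iff_le (by omega)).mpr h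
          have : (4:ℕ) ∣ n + 1 := by simpa using this
          omega
        omega
      have hLTE : padicValNat 2 (n ^ 2 - 1) = e + 1 := by
        have := padicValNat.pow_two_sub_pow (x := n) (y := 1) (by omega)
          (by simpa using hpn1) (by omega) (n := 2) (by norm_num) (by norm_num)
        simp only [one_pow, padicValNat.self (by norm_num : 1 < 2), Nat.sub_self] at this
        omega
      right; omega
  · -- p odd case
    intro hodd hα2
    have hLTE : padicValNat ℓ (n ^ ℓ - 1) = e + 1 := by
      have hx : ¬ ℓ ∣ n := by
        intro h
        have h1 : ℓ ∣ n - (n - 1) := Nat.dvd_sub h hpn1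
        rw [(by omega : n - (n - 1) = 1)] at h1
        exact hp.one_lt.ne' (Nat.eq_one_of_dvd_one h1)
      have := padicValNat.pow_sub_pow (p := ℓ) (Nat.Prime.odd_of_ne_two hp (by omega))
        (x := n) (y := 1) (by omega) (by simpa using hpn1) hx (n := ℓ) hp.ne_zero
      simpa [padicValNat.self hp.one_lt] using this
    omega

/-- Lemma 2.3: necessary conditions on the valuations of d = gcd(n-1, m)
when m = q - χ divides n^p - 1. -/
theorem stmt_1 (q : ℕ) (hq : ∃ p k : ℕ, p.Prime ∧ Odd p ∧ 0 < k ∧ q = p ^ k)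
    (χ : ℤ) (hχ : χ = 1 ∨ χ = -1) (m : ℕ) (hm : (m : ℤ) = (q : ℤ) - χ)
    (p n : ℕ) (hp : p.Prime) (hn : 0 < n)
    (hcop : Nat.gcd n m = 1) (hdvd : m ∣ n ^ p - 1)
    (d : ℕ) (hd : d = Nat.gcd (n - 1) m)
    (ℓ : ℕ) (hℓ : ℓ.Prime) (hℓm : ℓ ∣ m)
    (α β : ℕ) (hα : α = padicValNat ℓ m) (hβ : β = padicValNat ℓ d) :
    (ℓ ≠ p → β = 0 ∨ β = α) ∧
    (ℓ = p → α = 1 → β = 1) ∧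
    (ℓ = p → p = 2 → 2 ≤ α → β = 1 ∨ β = α - 1 ∨ β = α) ∧
    (ℓ = p → 2 < p → 2 ≤ α → β = α - 1 ∨ β = α) := by
  have hm0 : m ≠ 0 := by
    obtain ⟨P, k, hP, hPodd, hk, rfl⟩ := hq
    have hP3 : 3 ≤ P := by
      have := hP.two_le
      have := Nat.odd_iff.mp hPodd
      omega
    have hq3 : 3 ≤ P ^ k := le_trans hP3 (Nat.le_self_pow hk.ne' P)
    rcases hχ with rfl | rfl <;> omega
  rcases eq_or_lt_of_le (show 1 ≤ n from hn) with h1 | h2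
  · -- n = 1
    have hn1 : n = 1 := h1.symm
    subst hn1
    have hdm : d = m := by simp [hd]
    have hβα : β = α := by rw [hβ, hdm, hα]
    have hα1 : 1 ≤ α := by
      haveI : Fact ℓ.Prime := ⟨hℓ⟩
      exact hα ▸ one_le_padicValNat_of_dvd hm0 hℓm
    exact ⟨fun _ => Or.inr hβα, fun _ h => by omega, fun _ _ _ => by omega, fun _ _ _ => by omega⟩
  · exact aux_core p n m hp h2 hm0 hdvd ℓ hℓ hℓm α β hα (hd ▸ hβ)
end

section
/- Let p be a prime and let d be a proper divisor of m such that for every prime ℓ dividing m, writing α = ν_ℓ(m) and β = ν_ℓ(d): β ∈ {0, α} if ℓ ≠ p; β = 1 if ℓ = p and α = 1; β ∈ {1, α−1, α} if ℓ = p = 2 and α ≥ 2; and β ∈ {α−1, α} if ℓ = p > 2 and α ≥ 2. Then for every positive integer n with gcd(n, m) = 1, the following are equivalent: (1) gcd(n−1, m) = d and m divides n^p − 1; (2) d divides n − 1, m/d divides n^(p−1) + n^(p−2) + ⋯ + n + 1, and if ν_p(m) = ν_p(d) + 1 then ν_p(n−1) = ν_p(d). -/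
/-- If a prime `ℓ` divides both `n - 1` and the geometric sum, then `ℓ ∣ p`. -/
lemma redei_aux_dvd_p {ℓ n p : ℕ} (hℓ : ℓ.Prime) (hn : 1 ≤ n) (h1 : ℓ ∣ n - 1)
    (h2 : ℓ ∣ ∑ i ∈ Finset.range p, n ^ i) : ℓ ∣ p := by
  have hn1 : (n : ZMod ℓ) = 1 := by
    have h : ((n - 1 : ℕ) : ZMod ℓ) = 0 := (ZMod.natCast_eq_zero_iff _ _).mpr h1
    rw [Nat.cast_sub hn] at h
    push_cast at h
    linear_combination h
  have h : ((∑ i ∈ Finset.range p, n ^ i : ℕ) : ZMod ℓ) = 0 :=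
    (ZMod.natCast_eq_zero_iff _ _).mpr h2
  push_cast at h
  simp [hn1] at h
  exact (ZMod.natCast_eq_zero_iff _ _).mp h

/-- Theorem 2.4: characterization of the n for which the Rédei permutation
has d + χ + 1 fixed points and p-cycles. -/
theorem stmt_2 (q : ℕ) (hq : ∃ p k : ℕ, p.Prime ∧ Odd p ∧ 0 < k ∧ q = p ^ k)
    (χ : ℤ) (hχ : χ = 1 ∨ χ = -1) (m : ℕ) (hm : (m : ℤ) = (q : ℤ) - χ)
    (p : ℕ) (hp : p.Prime)
    (d : ℕ) (hdm : d ∣ m) (hdne : d ≠ m)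
    (hval : ∀ ℓ : ℕ, ℓ.Prime → ℓ ∣ m →
      (ℓ ≠ p → padicValNat ℓ d = 0 ∨ padicValNat ℓ d = padicValNat ℓ m) ∧
      (ℓ = p → padicValNat ℓ m = 1 → padicValNat ℓ d = 1) ∧
      (ℓ = p → p = 2 → 2 ≤ padicValNat ℓ m →
        padicValNat ℓ d = 1 ∨ padicValNat ℓ d = padicValNat ℓ m - 1 ∨
          padicValNat ℓ d = padicValNat ℓ m) ∧
      (ℓ = p → 2 < p → 2 ≤ padicValNat ℓ m →
        padicValNat ℓ d = padicValNat ℓ m - 1 ∨ padicValNat ℓ d = padicValNat ℓ m)) :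
    ∀ n : ℕ, 0 < n → Nat.gcd n m = 1 →
      ((Nat.gcd (n - 1) m = d ∧ m ∣ n ^ p - 1) ↔
        (d ∣ n - 1 ∧ (m / d) ∣ ∑ i ∈ Finset.range p, n ^ i ∧
          (padicValNat p m = padicValNat p d + 1 →
            padicValNat p (n - 1) = padicValNat p d))) := by
  obtain ⟨p₀, k, hp₀, hodd, hk, hqe⟩ := hq
  have hp₀3 : 3 ≤ p₀ := by
    have h2 := hp₀.two_le
    have := Nat.odd_iff.mp hodd
    omega
  have hq3 : 3 ≤ q := by
    have h := Nat.le_self_pow hk.ne' p₀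
    omega
  have hm2 : 2 ≤ m := by rcases hχ with h | h <;> subst h <;> omega
  have hm0 : m ≠ 0 := by omega
  have hd0 : d ≠ 0 := by rintro rfl; rw [zero_dvd_iff] at hdm; omega
  obtain ⟨c, hc⟩ := hdm
  have hc2 : 2 ≤ c := by
    rcases c with _ | _ | c <;> simp_all <;> omega
  have hc0 : c ≠ 0 := by omega
  have hmd : m / d = c := by rw [hc, Nat.mul_div_cancel_left _ (Nat.pos_of_ne_zero hd0)]
  intro n hn hgcd
  have hS0 : 0 < ∑ i ∈ Finset.range p, n ^ i :=
    Finset.sum_pos (fun i _ => pow_pos hn i) ⟨0, Finset.mem_range.mpr hp.pos⟩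
  have key : (n - 1) * (∑ i ∈ Finset.range p, n ^ i) = n ^ p - 1 := by
    have h1 : 1 ≤ n ^ p := Nat.one_le_pow _ _ hn
    zify [hn, h1]
    push_cast
    rw [mul_comm, geom_sum_mul]
  rcases eq_or_ne n 1 with rfl | hne1
  · constructor
    · rintro ⟨h, -⟩
      simp at h
      exact absurd h.symm hdne
    · rintro ⟨-, h2, h3⟩
      exfalso
      have hSp : (∑ i ∈ Finset.range p, (1:ℕ) ^ i) = p := by simp
      rw [hSp, hmd] at h2
      have hcp : c = p := ((Nat.dvd_prime hp).mp h2).resolve_left (by omega)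
      haveI : Fact p.Prime := ⟨hp⟩
      have hα : padicValNat p m = padicValNat p d + 1 := by
        rw [hc, hcp, padicValNat.mul hd0 hp.ne_zero, padicValNat.self hp.one_lt]
      have h3' := h3 hα
      simp at h3'
      have hpm : p ∣ m := ⟨d, by rw [hc, hcp]; ring⟩
      have := (hval p hp hpm).2.1 rfl (by omega)
      omega
  · have hn2 : n - 1 ≠ 0 := by omega
    have hfd : ∀ (ℓ : ℕ), ℓ.Prime → ∀ x, x.factorization ℓ = padicValNat ℓ x :=
      fun ℓ hℓ x => Nat.factorization_def x hℓ
    have hfmul : ∀ (ℓ : ℕ), ℓ.Prime →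
        padicValNat ℓ m = padicValNat ℓ d + padicValNat ℓ c := by
      intro ℓ hℓ
      haveI : Fact ℓ.Prime := ⟨hℓ⟩
      rw [hc, padicValNat.mul hd0 hc0]
    constructor
    · rintro ⟨hg, hdvd⟩
      have hgmin : ∀ (ℓ : ℕ), ℓ.Prime →
          padicValNat ℓ d = min (padicValNat ℓ (n - 1)) (padicValNat ℓ m) := by
        intro ℓ hℓ
        rw [← hfd ℓ hℓ, ← hfd ℓ hℓ, ← hfd ℓ hℓ, ← hg, Nat.factorization_gcd hn2 hm0]
        rfl
      refine ⟨hg ▸ Nat.gcd_dvd_left _ _, ?_, ?_⟩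
      · rw [hmd, ← Nat.factorization_le_iff_dvd hc0 hS0.ne', Finsupp.le_def]
        intro ℓ
        by_cases hℓ : ℓ.Prime
        · have hmulS : padicValNat ℓ m ≤ padicValNat ℓ (n - 1) +
              padicValNat ℓ (∑ i ∈ Finset.range p, n ^ i) := by
            haveI : Fact ℓ.Prime := ⟨hℓ⟩
            have h := (Nat.factorization_le_iff_dvd hm0
              (by positivity : (n - 1) * (∑ i ∈ Finset.range p, n ^ i) ≠ 0)).mpr
              (key ▸ hdvd)
            have h2 := h ℓ
            rw [Nat.factorization_mul hn2 hS0.ne'] at h2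
            simp only [Finsupp.coe_add, Pi.add_apply] at h2
            rw [hfd ℓ hℓ, hfd ℓ hℓ, hfd ℓ hℓ] at h2
            exact h2
          rw [hfd ℓ hℓ, hfd ℓ hℓ]
          have h1 := hgmin ℓ hℓ
          have h2 := hfmul ℓ hℓ
          omega
        · simp [Nat.factorization_eq_zero_of_not_prime _ hℓ]
      · intro heq
        have h1 := hgmin p hp
        omega
    · rintro ⟨h1, h2, h3⟩
      rw [hmd] at h2
      have hmdvd : m ∣ n ^ p - 1 := by
        rw [← key, hc]
        exact mul_dvd_mul h1 h2
      refine ⟨Nat.dvd_antisymm ?_ (Nat.dvd_gcd h1 ⟨c, hc⟩), hmdvd⟩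
      have hg0 : Nat.gcd (n - 1) m ≠ 0 := Nat.gcd_ne_zero_left hn2
      rw [← Nat.factorization_le_iff_dvd hg0 hd0, Finsupp.le_def]
      intro ℓ
      by_cases hℓ : ℓ.Prime
      · rw [Nat.factorization_gcd hn2 hm0]
        have hinf : (Nat.factorization (n-1) ⊓ Nat.factorization m) ℓ
            = min (padicValNat ℓ (n - 1)) (padicValNat ℓ m) := by
          rw [Finsupp.inf_apply, hfd ℓ hℓ, hfd ℓ hℓ]
        rw [hinf, hfd ℓ hℓ]
        by_cases hℓm : ℓ ∣ m
        · obtain ⟨hv1, hv2, hv3, hv4⟩ := hval ℓ hℓ hℓm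
          have hα1 : 1 ≤ padicValNat ℓ m := by
            have := Nat.Prime.factorization_pos_of_dvd hℓ hm0 hℓm
            rw [hfd ℓ hℓ] at this
            omega
          have hfc := hfmul ℓ hℓ
          by_cases hℓp : ℓ = p
          · subst hℓp
            rcases Nat.lt_or_ge (padicValNat ℓ m) 2 with hα | hα
            · have hβ := hv2 rfl (by omega)
              omega
            · by_cases hcase : padicValNat ℓ m = padicValNat ℓ d + 1
              · have := h3 hcase
                omega
              · rcases eq_or_ne ℓ 2 with h2' | h2'
                · subst h2'
                  rcases hv3 rfl rfl hα with hβ | hβ | hβ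
                  · -- β = 1, and not α = β + 1, so α ≥ 3
                    have hα3 : 3 ≤ padicValNat 2 m := by omega
                    have h4c : (4 : ℕ) ∣ c := by
                      have h := (hℓ.pow_dvd_iff_le_factorization (k := 2) hc0).mpr
                        (by rw [hfd 2 hℓ]; omega)
                      norm_num at h
                      exact h
                    have h4S : (4 : ℕ) ∣ n + 1 := by
                      have hs : (∑ i ∈ Finset.range 2, n ^ i) = n + 1 := by
                        simp [Finset.sum_range_succ, Nat.add_comm]
                      rw [hs] at h2
                      exact h4c.trans h2
                    by_contra hcon
                    push_neg at hcon
                    have h4n : (4 : ℕ) ∣ n - 1 := by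
                      have h := (hℓ.pow_dvd_iff_le_factorization (k := 2) hn2).mpr
                        (by rw [hfd 2 hℓ]; omega)
                      norm_num at h
                      exact h
                    omega
                  · omega
                  · omega
                · have hℓ2 : 2 < ℓ := by
                    have := hℓ.two_le
                    omega
                  rcases hv4 rfl hℓ2 hα with hβ | hβ <;> omega
          · rcases hv1 hℓp with hβ | hβ
            · -- β = 0; show ν_ℓ (n-1) = 0
              have hA0 : padicValNat ℓ (n - 1) = 0 := by
                by_contra hA
                have hℓn1 : ℓ ∣ n - 1 := by
                  have := Nat.Prime.factorization_pos_of_dvd hℓ hn2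
                  by_contra hnd
                  rw [Nat.factorization_eq_zero_of_not_dvd hnd] at *
                  exact hA ((hfd ℓ hℓ (n-1)).symm.trans (Nat.factorization_eq_zero_of_not_dvd hnd))
                have hℓc : ℓ ∣ c := by
                  have : 1 ≤ padicValNat ℓ c := by omega
                  have h := hℓ.pow_dvd_iff_le_factorization hc0 (k := 1)
                  rw [hfd ℓ hℓ, pow_one] at h
                  exact h.mpr this
                have hℓS := hℓc.trans h2
                have := redei_aux_dvd_p hℓ hn hℓn1 hℓS
                exact hℓp ((Nat.prime_dvd_prime_iff_eq hℓ hp).mp this)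
              omega
            · omega
        · have : padicValNat ℓ m = 0 := by
            rw [← hfd ℓ hℓ]
            exact Nat.factorization_eq_zero_of_not_dvd hℓm
          omega
      · simp [Nat.factorization_eq_zero_of_not_prime _ hℓ]
end

section
/- Let p be an odd prime and let d be a proper divisor of m. Then there exists a positive integer n such that m divides n^p − 1 and gcd(n−1, m) = d, if and only if for every prime ℓ dividing m, writing α = ν_ℓ(m) and β = ν_ℓ(d): β ∈ {α−1, α} if ℓ = p and α ≥ 2; β ∈ {0, α} if ℓ ≡ 1 (mod p); and β = α in all other cases. -/
lemma padicValNat_gcd {a b ℓ : ℕ} (hℓ : ℓ.Prime) (ha : a ≠ 0) (hb : b ≠ 0) :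
    padicValNat ℓ (Nat.gcd a b) = min (padicValNat ℓ a) (padicValNat ℓ b) := by
  have h := congrArg (fun f : ℕ →₀ ℕ => f ℓ) (Nat.factorization_gcd ha hb)
  simpa [Nat.factorization_def _ hℓ, Finsupp.inf_apply] using h

lemma pow_dvd_iff_le_padic {ℓ k x : ℕ} (hℓ : ℓ.Prime) (hx : x ≠ 0) :
    ℓ ^ k ∣ x ↔ k ≤ padicValNat ℓ x := by
  rw [hℓ.pow_dvd_iff_le_factorization hx, Nat.factorization_def _ hℓ]

lemma fermat_dvd {p n : ℕ} (hp : p.Prime) (hn : 1 ≤ n) (h : p ∣ n ^ p - 1) : p ∣ n - 1 := by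
  haveI : Fact p.Prime := ⟨hp⟩
  have hle : n ≤ n ^ p := Nat.le_self_pow hp.pos.ne' n
  have h1 : p ∣ n ^ p - n := by
    have h2 : ((n : ZMod p)) ^ p = (n : ZMod p) := ZMod.pow_card _
    have h3 : (n : ℕ) ≡ n ^ p [MOD p] := by
      rw [← ZMod.natCast_eq_natCast_iff]; push_cast; exact h2.symm
    exact (Nat.modEq_iff_dvd' hle).mp h3
  have he : n - 1 = (n ^ p - 1) - (n ^ p - n) := by omega
  rw [he]; exact Nat.dvd_sub h h1

lemma lte_odd {ℓ x e : ℕ} (hℓ : ℓ.Prime) (hodd : Odd ℓ) (hx : 2 ≤ x) (hdvd : ℓ ∣ x - 1)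
    (he : e ≠ 0) :
    padicValNat ℓ (x ^ e - 1) = padicValNat ℓ (x - 1) + padicValNat ℓ e := by
  haveI : Fact ℓ.Prime := ⟨hℓ⟩
  have hx' : ¬ ℓ ∣ x := by
    intro hcon
    have : ℓ ∣ 1 := (Nat.sub_sub_self (by omega : 1 ≤ x)) ▸ Nat.dvd_sub hcon hdvd
    have h9 := Nat.le_of_dvd one_pos this; have := hℓ.one_lt; omega
  have := padicValNat.pow_sub_pow (p := ℓ) (x := x) (y := 1) hodd (by omega) hdvd hx' he
  simpa using this

lemma dvd_sub_one_of_pow {ℓ α p n : ℕ} (hℓ : ℓ.Prime) (hp : p.Prime) (hℓp : ℓ ≠ p)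
    (hnp : ¬ p ∣ ℓ - 1) (hα : 1 ≤ α) (hn : 1 ≤ n) (h : ℓ ^ α ∣ n ^ p - 1) :
    ℓ ^ α ∣ n - 1 := by
  haveI : Fact ℓ.Prime := ⟨hℓ⟩
  haveI : NeZero (ℓ ^ α) := ⟨pow_ne_zero _ hℓ.pos.ne'⟩
  have hℓn : ¬ ℓ ∣ n := by
    intro hcon
    have h1 : ℓ ∣ n ^ p - 1 := (dvd_pow_self ℓ (by omega : α ≠ 0)).trans h
    have h2 : ℓ ∣ n ^ p := dvd_pow hcon hp.pos.ne'
    have h3 : ℓ ∣ 1 := by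
      have h4 : n ^ p - (n ^ p - 1) = 1 := by
        have : 1 ≤ n ^ p := Nat.one_le_pow _ _ (by omega)
        omega
      exact h4 ▸ Nat.dvd_sub h2 h1
    have := Nat.le_of_dvd one_pos h3; have := hℓ.one_lt; omega
  have hco : Nat.Coprime n (ℓ ^ α) :=
    Nat.Coprime.pow_right _ ((Nat.Prime.coprime_iff_not_dvd hℓ).mpr hℓn).symm
  set u := ZMod.unitOfCoprime n hco with hu
  have hnp1 : (n : ZMod (ℓ ^ α)) ^ p = 1 := by
    have h1 : (1 : ℕ) ≡ n ^ p [MOD ℓ ^ α] :=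
      (Nat.modEq_iff_dvd' (Nat.one_le_pow _ _ (by omega))).mpr h
    have h2 := (ZMod.natCast_eq_natCast_iff _ _ _).mpr h1.symm
    push_cast at h2; exact h2
  have hup : u ^ p = 1 := by
    ext
    push_cast [hu, ZMod.coe_unitOfCoprime]
    exact hnp1
  have hord : orderOf u ∣ p := orderOf_dvd_of_pow_eq_one hup
  have h1 : orderOf u = 1 := by
    rcases (Nat.dvd_prime hp).mp hord with h1 | h1
    · exact h1
    · exfalso
      have hcard : orderOf u ∣ Nat.totient (ℓ ^ α) := by
        rw [← ZMod.card_units_eq_totient]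
        exact orderOf_dvd_card
      rw [h1, Nat.totient_prime_pow hℓ hα] at hcard
      rcases (Nat.Prime.dvd_mul hp).mp hcard with h2 | h2
      · exact hℓp ((Nat.prime_dvd_prime_iff_eq hp hℓ).mp (hp.dvd_of_dvd_pow h2)).symm
      · exact hnp h2
  have h2 : u = 1 := orderOf_eq_one_iff.mp h1
  have h3 : (n : ZMod (ℓ ^ α)) = ((1 : ℕ) : ZMod (ℓ ^ α)) := by
    have h4 := congrArg (Units.val) h2
    rw [hu] at h4
    rw [ZMod.coe_unitOfCoprime] at h4
    simpa using h4
  exact (Nat.modEq_iff_dvd' hn).mp ((ZMod.natCast_eq_natCast_iff _ _ _).mp h3).symm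

lemma exists_order_p {ℓ α p : ℕ} (hℓ : ℓ.Prime) (hp : p.Prime) (hα : 1 ≤ α)
    (hd : p ∣ ℓ - 1) :
    ∃ x : ℕ, 1 ≤ x ∧ ℓ ^ α ∣ x ^ p - 1 ∧ ¬ ℓ ∣ x - 1 := by
  haveI : Fact ℓ.Prime := ⟨hℓ⟩
  haveI : Fact p.Prime := ⟨hp⟩
  haveI : NeZero (ℓ ^ α) := ⟨pow_ne_zero _ hℓ.pos.ne'⟩
  haveI : Fact (1 < ℓ ^ α) := ⟨Nat.one_lt_pow (by omega) hℓ.one_lt⟩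
  have hℓ2 : 2 ≤ ℓ := hℓ.two_le
  have hpℓ : p ≤ ℓ - 1 := Nat.le_of_dvd (by omega) hd
  have hp2 : 2 ≤ p := hp.two_le
  have hℓodd : Odd ℓ := hℓ.odd_of_ne_two (by omega)
  have hℓnep : ¬ ℓ ∣ p := Nat.not_dvd_of_pos_of_lt hp.pos (by omega)
  have hcard : p ∣ Fintype.card (ZMod (ℓ ^ α))ˣ := by
    rw [ZMod.card_units_eq_totient, Nat.totient_prime_pow hℓ hα]
    exact Dvd.dvd.mul_left hd _
  obtain ⟨u, hu⟩ := exists_prime_orderOf_dvd_card p hcard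
  refine ⟨(u : ZMod (ℓ ^ α)).val, ?_, ?_, ?_⟩
  · rcases Nat.eq_zero_or_pos (u : ZMod (ℓ ^ α)).val with h0 | h0
    · exfalso
      have : ((u : ZMod (ℓ ^ α))) = 0 := by
        rwa [ZMod.val_eq_zero] at h0
      exact u.ne_zero this
    · exact h0
  · have hup : u ^ p = 1 := by rw [← hu]; exact pow_orderOf_eq_one u
    have h1 : ((u : ZMod (ℓ ^ α)).val : ZMod (ℓ ^ α)) ^ p = 1 := by
      rw [ZMod.natCast_val, ZMod.cast_id]
      have := congrArg (Units.val) hup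
      push_cast at this
      exact this
    have h2 : ((u : ZMod (ℓ ^ α)).val ^ p : ℕ) = ((1 : ℕ) : ZMod (ℓ ^ α)) := by
      push_cast; exact h1
    have h3 : (1:ℕ) ≡ (u : ZMod (ℓ ^ α)).val ^ p [MOD ℓ ^ α] :=
      ((ZMod.natCast_eq_natCast_iff _ _ _).mp h2).symm
    exact (Nat.modEq_iff_dvd' (Nat.one_le_pow _ _ (by
      rcases Nat.eq_zero_or_pos (u : ZMod (ℓ ^ α)).val with h0 | h0
      · exfalso
        have : ((u : ZMod (ℓ ^ α))) = 0 := by rwa [ZMod.val_eq_zero] at h0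
        exact u.ne_zero this
      · exact h0))).mp h3
  · intro hcon
    set x := (u : ZMod (ℓ ^ α)).val with hxdef
    have hx1 : 1 ≤ x := by
      rcases Nat.eq_zero_or_pos x with h0 | h0
      · exfalso
        have : ((u : ZMod (ℓ ^ α))) = 0 := by rwa [ZMod.val_eq_zero] at h0
        exact u.ne_zero this
      · exact h0
    have hxne1 : x ≠ 1 := by
      intro h1
      have hux : ((x : ℕ) : ZMod (ℓ ^ α)) = (u : ZMod (ℓ ^ α)) := by
        rw [hxdef, ZMod.natCast_val, ZMod.cast_id]
      have h9 : u = 1 := Units.ext (by rw [← hux, h1]; push_cast; rfl)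
      rw [h9, orderOf_one] at hu
      omega
    have hx2 : 2 ≤ x := by omega
    have hup : u ^ p = 1 := by rw [← hu]; exact pow_orderOf_eq_one u
    have h1 : (x : ZMod (ℓ ^ α)) ^ p = 1 := by
      rw [hxdef, ZMod.natCast_val, ZMod.cast_id]
      have := congrArg (Units.val) hup
      push_cast at this
      exact this
    have h2 : ((x ^ p : ℕ) : ZMod (ℓ ^ α)) = ((1 : ℕ) : ZMod (ℓ ^ α)) := by
      push_cast; exact h1
    have h3 : ℓ ^ α ∣ x ^ p - 1 :=
      (Nat.modEq_iff_dvd' (Nat.one_le_pow _ _ (by omega))).mp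
        ((ZMod.natCast_eq_natCast_iff _ _ _).mp h2).symm
    have hxp0 : x ^ p - 1 ≠ 0 := by
      have : 2 ≤ x ^ p := le_trans hx2 (Nat.le_self_pow hp.pos.ne' x)
      omega
    have h4 : α ≤ padicValNat ℓ (x ^ p - 1) := (pow_dvd_iff_le_padic hℓ hxp0).mp h3
    rw [lte_odd hℓ hℓodd hx2 hcon hp.pos.ne', padicValNat.eq_zero_of_not_dvd hℓnep,
      add_zero] at h4
    have h5 : ℓ ^ α ∣ x - 1 := (pow_dvd_iff_le_padic hℓ (by omega)).mpr h4
    have hxlt : x < ℓ ^ α := ZMod.val_lt _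
    have := Nat.le_of_dvd (by omega) h5
    omega

lemma local_exists {ℓ p α β : ℕ} (hℓ : ℓ.Prime) (hp : p.Prime) (hpodd : Odd p) (hα : 1 ≤ α)
    (hcase : β = α ∨ (ℓ = p ∧ 2 ≤ α ∧ β = α - 1) ∨ (p ∣ ℓ - 1 ∧ β = 0)) :
    ∃ x : ℕ, 1 ≤ x ∧ ℓ ^ α ∣ x ^ p - 1 ∧ ℓ ^ β ∣ x - 1 ∧
      (β < α → ¬ ℓ ^ (β + 1) ∣ x - 1) := by
  rcases hcase with rfl | ⟨rfl, h2, rfl⟩ | ⟨hdvd, rfl⟩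
  · exact ⟨1, le_refl 1, by simp, by simp, by omega⟩
  · haveI : Fact ℓ.Prime := ⟨hℓ⟩
    refine ⟨1 + ℓ ^ (α - 1), by omega, ?_, ?_, ?_⟩
    · have hx1 : (1 + ℓ ^ (α - 1)) - 1 = ℓ ^ (α - 1) := by omega
      have hℓ1 : 1 ≤ ℓ ^ (α - 1) := Nat.one_le_pow _ _ hℓ.pos
      have h3 : padicValNat ℓ ((1 + ℓ ^ (α - 1)) ^ ℓ - 1) = (α - 1) + 1 := by
        rw [lte_odd hℓ hpodd (by omega) (by rw [hx1]; exact dvd_pow_self ℓ (by omega))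
          hℓ.pos.ne', hx1, padicValNat.prime_pow, padicValNat_self]
      have hne : (1 + ℓ ^ (α - 1)) ^ ℓ - 1 ≠ 0 := by
        have : 2 ≤ (1 + ℓ ^ (α - 1)) ^ ℓ :=
          le_trans (by omega) (Nat.le_self_pow hℓ.pos.ne' _)
        omega
      rw [pow_dvd_iff_le_padic hℓ hne, h3]
      omega
    · have hx1 : (1 + ℓ ^ (α - 1)) - 1 = ℓ ^ (α - 1) := by omega
      rw [hx1]
    · intro hlt
      have hx1 : (1 + ℓ ^ (α - 1)) - 1 = ℓ ^ (α - 1) := by omega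
      rw [hx1]
      intro hcon
      have := (Nat.pow_dvd_pow_iff_le_right hℓ.one_lt).mp hcon
      omega
  · obtain ⟨x, hx1, hx2, hx3⟩ := exists_order_p hℓ hp hα hdvd
    exact ⟨x, hx1, hx2, by simp, fun _ => by rwa [zero_add, pow_one]⟩

lemma min_padic_eq {ℓ α β N x : ℕ} (hℓ : ℓ.Prime) (hN : 2 ≤ N) (hx : 1 ≤ x) (hβα : β ≤ α)
    (hmod : N ≡ x [MOD ℓ ^ α]) (h3 : ℓ ^ β ∣ x - 1)
    (h4 : β < α → ¬ ℓ ^ (β + 1) ∣ x - 1) :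
    min (padicValNat ℓ (N - 1)) α = β := by
  have hmod' : N - 1 ≡ x - 1 [MOD ℓ ^ α] := by
    apply Nat.ModEq.add_right_cancel' 1
    have e1 : N - 1 + 1 = N := by omega
    have e2 : x - 1 + 1 = x := by omega
    rw [e1, e2]; exact hmod
  have hdvdβ : ℓ ^ β ∣ N - 1 := by
    have h5 : N - 1 ≡ x - 1 [MOD ℓ ^ β] := hmod'.of_dvd (pow_dvd_pow ℓ hβα)
    have h6 : x - 1 ≡ 0 [MOD ℓ ^ β] := Nat.modEq_zero_iff_dvd.mpr h3
    exact Nat.modEq_zero_iff_dvd.mp (h5.trans h6)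
  have hN1 : N - 1 ≠ 0 := by omega
  rcases eq_or_lt_of_le hβα with rfl | hlt
  · have := (pow_dvd_iff_le_padic hℓ hN1).mp hdvdβ
    omega
  · have hndvd : ¬ ℓ ^ (β + 1) ∣ N - 1 := by
      intro hcon
      apply h4 hlt
      have h5 : x - 1 ≡ N - 1 [MOD ℓ ^ (β + 1)] := (hmod'.of_dvd (pow_dvd_pow ℓ hlt)).symm
      have h6 : N - 1 ≡ 0 [MOD ℓ ^ (β + 1)] := Nat.modEq_zero_iff_dvd.mpr hcon
      exact Nat.modEq_zero_iff_dvd.mp (h5.trans h6)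
    have hb1 := (pow_dvd_iff_le_padic hℓ hN1).mp hdvdβ
    have hb2 : ¬ (β + 1 ≤ padicValNat ℓ (N - 1)) := fun h =>
      hndvd ((pow_dvd_iff_le_padic hℓ hN1).mpr h)
    omega

/-- Proposition 2.6: characterization of (q, χ, p)-admissible integers for
an odd prime p. -/
theorem stmt_3 (q : ℕ) (hq : ∃ p k : ℕ, p.Prime ∧ Odd p ∧ 0 < k ∧ q = p ^ k)
    (χ : ℤ) (hχ : χ = 1 ∨ χ = -1) (m : ℕ) (hm : (m : ℤ) = (q : ℤ) - χ)
    (p : ℕ) (hp : p.Prime) (hpodd : Odd p)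
    (d : ℕ) (hdm : d ∣ m) (hdne : d ≠ m) :
    (∃ n : ℕ, 0 < n ∧ m ∣ n ^ p - 1 ∧ Nat.gcd (n - 1) m = d) ↔
      (∀ ℓ : ℕ, ℓ.Prime → ℓ ∣ m →
        (ℓ = p → 2 ≤ padicValNat ℓ m →
          padicValNat ℓ d = padicValNat ℓ m - 1 ∨ padicValNat ℓ d = padicValNat ℓ m) ∧
        (ℓ % p = 1 → padicValNat ℓ d = 0 ∨ padicValNat ℓ d = padicValNat ℓ m) ∧
        (¬ (ℓ = p ∧ 2 ≤ padicValNat ℓ m) → ¬ (ℓ % p = 1) →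
          padicValNat ℓ d = padicValNat ℓ m)) := by
  have hm2 : 2 ≤ m := by
    obtain ⟨p', k, hp', hodd', hk, rfl⟩ := hq
    have h3 : 3 ≤ p' := by
      have := hp'.two_le
      rcases hodd' with ⟨t, ht⟩
      omega
    have hq3 : 3 ≤ p' ^ k := le_trans h3 (Nat.le_self_pow (by omega) _)
    have hq3' : (3 : ℤ) ≤ ((p' ^ k : ℕ) : ℤ) := by exact_mod_cast hq3
    rcases hχ with rfl | rfl <;> omega
  have hm0 : m ≠ 0 := by omega
  have hd0 : d ≠ 0 := by rintro rfl; rw [Nat.zero_dvd] at hdm; omega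
  have hp2 : 2 ≤ p := hp.two_le
  constructor
  · rintro ⟨n, hn0, hnm, hgcd⟩
    have hn2 : 2 ≤ n := by
      rcases n with _ | _ | n
      · omega
      · exfalso; apply hdne; rw [← hgcd]; simp
      · omega
    have hn1 : n - 1 ≠ 0 := by omega
    have hnp0 : n ^ p - 1 ≠ 0 := by
      have : 2 ≤ n ^ p := le_trans hn2 (Nat.le_self_pow hp.pos.ne' n)
      omega
    intro ℓ hℓ hℓm
    have hα1 : 1 ≤ padicValNat ℓ m := by
      rw [← pow_dvd_iff_le_padic hℓ hm0, pow_one]; exact hℓm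
    have hβ : padicValNat ℓ d = min (padicValNat ℓ (n - 1)) (padicValNat ℓ m) := by
      rw [← hgcd, padicValNat_gcd hℓ hn1 hm0]
    have hpow : ℓ ^ (padicValNat ℓ m) ∣ n ^ p - 1 :=
      dvd_trans ((pow_dvd_iff_le_padic hℓ hm0).mpr (le_refl _)) hnm
    have hαle : padicValNat ℓ m ≤ padicValNat ℓ (n ^ p - 1) :=
      (pow_dvd_iff_le_padic hℓ hnp0).mp hpow
    refine ⟨?_, ?_, ?_⟩
    · intro hℓp hα2
      subst hℓp
      haveI : Fact ℓ.Prime := ⟨hℓ⟩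
      have hFer : ℓ ∣ n - 1 := fermat_dvd hℓ (by omega) (hℓm.trans hnm)
      have hk1 : 1 ≤ padicValNat ℓ (n - 1) := by
        rw [← pow_dvd_iff_le_padic hℓ hn1, pow_one]; exact hFer
      rw [lte_odd hℓ hpodd hn2 hFer hℓ.pos.ne', padicValNat_self] at hαle
      rw [hβ]
      omega
    · intro hmod1
      have hd1 : p ∣ ℓ - 1 := by
        have := Nat.div_add_mod ℓ p
        exact ⟨ℓ / p, by omega⟩
      have hℓ2 : 2 ≤ ℓ := hℓ.two_le
      have hple : p ≤ ℓ - 1 := Nat.le_of_dvd (by omega) hd1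
      have hℓodd : Odd ℓ := hℓ.odd_of_ne_two (by omega)
      have hℓnep : ¬ ℓ ∣ p := Nat.not_dvd_of_pos_of_lt hp.pos (by omega)
      rw [hβ]
      by_cases hdvd1 : ℓ ∣ n - 1
      · right
        rw [lte_odd hℓ hℓodd hn2 hdvd1 hp.pos.ne',
          padicValNat.eq_zero_of_not_dvd hℓnep, add_zero] at hαle
        omega
      · left
        rw [padicValNat.eq_zero_of_not_dvd hdvd1]
        omega
    · intro hnot1 hnot2
      by_cases hℓp : ℓ = p
      · subst hℓp
        haveI : Fact ℓ.Prime := ⟨hℓ⟩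
        have hα1' : padicValNat ℓ m = 1 := by
          have : ¬ (2 ≤ padicValNat ℓ m) := fun h => hnot1 ⟨rfl, h⟩
          omega
        have hFer : ℓ ∣ n - 1 := fermat_dvd hℓ (by omega) (hℓm.trans hnm)
        have hk1 : 1 ≤ padicValNat ℓ (n - 1) := by
          rw [← pow_dvd_iff_le_padic hℓ hn1, pow_one]; exact hFer
        rw [hβ]
        omega
      · have hd1 : ¬ p ∣ ℓ - 1 := by
          intro hcon
          apply hnot2
          obtain ⟨t, ht⟩ := hcon
          have hℓ2 : 2 ≤ ℓ := hℓ.two_le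
          have hℓeq : ℓ = p * t + 1 := by omega
          rw [hℓeq, Nat.mul_add_mod, Nat.mod_eq_of_lt hp.one_lt]
        have hdvd := dvd_sub_one_of_pow hℓ hp hℓp hd1 hα1 (by omega) hpow
        have := (pow_dvd_iff_le_padic hℓ hn1).mp hdvd
        rw [hβ]
        omega
  · intro H
    classical
    have key : ∀ ℓ : ℕ, ∃ x : ℕ, ℓ ∈ m.primeFactors →
        1 ≤ x ∧ ℓ ^ (padicValNat ℓ m) ∣ x ^ p - 1 ∧ ℓ ^ (padicValNat ℓ d) ∣ x - 1 ∧
          (padicValNat ℓ d < padicValNat ℓ m → ¬ ℓ ^ (padicValNat ℓ d + 1) ∣ x - 1) := by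
      intro ℓ
      by_cases hmem : ℓ ∈ m.primeFactors
      · have hℓ : ℓ.Prime := Nat.prime_of_mem_primeFactors hmem
        have hℓm : ℓ ∣ m := Nat.dvd_of_mem_primeFactors hmem
        have hα1 : 1 ≤ padicValNat ℓ m := by
          rw [← pow_dvd_iff_le_padic hℓ hm0, pow_one]; exact hℓm
        obtain ⟨h1, h2, h3⟩ := H ℓ hℓ hℓm
        have hcase : padicValNat ℓ d = padicValNat ℓ m ∨
            (ℓ = p ∧ 2 ≤ padicValNat ℓ m ∧ padicValNat ℓ d = padicValNat ℓ m - 1) ∨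
            (p ∣ ℓ - 1 ∧ padicValNat ℓ d = 0) := by
          by_cases hc1 : ℓ = p ∧ 2 ≤ padicValNat ℓ m
          · rcases h1 hc1.1 hc1.2 with h | h
            · right; left; exact ⟨hc1.1, hc1.2, h⟩
            · left; exact h
          · by_cases hc2 : ℓ % p = 1
            · rcases h2 hc2 with h | h
              · right; right
                refine ⟨⟨ℓ / p, ?_⟩, h⟩
                have := Nat.div_add_mod ℓ p
                omega
              · left; exact h
            · left; exact h3 hc1 hc2
        obtain ⟨x, hx⟩ := local_exists hℓ hp hpodd hα1 hcase
        exact ⟨x, fun _ => hx⟩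
      · exact ⟨1, fun h => absurd h hmem⟩
    choose a ha using key
    have hs0 : ∀ ℓ ∈ m.primeFactors, ℓ ^ (padicValNat ℓ m) ≠ 0 := fun ℓ hℓ =>
      pow_ne_zero _ (Nat.prime_of_mem_primeFactors hℓ).pos.ne'
    have hpp : Set.Pairwise (m.primeFactors : Set ℕ)
        (Function.onFun Nat.Coprime fun ℓ => ℓ ^ (padicValNat ℓ m)) := by
      intro ℓ1 h1 ℓ2 h2 hne
      exact Nat.Coprime.pow _ _
        ((Nat.coprime_primes (Nat.prime_of_mem_primeFactors h1)
          (Nat.prime_of_mem_primeFactors h2)).mpr hne)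
    obtain ⟨K, hK⟩ := Nat.chineseRemainderOfFinset a (fun ℓ => ℓ ^ (padicValNat ℓ m))
      m.primeFactors hs0 hpp
    set N := K + 2 * m with hNdef
    have hN2 : 2 ≤ N := by omega
    have hNmod : ∀ ℓ ∈ m.primeFactors, N ≡ a ℓ [MOD ℓ ^ (padicValNat ℓ m)] := by
      intro ℓ hmem
      have hℓ : ℓ.Prime := Nat.prime_of_mem_primeFactors hmem
      have hdm' : ℓ ^ (padicValNat ℓ m) ∣ m := (pow_dvd_iff_le_padic hℓ hm0).mpr le_rfl
      have h5 : K ≡ N [MOD ℓ ^ (padicValNat ℓ m)] :=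
        (Nat.modEq_iff_dvd' (by omega)).mpr (by
          have : N - K = 2 * m := by omega
          rw [this]
          exact hdm'.mul_left 2)
      exact h5.symm.trans (hK ℓ hmem)
    have hNp0 : N ^ p - 1 ≠ 0 := by
      have : 2 ≤ N ^ p := le_trans hN2 (Nat.le_self_pow hp.pos.ne' N)
      omega
    have hdvd : m ∣ N ^ p - 1 := by
      rw [← Nat.factorization_le_iff_dvd hm0 hNp0, Finsupp.le_iff]
      intro ℓ hsupp
      rw [Nat.support_factorization] at hsupp
      have hℓ := Nat.prime_of_mem_primeFactors hsupp
      rw [Nat.factorization_def _ hℓ, Nat.factorization_def _ hℓ,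
        ← pow_dvd_iff_le_padic hℓ hNp0]
      obtain ⟨hx1, hx2, hx3, hx4⟩ := ha ℓ hsupp
      have h5 : N ^ p ≡ (a ℓ) ^ p [MOD ℓ ^ (padicValNat ℓ m)] := (hNmod ℓ hsupp).pow p
      have h6 : (a ℓ) ^ p ≡ 1 [MOD ℓ ^ (padicValNat ℓ m)] :=
        ((Nat.modEq_iff_dvd' (Nat.one_le_pow _ _ (by omega))).mpr hx2).symm
      have h7 : (1 : ℕ) ≡ N ^ p [MOD ℓ ^ (padicValNat ℓ m)] := (h5.trans h6).symm
      exact (Nat.modEq_iff_dvd' (Nat.one_le_pow _ _ (by omega))).mp h7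
    have hgcdne : Nat.gcd (N - 1) m ≠ 0 := fun h =>
      hm0 (Nat.eq_zero_of_gcd_eq_zero_right h)
    have hN1 : N - 1 ≠ 0 := by omega
    have hgcd : Nat.gcd (N - 1) m = d := by
      rw [Nat.eq_iff_prime_padicValNat_eq _ _ hgcdne hd0]
      intro ℓ hℓ
      rw [padicValNat_gcd hℓ hN1 hm0]
      by_cases hmem : ℓ ∈ m.primeFactors
      · obtain ⟨hx1, hx2, hx3, hx4⟩ := ha ℓ hmem
        have hβα : padicValNat ℓ d ≤ padicValNat ℓ m := by
          rw [← pow_dvd_iff_le_padic hℓ hm0]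
          exact dvd_trans ((pow_dvd_iff_le_padic hℓ hd0).mpr le_rfl) hdm
        exact min_padic_eq hℓ hN2 hx1 hβα (hNmod ℓ hmem) hx3 hx4
      · have h1 : ¬ ℓ ∣ m := fun h => hmem (Nat.mem_primeFactors.mpr ⟨hℓ, h, hm0⟩)
        have h2 : ¬ ℓ ∣ d := fun h => h1 (h.trans hdm)
        rw [padicValNat.eq_zero_of_not_dvd h1, padicValNat.eq_zero_of_not_dvd h2]
        omega
    exact ⟨N, by omega, hdvd, hgcd⟩
end

section
/- Let p be an odd prime and let q be a power of an odd prime. There exist χ ∈ {−1, 1} and a positive integer n such that (q − χ) divides n^p − 1 and (q − χ) does not divide n − 1, if and only if at least one of the following holds: some prime ℓ with ℓ ≡ 1 (mod p) divides q − 1 or q + 1; p² divides q − 1; or p² divides q + 1. -/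
/-- Existence of an element of multiplicative order exactly `p` mod `m`,
expressed via integer divisibility, is equivalent to `p ∣ φ(m)`. -/
lemma lemA (m p : ℕ) (hm : 2 ≤ m) (hp : p.Prime) :
    (∃ n : ℕ, 0 < n ∧ (m : ℤ) ∣ (n : ℤ) ^ p - 1 ∧ ¬ (m : ℤ) ∣ (n : ℤ) - 1) ↔
      p ∣ m.totient := by
  haveI : NeZero m := ⟨by omega⟩
  haveI : Fact (1 < m) := ⟨by omega⟩
  haveI := Fact.mk hp
  have key1 : ∀ n : ℕ, (m : ℤ) ∣ (n : ℤ) ^ p - 1 ↔ ((n : ZMod m)) ^ p = 1 := by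
    intro n
    rw [← sub_eq_zero (a := ((n : ZMod m)) ^ p),
      show ((n : ZMod m) ^ p - 1) = (((n : ℤ) ^ p - 1 : ℤ) : ZMod m) by push_cast; ring]
    exact (ZMod.intCast_zmod_eq_zero_iff_dvd _ _).symm
  have key2 : ∀ n : ℕ, (m : ℤ) ∣ (n : ℤ) - 1 ↔ ((n : ZMod m)) = 1 := by
    intro n
    rw [← sub_eq_zero (a := ((n : ZMod m))),
      show ((n : ZMod m) - 1) = (((n : ℤ) - 1 : ℤ) : ZMod m) by push_cast; ring]
    exact (ZMod.intCast_zmod_eq_zero_iff_dvd _ _).symm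
  constructor
  · rintro ⟨n, -, h1, h2⟩
    rw [key1] at h1
    rw [key2] at h2
    set x : ZMod m := (n : ZMod m) with hx
    have hux : IsUnit x := IsUnit.of_pow_eq_one h1 hp.ne_zero
    have hord : orderOf x = p := by
      rcases (Nat.dvd_prime hp).mp (orderOf_dvd_of_pow_eq_one h1) with h | h
      · exact absurd (orderOf_eq_one_iff.mp h) h2
      · exact h
    have : orderOf hux.unit = p := by rw [← orderOf_units, hux.unit_spec, hord]
    rw [← ZMod.card_units_eq_totient, ← this]
    exact orderOf_dvd_card
  · intro hdvd
    obtain ⟨u, hu⟩ := exists_prime_orderOf_dvd_card (G := (ZMod m)ˣ) p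
      (by rwa [ZMod.card_units_eq_totient])
    set x : ZMod m := (u : ZMod m) with hx
    have hordx : orderOf x = p := by rw [hx, orderOf_units, hu]
    have hxp : x ^ p = 1 := by rw [← hordx]; exact pow_orderOf_eq_one x
    have hx1 : x ≠ 1 := by
      intro h
      rw [h, orderOf_one] at hordx
      exact hp.one_lt.ne hordx
    refine ⟨x.val, ?_, ?_, ?_⟩
    · rcases Nat.eq_zero_or_pos x.val with h | h
      swap
      · exact h
      · exfalso
        have : x = 0 := (ZMod.val_eq_zero x).mp h
        rw [this, zero_pow hp.ne_zero] at hxp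
        exact zero_ne_one hxp
    · rw [key1]
      rwa [show ((x.val : ℕ) : ZMod m) = x by rw [ZMod.natCast_val, ZMod.cast_id]]
    · rw [key2]
      rwa [show ((x.val : ℕ) : ZMod m) = x by rw [ZMod.natCast_val, ZMod.cast_id]]

/-- `p ∣ φ(m)` iff `m` has a prime factor `≡ 1 (mod p)` or `p² ∣ m`. -/
lemma lemB (m p : ℕ) (hm : 1 ≤ m) (hp : p.Prime) :
    p ∣ m.totient ↔ (∃ ℓ : ℕ, ℓ.Prime ∧ ℓ % p = 1 ∧ ℓ ∣ m) ∨ p ^ 2 ∣ m := by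
  constructor
  · intro h
    rw [Nat.totient_eq_prod_factorization (by omega), Finsupp.prod] at h
    obtain ⟨ℓ, hℓmem, hℓdvd⟩ := (hp.prime.dvd_finset_prod_iff _).mp h
    have hℓp : ℓ.Prime := Nat.prime_of_mem_primeFactors (by
      rwa [Nat.support_factorization] at hℓmem)
    have hℓm : ℓ ∣ m := Nat.dvd_of_mem_primeFactors (by
      rwa [Nat.support_factorization] at hℓmem)
    rcases (Nat.Prime.dvd_mul hp).mp hℓdvd with h1 | h2
    · right
      have hpl : p = ℓ := (Nat.prime_dvd_prime_iff_eq hp hℓp).mp (hp.dvd_of_dvd_pow h1)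
      have he : 2 ≤ m.factorization ℓ := by
        have hpos : 0 < m.factorization ℓ := hℓp.factorization_pos_of_dvd (by omega) hℓm
        by_contra hc
        have h01 : m.factorization ℓ = 1 := by omega
        rw [h01] at h1
        simp only [Nat.sub_self, pow_zero, Nat.dvd_one] at h1
        exact hp.one_lt.ne' h1
      calc p ^ 2 ∣ ℓ ^ m.factorization ℓ := by
            rw [hpl]; exact pow_dvd_pow _ he
        _ ∣ m := Nat.ordProj_dvd m ℓ
    · left
      refine ⟨ℓ, hℓp, ?_, hℓm⟩
      obtain ⟨t, ht⟩ := h2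
      have hℓ2 : 2 ≤ ℓ := hℓp.two_le
      have : ℓ = p * t + 1 := by omega
      rw [this, Nat.mul_add_mod, Nat.mod_eq_of_lt hp.one_lt]
  · rintro (⟨ℓ, hℓp, hmod, hdvd⟩ | hdvd)
    · have h1 : p ∣ ℓ.totient := by
        rw [Nat.totient_prime hℓp]
        have hℓ2 : 2 ≤ ℓ := hℓp.two_le
        have := Nat.div_add_mod ℓ p
        exact ⟨ℓ / p, by omega⟩
      exact h1.trans (Nat.totient_dvd_of_dvd hdvd)
    · have h1 : p ∣ (p ^ 2).totient := by
        rw [Nat.totient_prime_pow hp (by norm_num)]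
        exact ⟨p - 1, by norm_num⟩
      exact h1.trans (Nat.totient_dvd_of_dvd hdvd)

/-- Theorem 2.7: existence of a Rédei permutation over P¹(F_q) with 1- and
p-cycles, for an odd prime p. -/
theorem stmt_4 (q : ℕ) (hq : ∃ p' k : ℕ, p'.Prime ∧ Odd p' ∧ 0 < k ∧ q = p' ^ k)
    (p : ℕ) (hp : p.Prime) (hpodd : Odd p) :
    (∃ χ : ℤ, (χ = 1 ∨ χ = -1) ∧ ∃ n : ℕ, 0 < n ∧
        ((q : ℤ) - χ) ∣ (n : ℤ) ^ p - 1 ∧ ¬ ((q : ℤ) - χ) ∣ (n : ℤ) - 1) ↔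
      ((∃ ℓ : ℕ, ℓ.Prime ∧ ℓ % p = 1 ∧ (ℓ ∣ q - 1 ∨ ℓ ∣ q + 1)) ∨
        p ^ 2 ∣ q - 1 ∨ p ^ 2 ∣ q + 1) := by
  have hq3 : 3 ≤ q := by
    obtain ⟨p', k, hp', hodd, hk, rfl⟩ := hq
    have h2 : 2 ≤ p' := hp'.two_le
    have h3 : 3 ≤ p' := by
      rcases Nat.lt_or_ge p' 3 with h | h
      · interval_cases p' <;> simp_all [Nat.odd_iff]
      · exact h
    calc 3 ≤ p' ^ 1 := by simpa
      _ ≤ p' ^ k := Nat.pow_le_pow_right (by omega) hk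
  have hc1 : ((q : ℤ) - 1) = ((q - 1 : ℕ) : ℤ) := by
    push_cast [Nat.cast_sub (by omega : 1 ≤ q)]; ring
  have hc2 : ((q : ℤ) - (-1)) = ((q + 1 : ℕ) : ℤ) := by push_cast; ring
  have hA1 := lemA (q - 1) p (by omega) hp
  have hA2 := lemA (q + 1) p (by omega) hp
  have hB1 := lemB (q - 1) p (by omega) hp
  have hB2 := lemB (q + 1) p (by omega) hp
  constructor
  · rintro ⟨χ, hχ, n, hn, h1, h2⟩
    rcases hχ with rfl | rfl
    · rw [hc1] at h1 h2
      rcases hB1.mp (hA1.mp ⟨n, hn, h1, h2⟩) with ⟨ℓ, hℓ1, hℓ2, hℓ3⟩ | h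
      · exact Or.inl ⟨ℓ, hℓ1, hℓ2, Or.inl hℓ3⟩
      · exact Or.inr (Or.inl h)
    · rw [hc2] at h1 h2
      rcases hB2.mp (hA2.mp ⟨n, hn, h1, h2⟩) with ⟨ℓ, hℓ1, hℓ2, hℓ3⟩ | h
      · exact Or.inl ⟨ℓ, hℓ1, hℓ2, Or.inr hℓ3⟩
      · exact Or.inr (Or.inr h)
  · rintro (⟨ℓ, hℓ1, hℓ2, hℓ3 | hℓ3⟩ | h | h)
    · obtain ⟨n, hn, h1, h2⟩ := hA1.mpr (hB1.mpr (Or.inl ⟨ℓ, hℓ1, hℓ2, hℓ3⟩))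
      exact ⟨1, Or.inl rfl, n, hn, by rwa [hc1], by rwa [hc1]⟩
    · obtain ⟨n, hn, h1, h2⟩ := hA2.mpr (hB2.mpr (Or.inl ⟨ℓ, hℓ1, hℓ2, hℓ3⟩))
      exact ⟨-1, Or.inr rfl, n, hn, by rwa [hc2], by rwa [hc2]⟩
    · obtain ⟨n, hn, h1, h2⟩ := hA1.mpr (hB1.mpr (Or.inr h))
      exact ⟨1, Or.inl rfl, n, hn, by rwa [hc1], by rwa [hc1]⟩
    · obtain ⟨n, hn, h1, h2⟩ := hA2.mpr (hB2.mpr (Or.inr h))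
      exact ⟨-1, Or.inr rfl, n, hn, by rwa [hc2], by rwa [hc2]⟩
end

section
/- Let p be an odd prime and let d be a proper divisor of m such that for every prime ℓ dividing m, writing α = ν_ℓ(m) and β = ν_ℓ(d): β ∈ {α−1, α} if ℓ = p and α ≥ 2; β ∈ {0, α} if ℓ ≡ 1 (mod p); and β = α in all other cases. Let u be the number of primes ℓ such that ℓ ≡ 1 (mod p), ℓ divides m, and ℓ does not divide d. Then the number of integers n with 1 ≤ n ≤ m such that m divides n^p − 1 and gcd(n−1, m) = d equals (p−1)^u if ν_p(d) = ν_p(m), and equals (p−1)^(u+1) if ν_p(m) = ν_p(d) + 1. -/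
open Finset

namespace Stmt5Aux

/-- The basic count: number of `t < M` with `M ∣ (t+1)^p - 1` and `gcd t M = D`. -/
def cnt (p M D : ℕ) : ℕ :=
  ((Finset.range M).filter (fun t => M ∣ (t + 1) ^ p - 1 ∧ Nat.gcd t M = D)).card

lemma dvd_iff_modEq {p M t : ℕ} : M ∣ (t + 1) ^ p - 1 ↔ (t + 1) ^ p ≡ 1 [MOD M] := by
  have h1 : 1 ≤ (t + 1) ^ p := Nat.one_le_pow _ _ (Nat.succ_pos t)
  rw [Nat.ModEq.comm, Nat.modEq_iff_dvd' h1]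

lemma cnt_self {p M : ℕ} (hM : 0 < M) : cnt p M M = 1 := by
  unfold cnt
  convert_to ({0} : Finset ℕ).card = 1
  · congr 1
    ext t
    simp only [mem_filter, mem_range, mem_singleton]
    constructor
    · rintro ⟨ht, _, hg⟩
      have hMt : M ∣ t := hg ▸ Nat.gcd_dvd_left t M
      rcases Nat.eq_zero_or_pos t with h | h
      · exact h
      · exact absurd (Nat.le_of_dvd h hMt) (by omega)
    · rintro rfl
      exact ⟨hM, by simp, Nat.gcd_zero_left M⟩
  · simp

lemma gcd_mul_of_coprime {M1 M2 : ℕ} (h : Nat.Coprime M1 M2) (t : ℕ) :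
    Nat.gcd t (M1 * M2) = Nat.gcd t M1 * Nat.gcd t M2 := by
  apply Nat.dvd_antisymm
  · have h1 : Nat.gcd t (M1 * M2) ∣
        Nat.gcd (Nat.gcd t (M1 * M2)) M1 * Nat.gcd (Nat.gcd t (M1 * M2)) M2 :=
      Nat.dvd_gcd_mul_gcd_iff_dvd_mul.mpr (Nat.gcd_dvd_right _ _)
    refine h1.trans (Nat.mul_dvd_mul ?_ ?_) <;>
      exact Nat.dvd_gcd ((Nat.gcd_dvd_left _ _).trans (Nat.gcd_dvd_left _ _))
        (Nat.gcd_dvd_right _ _)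
  · have hco : Nat.Coprime (Nat.gcd t M1) (Nat.gcd t M2) :=
      Nat.Coprime.coprime_dvd_right (Nat.gcd_dvd_right t M2)
        (Nat.Coprime.coprime_dvd_left (Nat.gcd_dvd_right t M1) h)
    exact Nat.dvd_gcd
      (hco.mul_dvd_of_dvd_of_dvd (Nat.gcd_dvd_left _ _) (Nat.gcd_dvd_left _ _))
      (Nat.mul_dvd_mul (Nat.gcd_dvd_right _ _) (Nat.gcd_dvd_right _ _))

lemma gcd_mod_left (t M : ℕ) : Nat.gcd (t % M) M = Nat.gcd t M := by
  rw [Nat.gcd_comm t M, Nat.gcd_rec M t]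

lemma gcd_of_gcd_eq {t M1 M2 D : ℕ} (h : Nat.gcd t (M1 * M2) = D) :
    Nat.gcd t M1 = Nat.gcd D M1 := by
  subst h
  rw [Nat.gcd_assoc, Nat.gcd_eq_right (dvd_mul_right M1 M2)]

lemma modEq_pow_one {p N a b : ℕ} (h : a ≡ b [MOD N]) :
    ((a + 1) ^ p ≡ 1 [MOD N] ↔ (b + 1) ^ p ≡ 1 [MOD N]) := by
  constructor <;> intro hx
  · exact (((h.symm.add_right 1).pow p)).trans hx
  · exact (((h.add_right 1).pow p)).trans hx

lemma cnt_mul {p M1 M2 D : ℕ} (h1 : 0 < M1) (h2 : 0 < M2) (hco : Nat.Coprime M1 M2)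
    (hD : D ∣ M1 * M2) :
    cnt p (M1 * M2) D = cnt p M1 (Nat.gcd D M1) * cnt p M2 (Nat.gcd D M2) := by
  classical
  unfold cnt
  rw [← Finset.card_product]
  refine Finset.card_bij' (fun t _ => (t % M1, t % M2))
    (fun ab _ => (Nat.chineseRemainder hco ab.1 ab.2 : ℕ)) ?_ ?_ ?_ ?_
  · intro t ht
    simp only [mem_filter, mem_range] at ht
    obtain ⟨htlt, hdvd, hg⟩ := ht
    simp only [mem_product, mem_filter, mem_range]
    have hd1 : (t + 1) ^ p ≡ 1 [MOD M1] :=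
      (dvd_iff_modEq.mp hdvd).of_mul_right M2
    have hd2 : (t + 1) ^ p ≡ 1 [MOD M2] :=
      (dvd_iff_modEq.mp hdvd).of_mul_left M1
    refine ⟨⟨Nat.mod_lt _ h1, ?_, ?_⟩, Nat.mod_lt _ h2, ?_, ?_⟩
    · exact dvd_iff_modEq.mpr ((modEq_pow_one (Nat.mod_modEq t M1)).mpr hd1)
    · rw [gcd_mod_left]; exact gcd_of_gcd_eq hg
    · exact dvd_iff_modEq.mpr ((modEq_pow_one (Nat.mod_modEq t M2)).mpr hd2)
    · rw [gcd_mod_left]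
      rw [mul_comm] at hg
      exact gcd_of_gcd_eq hg
  · rintro ⟨a, b⟩ hab
    simp only [mem_product, mem_filter, mem_range] at hab
    obtain ⟨⟨halt, hadvd, hag⟩, hblt, hbdvd, hbg⟩ := hab
    set c := (Nat.chineseRemainder hco a b : ℕ) with hc
    obtain ⟨hca, hcb⟩ := (Nat.chineseRemainder hco a b).prop
    simp only [mem_filter, mem_range]
    refine ⟨Nat.chineseRemainder_lt_mul hco a b h1.ne' h2.ne', ?_, ?_⟩
    · refine dvd_iff_modEq.mpr ?_
      refine (Nat.modEq_and_modEq_iff_modEq_mul hco).mp ⟨?_, ?_⟩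
      · exact (modEq_pow_one hca).mpr (dvd_iff_modEq.mp hadvd)
      · exact (modEq_pow_one hcb).mpr (dvd_iff_modEq.mp hbdvd)
    · rw [gcd_mul_of_coprime hco]
      have e1 : Nat.gcd c M1 = Nat.gcd a M1 := by
        rw [← gcd_mod_left c M1, hca, Nat.mod_eq_of_lt halt]
      have e2 : Nat.gcd c M2 = Nat.gcd b M2 := by
        rw [← gcd_mod_left c M2, hcb, Nat.mod_eq_of_lt hblt]
      rw [e1, e2, hag, hbg, ← gcd_mul_of_coprime hco D, Nat.gcd_eq_left hD]
  · intro t ht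
    simp only [mem_filter, mem_range] at ht
    obtain ⟨hca, hcb⟩ := (Nat.chineseRemainder hco (t % M1) (t % M2)).prop
    refine Nat.ModEq.eq_of_lt_of_lt ?_
      (Nat.chineseRemainder_lt_mul hco _ _ h1.ne' h2.ne') ht.1
    refine (Nat.modEq_and_modEq_iff_modEq_mul hco).mp ⟨?_, ?_⟩
    · exact hca.trans (Nat.mod_modEq t M1)
    · exact hcb.trans (Nat.mod_modEq t M2)
  · rintro ⟨a, b⟩ hab
    simp only [mem_product, mem_filter, mem_range] at hab
    obtain ⟨hca, hcb⟩ := (Nat.chineseRemainder hco a b).prop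
    have e1 : (Nat.chineseRemainder hco a b : ℕ) % M1 = a := by
      rw [hca, Nat.mod_eq_of_lt hab.1.1]
    have e2 : (Nat.chineseRemainder hco a b : ℕ) % M2 = b := by
      rw [hcb, Nat.mod_eq_of_lt hab.2.1]
    simp [e1, e2]

lemma one_add_sq_zero_pow {R : Type*} [CommRing R] {c : R} (hc : c ^ 2 = 0) (n : ℕ) :
    (1 + c) ^ n = 1 + (n : R) * c := by
  induction n with
  | zero => simp
  | succ n ih =>
    have key : (1 + (n : R) * c) * (1 + c) = 1 + ((n : R) + 1) * c + (n : R) * c ^ 2 := by ring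
    rw [pow_succ, ih, key, hc, mul_zero, add_zero]
    push_cast
    ring

/-- case ℓ = p, β = α - 1 -/
lemma cnt_p_pow {p α : ℕ} (hp : p.Prime) (hα : 2 ≤ α) :
    cnt p (p ^ α) (p ^ (α - 1)) = p - 1 := by
  classical
  have hp1 : 1 < p := hp.one_lt
  have hpow : 0 < p ^ (α - 1) := pow_pos hp.pos _
  have hsucc : p ^ (α - 1) * p = p ^ α := by
    rw [← pow_succ]
    congr 1
    omega
  have hdvd : ∀ k, k < p → p ^ α ∣ (k * p ^ (α - 1) + 1) ^ p - 1 := by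
    intro k hk
    rw [dvd_iff_modEq]
    have : (((k * p ^ (α - 1) + 1) ^ p : ℕ) : ZMod (p ^ α)) = ((1 : ℕ) : ZMod (p ^ α)) := by
      push_cast
      set c : ZMod (p ^ α) := (k : ZMod (p ^ α)) * (p : ZMod (p ^ α)) ^ (α - 1) with hcdef
      have hc2 : c ^ 2 = 0 := by
        have h0 : (((p ^ ((α - 1) * 2) : ℕ)) : ZMod (p ^ α)) = 0 :=
          (ZMod.natCast_eq_zero_iff _ _).mpr (pow_dvd_pow p (by omega))
        push_cast at h0
        rw [pow_mul] at h0
        calc c ^ 2 = (k : ZMod (p ^ α)) ^ 2 * ((p : ZMod (p ^ α)) ^ (α - 1)) ^ 2 := by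
              rw [hcdef]; ring
        _ = 0 := by rw [h0, mul_zero]
      have hpc : (p : ZMod (p ^ α)) * c = 0 := by
        have h0 : (((p ^ α : ℕ)) : ZMod (p ^ α)) = 0 := ZMod.natCast_self _
        push_cast at h0
        calc (p : ZMod (p ^ α)) * c
            = (k : ZMod (p ^ α)) * ((p : ZMod (p ^ α)) ^ (α - 1) * p) := by rw [hcdef]; ring
        _ = (k : ZMod (p ^ α)) * (p : ZMod (p ^ α)) ^ α := by
              congr 1
              rw [← pow_succ]
              congr 1
              omega
        _ = 0 := by rw [h0, mul_zero]
      calc ((k : ZMod (p ^ α)) * (p : ZMod (p ^ α)) ^ (α - 1) + 1) ^ p = (1 + c) ^ p := by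
            rw [hcdef]; ring
      _ = 1 + (p : ZMod (p ^ α)) * c := one_add_sq_zero_pow hc2 p
      _ = 1 := by rw [hpc, add_zero]
    exact (ZMod.natCast_eq_natCast_iff _ _ _).mp this
  have hset : ((range (p ^ α)).filter
        (fun t => p ^ α ∣ (t + 1) ^ p - 1 ∧ Nat.gcd t (p ^ α) = p ^ (α - 1)))
      = (Finset.Icc 1 (p - 1)).image (fun k => k * p ^ (α - 1)) := by
    ext t
    simp only [mem_filter, mem_range, mem_image, Finset.mem_Icc]
    constructor
    · rintro ⟨hlt, _, hg⟩
      have hdvd' : p ^ (α - 1) ∣ t := hg ▸ Nat.gcd_dvd_left t (p ^ α)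
      obtain ⟨k, rfl⟩ : ∃ k, t = k * p ^ (α - 1) :=
        ⟨t / p ^ (α - 1), (Nat.div_mul_cancel hdvd').symm⟩
      have hklt : k < p := by
        by_contra hge
        push_neg at hge
        have h1 : p * p ^ (α - 1) ≤ k * p ^ (α - 1) := Nat.mul_le_mul_right _ hge
        rw [mul_comm p, hsucc] at h1
        omega
      refine ⟨k, ⟨?_, by omega⟩, rfl⟩
      rcases Nat.eq_zero_or_pos k with rfl | h
      · exfalso
        rw [zero_mul, Nat.gcd_zero_left] at hg
        have : α = α - 1 := Nat.pow_right_injective hp.two_le hg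
        omega
      · omega
    · rintro ⟨k, ⟨hk1, hk2⟩, rfl⟩
      have hklt : k < p := by omega
      refine ⟨?_, hdvd k hklt, ?_⟩
      · calc k * p ^ (α - 1) < p * p ^ (α - 1) :=
              (Nat.mul_lt_mul_right hpow).mpr hklt
        _ = p ^ α := by rw [mul_comm]; exact hsucc
      · have hco : Nat.gcd k p = 1 := Nat.coprime_comm.mp ((hp.coprime_iff_not_dvd).mpr (by
          intro hdvd2
          have := Nat.le_of_dvd (by omega) hdvd2
          omega))
        rw [← hsucc, mul_comm (p ^ (α - 1)) p, Nat.gcd_mul_right, hco, one_mul]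
  unfold cnt
  rw [hset, Finset.card_image_of_injective _ (mul_left_injective₀ hpow.ne'), Nat.card_Icc]
  omega

lemma pv_mul {ℓ a b : ℕ} (hℓ : ℓ.Prime) (ha : a ≠ 0) (hb : b ≠ 0) :
    padicValNat ℓ (a * b) = padicValNat ℓ a + padicValNat ℓ b := by
  haveI : Fact ℓ.Prime := ⟨hℓ⟩
  exact padicValNat.mul ha hb

lemma pv_prime_pow {ℓ : ℕ} (hℓ : ℓ.Prime) (n : ℕ) : padicValNat ℓ (ℓ ^ n) = n := by
  haveI : Fact ℓ.Prime := ⟨hℓ⟩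
  exact padicValNat.prime_pow n

lemma pv_gcd {ℓ a b : ℕ} (hℓ : ℓ.Prime) (ha : a ≠ 0) (hb : b ≠ 0) :
    padicValNat ℓ (Nat.gcd a b) = min (padicValNat ℓ a) (padicValNat ℓ b) := by
  rw [← Nat.factorization_def _ hℓ, ← Nat.factorization_def _ hℓ, ← Nat.factorization_def _ hℓ,
    Nat.factorization_gcd ha hb]
  rfl

lemma pv_le_of_dvd {ℓ a b : ℕ} (hℓ : ℓ.Prime) (hb : b ≠ 0) (h : a ∣ b) :
    padicValNat ℓ a ≤ padicValNat ℓ b := by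
  have ha : a ≠ 0 := by rintro rfl; exact hb (Nat.eq_zero_of_zero_dvd h)
  rw [← Nat.factorization_def _ hℓ, ← Nat.factorization_def _ hℓ]
  exact (Nat.factorization_le_iff_dvd ha hb).mpr h ℓ

lemma pv_pow_dvd_iff {ℓ k n : ℕ} (hℓ : ℓ.Prime) (hn : n ≠ 0) :
    ℓ ^ k ∣ n ↔ k ≤ padicValNat ℓ n := by
  rw [← Nat.factorization_def _ hℓ]
  exact hℓ.pow_dvd_iff_le_factorization hn

/-- case ℓ ≡ 1 mod p, β = 0 -/
lemma cnt_cong_one {p ℓ α : ℕ} (hp : p.Prime) (hpodd : Odd p) (hℓ : ℓ.Prime)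
    (hmod : ℓ % p = 1) (hα : 0 < α) :
    cnt p (ℓ ^ α) 1 = p - 1 := by
  classical
  haveI : Fact ℓ.Prime := ⟨hℓ⟩
  haveI : Fact p.Prime := ⟨hp⟩
  have hM0 : 0 < ℓ ^ α := pow_pos hℓ.pos α
  haveI : NeZero (ℓ ^ α) := ⟨hM0.ne'⟩
  have hpℓ : p < ℓ := by
    rcases lt_trichotomy ℓ p with h | rfl | h
    · rw [Nat.mod_eq_of_lt h] at hmod; exact absurd hmod.le (by have := hℓ.one_lt; omega)
    · rw [Nat.mod_self] at hmod; omega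
    · exact h
  have hℓnotp : ¬ ℓ ∣ p := fun h => by have := Nat.le_of_dvd hp.pos h; omega
  have hpdvd : p ∣ ℓ - 1 := ⟨ℓ / p, by have := Nat.div_add_mod ℓ p; omega⟩
  have hℓodd : Odd ℓ := hℓ.odd_of_ne_two (by have h3 := hpodd; have := hp.two_le; omega)
  have hℓdvdM : ℓ ∣ ℓ ^ α := dvd_pow_self ℓ hα.ne'
  -- no root is divisible by ℓ
  haveI : Nontrivial (ZMod (ℓ ^ α)) :=
    ZMod.nontrivial_iff.mpr (by have := Nat.one_lt_pow hα.ne' hℓ.one_lt; omega)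
  have hnd : ∀ t : ℕ, ℓ ^ α ∣ (t + 1) ^ p - 1 → ¬ ℓ ∣ (t + 1) := by
    intro t hdvd hcon
    have h1 : ℓ ∣ (t + 1) ^ p - 1 := hℓdvdM.trans hdvd
    have h2 : ℓ ∣ (t + 1) ^ p := dvd_pow hcon hp.ne_zero
    have h3 : 1 ≤ (t + 1) ^ p := Nat.one_le_pow _ _ (Nat.succ_pos t)
    have h4 : ℓ ∣ 1 := by
      have := Nat.dvd_sub h2 h1
      rwa [Nat.sub_sub_self h3] at this
    exact absurd (Nat.le_of_dvd one_pos h4) (by have := hℓ.one_lt; omega)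
  -- key rigidity: two roots congruent mod ℓ are equal
  have key : ∀ x y : ℕ, 1 ≤ y → y ≤ x → x ≤ ℓ ^ α → ¬ ℓ ∣ x →
      ℓ ^ α ∣ x ^ p - 1 → ℓ ^ α ∣ y ^ p - 1 → ℓ ∣ x - y → x = y := by
    intro x y hy1 hyx hxM hlx hx hy hdvdxy
    by_contra hne
    have hylt : y < x := by omega
    have hlte := padicValNat.pow_sub_pow (p := ℓ) hℓodd hylt hdvdxy hlx (n := p) hp.ne_zero
    have hml : ℓ ^ α ∣ x ^ p - y ^ p := by
      have hx' : 1 ≡ x ^ p [MOD ℓ ^ α] :=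
        (Nat.modEq_iff_dvd' (Nat.one_le_pow _ _ (by omega))).mpr hx
      have hy' : 1 ≡ y ^ p [MOD ℓ ^ α] :=
        (Nat.modEq_iff_dvd' (Nat.one_le_pow _ _ (by omega))).mpr hy
      exact (Nat.modEq_iff_dvd' (Nat.pow_le_pow_left hyx p)).mp (hy'.symm.trans hx')
    have hvp : padicValNat ℓ p = 0 := padicValNat.eq_zero_of_not_dvd hℓnotp
    have hne0 : x ^ p - y ^ p ≠ 0 := by
      have := Nat.pow_lt_pow_left hylt hp.ne_zero
      omega
    have hle : α ≤ padicValNat ℓ (x ^ p - y ^ p) := (pv_pow_dvd_iff hℓ hne0).mp hml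
    rw [hlte, hvp, add_zero] at hle
    have hdd : ℓ ^ α ∣ x - y := (pv_pow_dvd_iff hℓ (by omega)).mpr hle
    have := Nat.le_of_dvd (by omega) hdd
    omega
  -- the set of roots
  set R := (range (ℓ ^ α)).filter (fun t => ℓ ^ α ∣ (t + 1) ^ p - 1) with hR
  -- upper bound on R.card
  have hub : R.card ≤ p := by
    have h1 : R.card ≤ ((Polynomial.nthRoots p (1 : ZMod ℓ)).toFinset).card := by
      apply Finset.card_le_card_of_injOn (fun t => ((t + 1 : ℕ) : ZMod ℓ))
      · intro t ht
        rw [hR, Finset.mem_coe, mem_filter, mem_range] at ht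
        have hmeq : ((t + 1) ^ p : ℕ) ≡ 1 [MOD ℓ] :=
          (dvd_iff_modEq.mp ht.2).of_dvd hℓdvdM
        have hcast := (ZMod.natCast_eq_natCast_iff ((t + 1) ^ p) 1 ℓ).mpr hmeq
        show ((t + 1 : ℕ) : ZMod ℓ) ∈ _
        rw [Finset.mem_coe, Multiset.mem_toFinset, Polynomial.mem_nthRoots hp.pos]
        have hre : (((t + 1 : ℕ) : ZMod ℓ)) ^ p = ((((t + 1) ^ p : ℕ)) : ZMod ℓ) := by
          push_cast; ring
        rw [hre, hcast, Nat.cast_one]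
      · intro t1 h1 t2 h2 heq
        simp only [Finset.mem_coe] at h1 h2
        rw [hR, mem_filter, mem_range] at h1 h2
        have heq' : ((t1 + 1 : ℕ) : ZMod ℓ) = ((t2 + 1 : ℕ) : ZMod ℓ) := heq
        have hmod12 := (ZMod.natCast_eq_natCast_iff _ _ _).mp heq'
        rcases le_total t2 t1 with hle' | hle'
        · have hdd : ℓ ∣ (t1 + 1) - (t2 + 1) :=
            (Nat.modEq_iff_dvd' (by omega)).mp hmod12.symm
          have := key (t1 + 1) (t2 + 1) (by omega) (by omega) (by omega)
            (hnd t1 h1.2) h1.2 h2.2 hdd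
          omega
        · have hdd : ℓ ∣ (t2 + 1) - (t1 + 1) :=
            (Nat.modEq_iff_dvd' (by omega)).mp hmod12
          have := key (t2 + 1) (t1 + 1) (by omega) (by omega) (by omega)
            (hnd t2 h2.2) h2.2 h1.2 hdd
          omega
    have h2 : ((Polynomial.nthRoots p (1 : ZMod ℓ)).toFinset).card ≤ p :=
      le_trans (Multiset.toFinset_card_le _) (by
        simpa using (Polynomial.card_nthRoots p (1 : ZMod ℓ)))
    omega
  -- lower bound on R.card
  have hlb : p ≤ R.card := by
    have hcard : Fintype.card (ZMod (ℓ ^ α))ˣ = ℓ ^ (α - 1) * (ℓ - 1) := by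
      rw [ZMod.card_units_eq_totient, Nat.totient_prime_pow hℓ hα]
    have hpdvdcard : p ∣ Fintype.card (ZMod (ℓ ^ α))ˣ := by
      rw [hcard]; exact hpdvd.mul_left _
    obtain ⟨u, hu⟩ := exists_prime_orderOf_dvd_card p hpdvdcard
    have hup : u ^ p = 1 := hu ▸ pow_orderOf_eq_one u
    have h1 : (range p).card ≤ R.card := by
      apply Finset.card_le_card_of_injOn
        (fun k => (ZMod.val ((u ^ k : (ZMod (ℓ ^ α))ˣ) : ZMod (ℓ ^ α))) - 1)
      · intro k hk
        set x : ZMod (ℓ ^ α) := ((u ^ k : (ZMod (ℓ ^ α))ˣ) : ZMod (ℓ ^ α)) with hx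
        have hv1 : x.val ≠ 0 := by
          intro h0
          have h := ZMod.natCast_rightInverse x
          rw [h0] at h
          exact Units.ne_zero (u ^ k) (hx ▸ (by simpa using h.symm))
        rw [hR, Finset.mem_coe, mem_filter, mem_range]
        constructor
        · have := ZMod.val_lt x; show x.val - 1 < ℓ ^ α; omega
        · have hxv : ((x.val : ℕ) : ZMod (ℓ ^ α)) = x := ZMod.natCast_rightInverse x
          have hxp : x ^ p = 1 := by
            rw [hx, ← Units.val_pow_eq_pow_val, ← pow_mul, mul_comm, pow_mul, hup, one_pow,
              Units.val_one]
          have : ((x.val ^ p : ℕ) : ZMod (ℓ ^ α)) = ((1 : ℕ) : ZMod (ℓ ^ α)) := by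
            push_cast
            rw [hxv, hxp]
          have hmodeq := (ZMod.natCast_eq_natCast_iff _ _ _).mp this
          have heq : x.val - 1 + 1 = x.val := by omega
          rw [dvd_iff_modEq, heq]
          exact hmodeq
      · intro k1 hk1 k2 hk2 heq
        simp only [mem_coe, mem_range] at hk1 hk2
        have hval : ∀ k : ℕ, (ZMod.val ((u ^ k : (ZMod (ℓ ^ α))ˣ) : ZMod (ℓ ^ α))) ≠ 0 := by
          intro k
          intro h0
          have h := ZMod.natCast_rightInverse ((u ^ k : (ZMod (ℓ ^ α))ˣ) : ZMod (ℓ ^ α))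
          rw [h0] at h
          exact Units.ne_zero (u ^ k) (by simpa using h.symm)
        have heq2 : (ZMod.val ((u ^ k1 : (ZMod (ℓ ^ α))ˣ) : ZMod (ℓ ^ α))) - 1
            = (ZMod.val ((u ^ k2 : (ZMod (ℓ ^ α))ˣ) : ZMod (ℓ ^ α))) - 1 := heq
        have hveq : (ZMod.val ((u ^ k1 : (ZMod (ℓ ^ α))ˣ) : ZMod (ℓ ^ α)))
            = (ZMod.val ((u ^ k2 : (ZMod (ℓ ^ α))ˣ) : ZMod (ℓ ^ α))) := by
          have := hval k1; have := hval k2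
          omega
        have hxeq : ((u ^ k1 : (ZMod (ℓ ^ α))ˣ) : ZMod (ℓ ^ α))
            = ((u ^ k2 : (ZMod (ℓ ^ α))ˣ) : ZMod (ℓ ^ α)) := by
          rw [← ZMod.natCast_rightInverse ((u ^ k1 : (ZMod (ℓ ^ α))ˣ) : ZMod (ℓ ^ α)),
            ← ZMod.natCast_rightInverse ((u ^ k2 : (ZMod (ℓ ^ α))ˣ) : ZMod (ℓ ^ α)), hveq]
        have huu : (u : (ZMod (ℓ ^ α))ˣ) ^ k1 = u ^ k2 := Units.ext hxeq
        have := pow_eq_pow_iff_modEq.mp huu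
        rw [hu] at this
        exact Nat.ModEq.eq_of_lt_of_lt this hk1 hk2
    simpa using h1
  have hRcard : R.card = p := le_antisymm hub hlb
  -- zero is the only root divisible by ℓ
  have hzero : R.filter (fun t => ℓ ∣ t) = {0} := by
    ext t
    simp only [mem_filter, mem_singleton, mem_range, hR]
    constructor
    · rintro ⟨⟨hlt, hdvd⟩, hdt⟩
      have := key (t + 1) 1 le_rfl (by omega) (by omega) (hnd t hdvd) hdvd
        (by simpa using dvd_zero (ℓ ^ α)) (by simpa using hdt)
      omega
    · rintro rfl
      exact ⟨⟨hM0, by simp⟩, dvd_zero ℓ⟩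
  -- assemble
  unfold cnt
  have hfilter : ((range (ℓ ^ α)).filter
      (fun t => ℓ ^ α ∣ (t + 1) ^ p - 1 ∧ Nat.gcd t (ℓ ^ α) = 1))
      = R.filter (fun t => ¬ ℓ ∣ t) := by
    rw [hR, Finset.filter_filter]
    apply Finset.filter_congr
    intro t _
    constructor
    · rintro ⟨h1, h2⟩
      refine ⟨h1, ?_⟩
      intro hcon
      have : ℓ ∣ Nat.gcd t (ℓ ^ α) := Nat.dvd_gcd hcon hℓdvdM
      rw [h2] at this
      exact absurd (Nat.le_of_dvd one_pos this) (by have := hℓ.one_lt; omega)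
    · rintro ⟨h1, h2⟩
      refine ⟨h1, ?_⟩
      have : Nat.Coprime t ℓ := Nat.coprime_comm.mp ((hℓ.coprime_iff_not_dvd).mpr h2)
      exact Nat.Coprime.pow_right α this
  rw [hfilter]
  have hsplit := Finset.card_filter_add_card_filter_not
    (s := R) (p := fun t => ℓ ∣ t)
  rw [hzero] at hsplit
  simp only [Finset.card_singleton] at hsplit
  have hfin : (R.filter (fun a => ¬ (fun t => ℓ ∣ t) a)).card
      = (R.filter (fun t => ¬ ℓ ∣ t)).card := rfl
  rw [hfin] at hsplit
  omega

lemma gcd_prime_pow {ℓ d α : ℕ} (hℓ : ℓ.Prime) (hd : d ≠ 0)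
    (hβα : padicValNat ℓ d ≤ α) :
    Nat.gcd d (ℓ ^ α) = ℓ ^ padicValNat ℓ d := by
  have h1 : ℓ ^ padicValNat ℓ d ∣ Nat.gcd d (ℓ ^ α) :=
    Nat.dvd_gcd ((pv_pow_dvd_iff hℓ hd).mpr le_rfl) (pow_dvd_pow ℓ hβα)
  obtain ⟨γ, hγα, hγ⟩ := (Nat.dvd_prime_pow hℓ).mp (Nat.gcd_dvd_right d (ℓ ^ α))
  rw [hγ]
  congr 1
  have h2 : γ ≤ padicValNat ℓ d :=
    (pv_pow_dvd_iff hℓ hd).mp (hγ ▸ Nat.gcd_dvd_left d (ℓ ^ α))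
  have h3 : padicValNat ℓ d ≤ γ := by
    have := h1
    rw [hγ, Nat.pow_dvd_pow_iff_le_right hℓ.one_lt] at this
    exact this
  omega

/-- The main counting lemma, proved by strong induction and CRT. -/
lemma main_count {p : ℕ} (hp : p.Prime) (hpodd : Odd p) :
    ∀ M, 0 < M → ∀ d, d ∣ M →
    (∀ ℓ : ℕ, ℓ.Prime → ℓ ∣ M →
      (ℓ = p → 2 ≤ padicValNat ℓ M →
        padicValNat ℓ d = padicValNat ℓ M - 1 ∨ padicValNat ℓ d = padicValNat ℓ M) ∧
      (ℓ % p = 1 → padicValNat ℓ d = 0 ∨ padicValNat ℓ d = padicValNat ℓ M) ∧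
      (¬ (ℓ = p ∧ 2 ≤ padicValNat ℓ M) → ¬ (ℓ % p = 1) →
        padicValNat ℓ d = padicValNat ℓ M)) →
    cnt p M d = (p - 1) ^
      ((M.primeFactors.filter (fun ℓ => ℓ % p = 1 ∧ ¬ ℓ ∣ d)).card
        + (padicValNat p M - padicValNat p d)) := by
  intro M
  induction M using Nat.strong_induction_on with
  | _ M ih =>
  intro hM d hd hval
  rcases eq_or_lt_of_le (show 1 ≤ M from hM) with hM1 | hM1
  · -- M = 1
    have hMeq : M = 1 := hM1.symm
    subst hMeq
    have hd1 : d = 1 := Nat.dvd_one.mp hd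
    subst hd1
    rw [cnt_self one_pos]
    simp [padicValNat.one]
  · -- M > 1
    obtain ⟨ℓ, hℓdef⟩ : ∃ x, x = M.minFac := ⟨_, rfl⟩
    have hℓ : ℓ.Prime := hℓdef ▸ Nat.minFac_prime (by omega)
    have hℓM : ℓ ∣ M := hℓdef ▸ M.minFac_dvd
    obtain ⟨α, hαdef⟩ : ∃ x, x = padicValNat ℓ M := ⟨_, rfl⟩
    have hfeq : M.factorization ℓ = α := by rw [hαdef]; exact Nat.factorization_def M hℓ
    have hα : 0 < α := by
      rw [← hfeq]
      exact Nat.Prime.factorization_pos_of_dvd hℓ hM.ne' hℓM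
    obtain ⟨M2, hM2def⟩ : ∃ x, x = M / ℓ ^ α := ⟨_, rfl⟩
    have hsplit : ℓ ^ α * M2 = M := by
      have := Nat.ordProj_mul_ordCompl_eq_self M ℓ
      rw [hfeq] at this
      rw [hM2def]
      exact this
    have hM2pos : 0 < M2 := by
      have := Nat.ordCompl_pos ℓ hM.ne'
      rw [hfeq] at this
      rw [hM2def]
      exact this
    have hℓM2 : ¬ ℓ ∣ M2 := by
      have := Nat.not_dvd_ordCompl hℓ hM.ne'
      rw [hfeq] at this
      rw [hM2def]
      exact this
    have hco : Nat.Coprime (ℓ ^ α) M2 :=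
      Nat.Coprime.pow_left α ((Nat.Prime.coprime_iff_not_dvd hℓ).mpr hℓM2)
    have hM2lt : M2 < M := by
      rw [hM2def]
      exact Nat.div_lt_self hM (Nat.one_lt_pow hα.ne' hℓ.one_lt)
    have hM2dvd : M2 ∣ M := ⟨ℓ ^ α, by rw [← hsplit]; ring⟩
    have hd0 : d ≠ 0 := by
      rintro rfl
      exact absurd (Nat.eq_zero_of_zero_dvd hd) hM.ne'
    obtain ⟨β, hβdef⟩ : ∃ x, x = padicValNat ℓ d := ⟨_, rfl⟩
    have hβα : β ≤ α := by
      rw [hβdef, hαdef]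
      exact pv_le_of_dvd hℓ hM.ne' hd
    obtain ⟨d2, hd2def⟩ : ∃ x, x = Nat.gcd d M2 := ⟨_, rfl⟩
    have hgcd1 : Nat.gcd d (ℓ ^ α) = ℓ ^ β := by
      rw [hβdef]
      exact gcd_prime_pow hℓ hd0 (hβdef ▸ hβα)
    have hd2M2 : d2 ∣ M2 := hd2def ▸ Nat.gcd_dvd_right d M2
    have hd20 : d2 ≠ 0 := by
      rw [hd2def]
      exact (Nat.gcd_pos_of_pos_right d hM2pos).ne'
    have hcnt : cnt p M d = cnt p (ℓ ^ α) (ℓ ^ β) * cnt p M2 d2 := by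
      calc cnt p M d = cnt p (ℓ ^ α * M2) d := by rw [hsplit]
      _ = cnt p (ℓ ^ α) (Nat.gcd d (ℓ ^ α)) * cnt p M2 (Nat.gcd d M2) :=
          cnt_mul (pow_pos hℓ.pos α) hM2pos hco (hsplit ▸ hd)
      _ = cnt p (ℓ ^ α) (ℓ ^ β) * cnt p M2 d2 := by rw [hgcd1, hd2def]
    have hpvM2 : ∀ r : ℕ, r.Prime → r ≠ ℓ → padicValNat r M2 = padicValNat r M := by
      intro r hr hne
      have h1 : padicValNat r M = padicValNat r (ℓ ^ α) + padicValNat r M2 := by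
        conv_lhs => rw [← hsplit]
        exact pv_mul hr (pow_pos hℓ.pos α).ne' hM2pos.ne'
      have h2 : padicValNat r (ℓ ^ α) = 0 := padicValNat.eq_zero_of_not_dvd (by
        intro hcon
        exact hne ((Nat.prime_dvd_prime_iff_eq hr hℓ).mp (hr.dvd_of_dvd_pow hcon)))
      omega
    have hpvd2 : ∀ r : ℕ, r.Prime → r ≠ ℓ → padicValNat r d2 = padicValNat r d := by
      intro r hr hne
      rw [hd2def, pv_gcd hr hd0 hM2pos.ne', hpvM2 r hr hne]
      exact min_eq_left (pv_le_of_dvd hr hM.ne' hd)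
    have hpvM2ℓ : padicValNat ℓ M2 = 0 := padicValNat.eq_zero_of_not_dvd hℓM2
    have hpvd2ℓ : padicValNat ℓ d2 = 0 := padicValNat.eq_zero_of_not_dvd (by
      intro hcon
      exact hℓM2 ((hd2def ▸ hcon).trans (Nat.gcd_dvd_right d M2)))
    have hval2 : ∀ r : ℕ, r.Prime → r ∣ M2 →
        (r = p → 2 ≤ padicValNat r M2 →
          padicValNat r d2 = padicValNat r M2 - 1 ∨ padicValNat r d2 = padicValNat r M2) ∧
        (r % p = 1 → padicValNat r d2 = 0 ∨ padicValNat r d2 = padicValNat r M2) ∧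
        (¬ (r = p ∧ 2 ≤ padicValNat r M2) → ¬ (r % p = 1) →
          padicValNat r d2 = padicValNat r M2) := by
      intro r hr hrM2
      have hne : r ≠ ℓ := by rintro rfl; exact hℓM2 hrM2
      have hrM : r ∣ M := hrM2.trans hM2dvd
      have hv := hval r hr hrM
      rw [hpvM2 r hr hne, hpvd2 r hr hne]
      exact hv
    have hIH := ih M2 hM2lt hM2pos d2 hd2M2 hval2
    -- prime factors decomposition
    have hℓnotin : ℓ ∉ M2.primeFactors := fun hcon => hℓM2 (Nat.dvd_of_mem_primeFactors hcon)
    have hpf : M.primeFactors = insert ℓ M2.primeFactors := by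
      conv_lhs => rw [← hsplit]
      rw [Nat.primeFactors_mul (pow_pos hℓ.pos α).ne' hM2pos.ne',
        Nat.primeFactors_prime_pow hα.ne' hℓ, ← Finset.insert_eq]
    have hcongr : M2.primeFactors.filter (fun r => r % p = 1 ∧ ¬ r ∣ d)
        = M2.primeFactors.filter (fun r => r % p = 1 ∧ ¬ r ∣ d2) := by
      apply Finset.filter_congr
      intro r hrmem
      have hrM2 : r ∣ M2 := Nat.dvd_of_mem_primeFactors hrmem
      have hiff : r ∣ d ↔ r ∣ d2 := by
        rw [hd2def]
        exact ⟨fun h => Nat.dvd_gcd h hrM2, fun h => h.trans (Nat.gcd_dvd_left _ _)⟩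
      rw [hiff]
    have hfc : (M.primeFactors.filter (fun r => r % p = 1 ∧ ¬ r ∣ d)).card
        = (if ℓ % p = 1 ∧ ¬ ℓ ∣ d then 1 else 0)
          + (M2.primeFactors.filter (fun r => r % p = 1 ∧ ¬ r ∣ d2)).card := by
      rw [hpf, Finset.filter_insert, hcongr]
      split_ifs with hcond
      · rw [Finset.card_insert_of_notMem (fun hcon =>
          hℓnotin (Finset.mem_of_mem_filter _ hcon))]
        omega
      · omega
    rw [hcnt, hIH, hfc]
    -- case analysis
    rcases eq_or_lt_of_le hβα with hβeq | hβlt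
    · -- β = α : first factor is 1
      rw [hβeq, cnt_self (pow_pos hℓ.pos α), one_mul]
      have hℓd : ℓ ∣ d := by
        have : ℓ ^ 1 ∣ d := (pv_pow_dvd_iff hℓ hd0).mpr (by omega)
        simpa using this
      rw [if_neg (by tauto)]
      congr 1
      -- exponents
      by_cases hℓp : ℓ = p
      · subst hℓp
        rw [← hαdef, ← hβdef, hpvM2ℓ, hpvd2ℓ]
        omega
      · have h1 : padicValNat p M2 = padicValNat p M := hpvM2 p hp (fun h => hℓp h.symm)
        have h2 : padicValNat p d2 = padicValNat p d := hpvd2 p hp (fun h => hℓp h.symm)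
        omega
    · -- β < α
      by_cases hℓp : ℓ % p = 1
      · -- case ℓ ≡ 1 mod p, β = 0
        have hβ0 : β = 0 := by
          rcases (hval ℓ hℓ hℓM).2.1 hℓp with h | h
          · omega
          · rw [← hβdef, ← hαdef] at h; omega
        have hℓnep : ℓ ≠ p := by
          rintro rfl
          rw [Nat.mod_self] at hℓp
          omega
        have hℓnd : ¬ ℓ ∣ d := by
          intro hcon
          have : ℓ ^ 1 ∣ d := by simpa using hcon
          have := (pv_pow_dvd_iff hℓ hd0).mp this
          omega
        rw [hβ0, pow_zero, cnt_cong_one hp hpodd hℓ hℓp hα, if_pos ⟨hℓp, hℓnd⟩]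
        have h1 : padicValNat p M2 = padicValNat p M := hpvM2 p hp (fun h => hℓnep h.symm)
        have h2 : padicValNat p d2 = padicValNat p d := hpvd2 p hp (fun h => hℓnep h.symm)
        rw [← pow_succ']
        congr 1
        omega
      · -- case ℓ = p, 2 ≤ α, β = α - 1
        have hcase : ℓ = p ∧ 2 ≤ α := by
          by_contra hcon
          have hcon' : ¬ (ℓ = p ∧ 2 ≤ padicValNat ℓ M) := by rw [← hαdef]; exact hcon
          have := (hval ℓ hℓ hℓM).2.2 hcon' hℓp
          rw [← hβdef, ← hαdef] at this
          omega
        obtain ⟨rfl, h2α⟩ := hcase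
        have hβ : β = α - 1 := by
          rcases (hval ℓ hℓ hℓM).1 rfl (by rw [← hαdef]; exact h2α) with h | h
          · rw [← hβdef, ← hαdef] at h; omega
          · rw [← hβdef, ← hαdef] at h; omega
        rw [hβ, cnt_p_pow hp h2α, if_neg (by
          rintro ⟨hcon, -⟩
          rw [Nat.mod_self] at hcon
          have := hp.one_lt
          omega)]
        rw [← pow_succ']
        congr 1
        rw [← hαdef, ← hβdef, hpvM2ℓ, hpvd2ℓ]
        omega

end Stmt5Aux

/-- Proposition 2.8: the number of Rédei permutations with d + χ + 1 fixed
points and p-cycles, for p an odd prime. -/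
theorem stmt_5 (q : ℕ) (hq : ∃ p' k : ℕ, p'.Prime ∧ Odd p' ∧ 0 < k ∧ q = p' ^ k)
    (χ : ℤ) (hχ : χ = 1 ∨ χ = -1) (m : ℕ) (hm : (m : ℤ) = (q : ℤ) - χ)
    (p : ℕ) (hp : p.Prime) (hpodd : Odd p)
    (d : ℕ) (hdm : d ∣ m) (hdne : d ≠ m)
    (hval : ∀ ℓ : ℕ, ℓ.Prime → ℓ ∣ m →
      (ℓ = p → 2 ≤ padicValNat ℓ m →
        padicValNat ℓ d = padicValNat ℓ m - 1 ∨ padicValNat ℓ d = padicValNat ℓ m) ∧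
      (ℓ % p = 1 → padicValNat ℓ d = 0 ∨ padicValNat ℓ d = padicValNat ℓ m) ∧
      (¬ (ℓ = p ∧ 2 ≤ padicValNat ℓ m) → ¬ (ℓ % p = 1) →
        padicValNat ℓ d = padicValNat ℓ m))
    (u : ℕ)
    (hu : u = (m.primeFactors.filter (fun ℓ => ℓ % p = 1 ∧ ¬ ℓ ∣ d)).card) :
    (padicValNat p d = padicValNat p m →
      ((Finset.Icc 1 m).filter
        (fun n => m ∣ n ^ p - 1 ∧ Nat.gcd (n - 1) m = d)).card = (p - 1) ^ u) ∧
    (padicValNat p m = padicValNat p d + 1 →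
      ((Finset.Icc 1 m).filter
        (fun n => m ∣ n ^ p - 1 ∧ Nat.gcd (n - 1) m = d)).card = (p - 1) ^ (u + 1)) := by
  -- m is positive
  have hm0 : 0 < m := by
    obtain ⟨p', k, hp', hodd', hk, rfl⟩ := hq
    have h2 : 2 ≤ p' ^ k := by
      calc 2 ≤ p' := hp'.two_le
      _ = p' ^ 1 := (pow_one p').symm
      _ ≤ p' ^ k := Nat.pow_le_pow_right hp'.pos hk
    rcases hχ with rfl | rfl <;> omega
  -- convert the Icc-count to `cnt`
  have hicc : ((Finset.Icc 1 m).filter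
      (fun n => m ∣ n ^ p - 1 ∧ Nat.gcd (n - 1) m = d)).card = Stmt5Aux.cnt p m d := by
    unfold Stmt5Aux.cnt
    refine Finset.card_bij' (fun n _ => n - 1) (fun t _ => t + 1) ?_ ?_ ?_ ?_
    · intro n hn
      simp only [Finset.mem_filter, Finset.mem_Icc] at hn
      simp only [Finset.mem_filter, Finset.mem_range]
      obtain ⟨⟨h1, h2⟩, h3, h4⟩ := hn
      have he : n - 1 + 1 = n := by omega
      exact ⟨by omega, by rw [he]; exact h3, h4⟩
    · intro t ht
      simp only [Finset.mem_filter, Finset.mem_range] at ht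
      simp only [Finset.mem_filter, Finset.mem_Icc, Nat.add_sub_cancel]
      exact ⟨⟨by omega, by omega⟩, ht.2⟩
    · intro n hn
      simp only [Finset.mem_filter, Finset.mem_Icc] at hn
      show n - 1 + 1 = n
      omega
    · intro t ht
      show t + 1 - 1 = t
      omega
  rw [hicc]
  have key := Stmt5Aux.main_count hp hpodd m hm0 d hdm hval
  constructor
  · intro hcase
    rw [key, hcase, Nat.sub_self, Nat.add_zero, hu]
  · intro hcase
    rw [key, hu, hcase]
    congr 1
    omega
end

section
/- Let p be an odd prime and let r be the number of primes ℓ such that ℓ ≡ 1 (mod p) and ℓ divides m. Then the number of integers n with 2 ≤ n ≤ m such that m divides n^p − 1 equals p^r − 1 if p² does not divide m, and equals p^(r+1) − 1 if p² divides m. -/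
open Finset Subgroup

/-- Number of solutions of `x ^ p = 1` in `ZMod k`. -/
private noncomputable def solCount (p k : ℕ) : ℕ := Nat.card {x : ZMod k // x ^ p = 1}

private lemma solCount_eq_units (p k : ℕ) (hp : 0 < p) :
    solCount p k = Nat.card {u : (ZMod k)ˣ // u ^ p = 1} := by
  refine (Nat.card_congr (Equiv.ofBijective
    (fun u : {u : (ZMod k)ˣ // u ^ p = 1} =>
      (⟨(u.1 : ZMod k), by
        have := congrArg (Units.val) u.2
        simpa using this⟩ : {x : ZMod k // x ^ p = 1})) ⟨?_, ?_⟩)).symm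
  · intro a b hab
    exact Subtype.ext (Units.ext (congrArg Subtype.val hab))
  · rintro ⟨x, hx⟩
    have hu : IsUnit x := by
      refine IsUnit.of_mul_eq_one (a := x) (x ^ (p - 1)) ?_
      rw [← pow_succ', show p - 1 + 1 = p by omega]
      exact hx
    refine ⟨⟨hu.unit, ?_⟩, ?_⟩
    · ext
      simp [hx]
    · simp

private lemma cardA {G : Type*} [Group G] [Finite G] {p : ℕ}
    (h : (Nat.card G).Coprime p) : Nat.card {x : G // x ^ p = 1} = 1 := by
  rw [Nat.card_eq_one_iff_unique]
  constructor
  · constructor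
    rintro ⟨a, ha⟩ ⟨b, hb⟩
    have key : ∀ x : G, x ^ p = 1 → x = 1 := by
      intro x hx
      have h1 : orderOf x ∣ p := orderOf_dvd_of_pow_eq_one hx
      have h2 : orderOf x ∣ Nat.card G := orderOf_dvd_natCard x
      have : orderOf x ∣ 1 := Nat.dvd_one.mpr (Nat.eq_one_of_dvd_coprimes h h2 h1)
      exact orderOf_eq_one_iff.mp (Nat.dvd_one.mp this)
    simp [Subtype.ext_iff, key a ha, key b hb]
  · exact ⟨⟨1, one_pow p⟩⟩

private lemma cardB {G : Type*} [Group G] [Fintype G] [IsCyclic G] {p : ℕ}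
    (hp : p.Prime) (h : p ∣ Fintype.card G) : Nat.card {x : G // x ^ p = 1} = p := by
  classical
  haveI : Fact p.Prime := ⟨hp⟩
  rw [Nat.card_eq_fintype_card, Fintype.card_subtype]
  refine le_antisymm (IsCyclic.card_pow_eq_one_le hp.pos) ?_
  obtain ⟨g, hg⟩ := exists_prime_orderOf_dvd_card p h
  have hsub : (Subgroup.zpowers g : Set G).toFinset ⊆ univ.filter (fun x => x ^ p = 1) := by
    intro x hx
    simp only [Set.mem_toFinset, SetLike.mem_coe, Subgroup.mem_zpowers_iff] at hx
    obtain ⟨k, rfl⟩ := hx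
    simp only [mem_filter, mem_univ, true_and]
    rw [← zpow_natCast, ← zpow_mul, mul_comm, zpow_mul, zpow_natCast, ← hg,
      pow_orderOf_eq_one, one_zpow]
  have hcard : ((Subgroup.zpowers g : Set G).toFinset).card = p := by
    rw [Set.toFinset_card]
    simp only [SetLike.coe_sort_coe]
    rw [← Nat.card_eq_fintype_card, Nat.card_zpowers]
    exact hg
  calc p = _ := hcard.symm
    _ ≤ _ := Finset.card_le_card hsub

private lemma cardC {G H : Type*} [CommGroup G] [CommGroup H] {p : ℕ} (hp : 1 < p)
    (f : G →* H) (hs : Function.Surjective f)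
    (hk : (Nat.card f.ker).Coprime p) :
    Nat.card {x : G // x ^ p = 1} = Nat.card {y : H // y ^ p = 1} := by
  refine Nat.card_congr (Equiv.ofBijective
    (fun x : {x : G // x ^ p = 1} =>
      (⟨f x.1, by rw [← map_pow, x.2, map_one]⟩ : {y : H // y ^ p = 1})) ⟨?_, ?_⟩)
  · rintro ⟨a, ha⟩ ⟨b, hb⟩ hab
    simp only [Subtype.mk.injEq] at hab ⊢
    have hker : a * b⁻¹ ∈ f.ker := by
      rw [MonoidHom.mem_ker, map_mul, map_inv, hab, mul_inv_cancel]
    set k : f.ker := ⟨a * b⁻¹, hker⟩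
    have hkp : k ^ p = 1 := by
      ext
      push_cast [k]
      rw [mul_pow, ha, inv_pow, hb, inv_one, mul_one]
    have h1 : orderOf k ∣ p := orderOf_dvd_of_pow_eq_one hkp
    have h2 : orderOf k ∣ Nat.card f.ker := orderOf_dvd_natCard k
    have : orderOf k = 1 := Nat.eq_one_of_dvd_coprimes hk h2 h1
    have : k = 1 := orderOf_eq_one_iff.mp this
    have : a * b⁻¹ = 1 := congrArg Subtype.val this
    rwa [mul_inv_eq_one] at this
  · rintro ⟨y, hy⟩
    obtain ⟨x, rfl⟩ := hs y
    have hxk : (x ^ p) ^ Nat.card f.ker = 1 := by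
      have hmem : x ^ p ∈ f.ker := by rw [MonoidHom.mem_ker, map_pow, hy]
      have := pow_card_eq_one' (G := f.ker) (x := ⟨x ^ p, hmem⟩)
      have := congrArg Subtype.val this
      push_cast at this
      simpa using this
    obtain ⟨b, -, hb⟩ := Nat.exists_mul_mod_eq_one_of_coprime hk hp
    obtain ⟨a, hab⟩ : ∃ a, Nat.card f.ker * b = 1 + p * a := by
      generalize Nat.card f.ker * b = N at hb ⊢
      have h2 := Nat.div_add_mod N p
      exact ⟨N / p, by omega⟩
    refine ⟨⟨x ^ (Nat.card f.ker * b), ?_⟩, ?_⟩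
    · rw [← pow_mul, show Nat.card f.ker * b * p = p * Nat.card f.ker * b by ring,
        pow_mul, pow_mul, hxk, one_pow]
    · simp only [Subtype.mk.injEq, map_pow]
      rw [hab, pow_add, pow_one, pow_mul, hy, one_pow, mul_one]

private lemma castpow_iff (p k : ℕ) (x : ℤ) :
    ((x : ZMod k)) ^ p = 1 ↔ (k : ℤ) ∣ x ^ p - 1 := by
  rw [← ZMod.intCast_zmod_eq_zero_iff_dvd]
  push_cast
  rw [sub_eq_zero]

private lemma keyInt {p e : ℕ} (hp : p.Prime) (hodd : Odd p) (he : 2 ≤ e) (x : ℤ) :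
    (p : ℤ) ^ e ∣ x ^ p - 1 ↔ (p : ℤ) ^ (e - 1) ∣ x - 1 := by
  haveI : Fact p.Prime := ⟨hp⟩
  rcases eq_or_ne x 1 with rfl | hx1
  · simp
  have hprime : Prime ((p : ℕ) : ℤ) := Nat.prime_iff_prime_int.mp hp
  -- main equivalence via LTE, assuming p ∣ x - 1
  have main : (p:ℤ) ∣ x - 1 → ((p : ℤ) ^ e ∣ x ^ p - 1 ↔ (p : ℤ) ^ (e - 1) ∣ x - 1) := by
    intro hxy
    have hx : ¬ (p:ℤ) ∣ x := by
      intro h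
      have h1 : (p:ℤ) ∣ 1 := (dvd_sub_right h).mp (by simpa using hxy)
      have h2 := Int.le_of_dvd one_pos h1
      have := hp.two_le
      omega
    have lte := emultiplicity_pow_prime_sub_pow_prime (R := ℤ) (x := x) (y := 1) hprime
      hodd (by simpa using hxy) hx
    simp only [one_pow] at lte
    have hfin : FiniteMultiplicity ((p:ℕ):ℤ) (x - 1) :=
      Int.finiteMultiplicity_iff.mpr ⟨by simpa using hp.ne_one, sub_ne_zero.mpr hx1⟩
    rw [hfin.emultiplicity_eq_multiplicity] at lte
    rw [pow_dvd_iff_le_emultiplicity, pow_dvd_iff_le_emultiplicity, lte,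
      hfin.emultiplicity_eq_multiplicity]
    rw [show ((multiplicity ((p:ℕ):ℤ) (x-1) : ℕ∞) + 1)
        = ((multiplicity ((p:ℕ):ℤ) (x-1) + 1 : ℕ) : ℕ∞) by push_cast; ring]
    rw [Nat.cast_le, Nat.cast_le]
    omega
  constructor
  · intro h
    have hp1 : (p:ℤ) ∣ x ^ p - 1 := by
      refine dvd_trans ?_ h
      simpa using pow_dvd_pow ((p:ℤ)) (show 1 ≤ e by omega)
    have hbar : ((x : ZMod p)) ^ p = 1 := (castpow_iff p p x).mpr (by simpa using hp1)
    have hxx : (x : ZMod p) = 1 := by rw [← ZMod.pow_card (x : ZMod p)]; exact hbar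
    have hdvd : (p:ℤ) ∣ x - 1 := by
      rwa [← ZMod.intCast_zmod_eq_zero_iff_dvd, Int.cast_sub, Int.cast_one, sub_eq_zero]
    exact (main hdvd).mp h
  · intro h
    have hdvd : (p:ℤ) ∣ x - 1 := by
      refine dvd_trans ?_ h
      simpa using pow_dvd_pow ((p:ℤ)) (show 1 ≤ e - 1 by omega)
    exact (main hdvd).mpr h

private lemma cardD {p e : ℕ} (hp : p.Prime) (hodd : Odd p) (he : 2 ≤ e) :
    Nat.card {x : ZMod (p ^ e) // x ^ p = 1} = p := by
  haveI : Fact p.Prime := ⟨hp⟩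
  haveI : NeZero p := ⟨hp.pos.ne'⟩
  haveI : NeZero (p ^ e) := ⟨pow_ne_zero e hp.pos.ne'⟩
  have hpz : ((p : ℤ)) ≠ 0 := by exact_mod_cast hp.pos.ne'
  have hpe : ((p ^ e : ℕ) : ℤ) = (p:ℤ) ^ (e-1) * p := by
    push_cast
    rw [← pow_succ, show e - 1 + 1 = e by omega]
  have key : ∀ n : ℤ, ((n : ZMod (p ^ e))) ^ p = 1 ↔ (p:ℤ) ^ (e - 1) ∣ n - 1 := by
    intro n
    rw [castpow_iff, show ((p ^ e : ℕ) : ℤ) = (p:ℤ) ^ e by push_cast; ring]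
    exact keyInt hp hodd he n
  let F : ZMod p → {x : ZMod (p ^ e) // x ^ p = 1} := fun t =>
    ⟨(((1 + t.val * p ^ (e - 1) : ℕ) : ZMod (p ^ e))), by
      rw [show (((1 + t.val * p ^ (e-1) : ℕ) : ZMod (p ^ e)))
           = (((1 + t.val * p ^ (e-1) : ℕ) : ℤ) : ZMod (p ^ e)) by push_cast; ring]
      rw [key]
      push_cast
      rw [add_sub_cancel_left]
      exact dvd_mul_left _ _⟩
  have hFval : ∀ t, (F t).1 = ((1 + t.val * p ^ (e - 1) : ℕ) : ZMod (p ^ e)) := fun t => rfl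
  have hinj : Function.Injective F := by
    intro t s hts
    have h1 : ((1 + t.val * p ^ (e-1) : ℕ) : ZMod (p ^ e))
        = ((1 + s.val * p ^ (e-1) : ℕ) : ZMod (p ^ e)) := by
      rw [← hFval, ← hFval, hts]
    rw [ZMod.natCast_eq_natCast_iff] at h1
    have h2 : ((p ^ e : ℕ) : ℤ) ∣ ((1 + s.val * p ^ (e-1) : ℕ) : ℤ)
        - ((1 + t.val * p ^ (e-1) : ℕ) : ℤ) := h1.dvd
    rw [hpe] at h2
    have h3 : (p:ℤ) ^ (e-1) * (p:ℤ) ∣ (p:ℤ) ^ (e-1) * ((s.val : ℤ) - (t.val : ℤ)) := by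
      convert h2 using 1
      push_cast
      ring
    have h4 : (p:ℤ) ∣ (s.val : ℤ) - (t.val : ℤ) :=
      (mul_dvd_mul_iff_left (pow_ne_zero (e-1) hpz)).mp h3
    have h5 : (s.val : ℤ) - (t.val : ℤ) = 0 := by
      refine Int.eq_zero_of_abs_lt_dvd h4 ?_
      have htv := ZMod.val_lt t
      have hsv := ZMod.val_lt s
      rw [abs_lt]
      constructor <;> omega
    have : t.val = s.val := by omega
    exact ZMod.val_injective p this
  have hsurj : Function.Surjective F := by
    rintro ⟨x, hx⟩
    have hxcast : (((x.val : ℕ) : ZMod (p ^ e))) = x := ZMod.natCast_rightInverse x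
    have hdvd : (p:ℤ) ^ (e-1) ∣ ((x.val : ℤ)) - 1 := by
      rw [← key]
      rw [show (((x.val : ℤ)) : ZMod (p ^ e)) = ((x.val : ℕ) : ZMod (p ^ e)) by push_cast; ring]
      rw [hxcast]
      exact hx
    obtain ⟨c, hc⟩ := hdvd
    refine ⟨(c : ZMod p), ?_⟩
    apply Subtype.ext
    rw [hFval]
    have hcc : (p:ℤ) ∣ (((c : ZMod p)).val : ℤ) - c := by
      have h5 : (((c : ZMod p).val : ℕ) : ZMod p) = (c : ZMod p) :=
        ZMod.natCast_rightInverse _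
      rw [← ZMod.intCast_zmod_eq_zero_iff_dvd]
      push_cast
      rw [sub_eq_zero]
      exact_mod_cast h5
    obtain ⟨d, hd⟩ := hcc
    show (((1 + ((c : ZMod p)).val * p ^ (e-1) : ℕ) : ZMod (p ^ e))) = (⟨x, hx⟩ : {x : ZMod (p ^ e) // x ^ p = 1}).1
    simp only []
    rw [← hxcast]
    rw [show (((1 + ((c : ZMod p)).val * p ^ (e-1) : ℕ) : ZMod (p ^ e)))
        = (((1 + ((c : ZMod p)).val * p ^ (e-1) : ℕ) : ℤ) : ZMod (p ^ e)) by push_cast; ring,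
      show (((x.val : ℕ)) : ZMod (p ^ e)) = (((x.val : ℕ) : ℤ) : ZMod (p ^ e)) by push_cast; ring]
    rw [ZMod.intCast_eq_intCast_iff, Int.modEq_iff_dvd, hpe]
    refine ⟨-d, ?_⟩
    push_cast
    linear_combination hc - (p:ℤ) ^ (e-1) * hd
  have := Nat.card_congr (Equiv.ofBijective F ⟨hinj, hsurj⟩)
  rw [Nat.card_zmod] at this
  exact this.symm

private lemma solCount_one (p : ℕ) : solCount p 1 = 1 := by
  rw [solCount, Nat.card_eq_one_iff_unique]
  exact ⟨⟨fun a b => Subtype.ext (Subsingleton.elim _ _)⟩, ⟨⟨1, one_pow p⟩⟩⟩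

private lemma solCount_mul (p : ℕ) {a b : ℕ} (h : a.Coprime b) :
    solCount p (a * b) = solCount p a * solCount p b := by
  rw [solCount, solCount, solCount, ← Nat.card_prod]
  refine Nat.card_congr ?_
  refine Equiv.trans (Equiv.subtypeEquiv (ZMod.chineseRemainder h).toEquiv
    (q := fun y : ZMod a × ZMod b => y.1 ^ p = 1 ∧ y.2 ^ p = 1) (fun x => ?_))
    (Equiv.subtypeProdEquivProd (p := fun y : ZMod a => y ^ p = 1)
      (q := fun y : ZMod b => y ^ p = 1))
  have h1 : x ^ p = 1 ↔ ((ZMod.chineseRemainder h) x) ^ p = 1 := by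
    rw [← map_pow]
    constructor
    · intro hx; rw [hx, map_one]
    · intro hx
      have := congrArg (ZMod.chineseRemainder h).symm hx
      simpa using this
  rw [h1, Prod.ext_iff]
  simp

private lemma solCount_prime_pow {p ℓ e : ℕ} (hp : p.Prime) (hodd : Odd p)
    (hl : ℓ.Prime) (he : e ≠ 0) :
    solCount p (ℓ ^ e) = if p ∣ (ℓ ^ e).totient then p else 1 := by
  haveI : Fact ℓ.Prime := ⟨hl⟩
  haveI : NeZero (ℓ ^ e) := ⟨pow_ne_zero e hl.pos.ne'⟩
  have hcardunits : Nat.card (ZMod (ℓ ^ e))ˣ = (ℓ ^ e).totient := by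
    rw [Nat.card_eq_fintype_card, ZMod.card_units_eq_totient]
  by_cases hdvd : p ∣ (ℓ ^ e).totient
  · rw [if_pos hdvd]
    by_cases hlp : ℓ = p
    · subst hlp
      -- must have e ≥ 2
      have he2 : 2 ≤ e := by
        by_contra hcon
        have he1 : e = 1 := by omega
        rw [he1, pow_one, (Nat.totient_prime hl)] at hdvd
        have := Nat.le_of_dvd (by have := hl.two_le; omega) hdvd
        have := hl.two_le
        omega
      exact cardD hl hodd he2
    · -- ℓ ≠ p ; then p ∣ ℓ - 1
      have hpl1 : p ∣ ℓ - 1 := by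
        rw [Nat.totient_prime_pow hl (Nat.pos_of_ne_zero he)] at hdvd
        rcases (Nat.Prime.dvd_mul hp).mp hdvd with h | h
        · exfalso
          exact hlp ((Nat.prime_dvd_prime_iff_eq hp hl).mp (hp.dvd_of_dvd_pow h)).symm
        · exact h
      rw [solCount_eq_units p _ hp.pos]
      have hsurj := ZMod.unitsMap_surjective (n := ℓ) (m := ℓ ^ e)
        (dvd_pow_self ℓ he)
      have hker : (Nat.card (ZMod.unitsMap (dvd_pow_self ℓ he)).ker).Coprime p := by
        have hq := Subgroup.card_eq_card_quotient_mul_card_subgroup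
          (ZMod.unitsMap (dvd_pow_self ℓ he)).ker
        have hquot : Nat.card ((ZMod (ℓ ^ e))ˣ ⧸ (ZMod.unitsMap (dvd_pow_self ℓ he)).ker)
            = Nat.card (ZMod ℓ)ˣ :=
          Nat.card_congr (QuotientGroup.quotientKerEquivOfSurjective _ hsurj).toEquiv
        rw [hquot, hcardunits, Nat.card_eq_fintype_card, ZMod.card_units_eq_totient,
          (Nat.totient_prime hl), Nat.totient_prime_pow hl (Nat.pos_of_ne_zero he)] at hq
        have hl1 : 0 < ℓ - 1 := by have := hl.two_le; omega
        have hkval : Nat.card (ZMod.unitsMap (dvd_pow_self ℓ he)).ker = ℓ ^ (e - 1) := by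
          refine Nat.eq_of_mul_eq_mul_left hl1 ?_
          simpa [mul_comm] using hq.symm
        rw [hkval]
        exact (Nat.Coprime.pow_left _ ((Nat.coprime_primes hl hp).mpr hlp))
      rw [cardC hp.one_lt _ hsurj hker]
      haveI : NeZero ℓ := ⟨hl.pos.ne'⟩
      refine cardB hp ?_
      rw [ZMod.card_units_eq_totient, (Nat.totient_prime hl)]
      exact hpl1
  · rw [if_neg hdvd]
    rw [solCount_eq_units p _ hp.pos]
    refine cardA ?_
    rw [hcardunits]
    exact Nat.Coprime.symm (hp.coprime_iff_not_dvd.mpr hdvd)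

private lemma solCount_formula {p m : ℕ} (hp : p.Prime) (hodd : Odd p) (hm : m ≠ 0) :
    solCount p m = p ^ ((m.primeFactors.filter (fun ℓ => ℓ % p = 1)).card
      + (if p ^ 2 ∣ m then 1 else 0)) := by
  classical
  rw [Nat.multiplicative_factorization (solCount p)
    (fun a b h => solCount_mul p h) (solCount_one p) hm]
  rw [Finsupp.prod]
  rw [Nat.support_factorization]
  have hterm : ∀ ℓ ∈ m.primeFactors,
      solCount p (ℓ ^ m.factorization ℓ)
        = if (ℓ % p = 1 ∨ (ℓ = p ∧ p ^ 2 ∣ m)) then p else 1 := by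
    intro ℓ hℓ
    have hlp : ℓ.Prime := Nat.prime_of_mem_primeFactors hℓ
    have he : m.factorization ℓ ≠ 0 := by
      rw [← Nat.support_factorization] at hℓ
      exact Finsupp.mem_support_iff.mp hℓ
    rw [solCount_prime_pow hp hodd hlp he]
    refine if_congr ?_ rfl rfl
    rw [Nat.totient_prime_pow hlp (Nat.pos_of_ne_zero he), hp.dvd_mul]
    constructor
    · rintro (h | h)
      · right
        have hpeq : p = ℓ := (Nat.prime_dvd_prime_iff_eq hp hlp).mp (hp.dvd_of_dvd_pow h)
        have he2 : 2 ≤ m.factorization ℓ := by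
          by_contra hcon
          have : m.factorization ℓ - 1 = 0 := by omega
          rw [this, pow_zero] at h
          exact hp.one_lt.ne' (Nat.eq_one_of_dvd_one h)
        refine ⟨hpeq.symm, ?_⟩
        rw [hpeq]
        exact (Nat.Prime.pow_dvd_iff_le_factorization hlp hm).mpr he2
      · left
        have h1 : (1 : ℕ) ≡ ℓ [MOD p] := (Nat.modEq_iff_dvd' hlp.one_lt.le).mpr h
        have := h1.symm
        rw [Nat.ModEq] at this
        rwa [Nat.one_mod_eq_one.mpr hp.ne_one] at this
    · rintro (h | ⟨rfl, h2⟩)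
      · right
        refine (Nat.modEq_iff_dvd' hlp.one_lt.le).mp ?_
        rw [Nat.ModEq, Nat.one_mod_eq_one.mpr hp.ne_one]
        exact h.symm
      · left
        have he2 : 2 ≤ m.factorization ℓ :=
          (Nat.Prime.pow_dvd_iff_le_factorization hlp hm).mp h2
        exact dvd_pow_self ℓ (by omega)
  rw [Finset.prod_congr rfl hterm, Finset.prod_ite, Finset.prod_const,
    Finset.prod_const_one, mul_one]
  congr 1
  rw [Finset.filter_or, Finset.card_union_of_disjoint]
  · congr 1
    by_cases hp2 : p ^ 2 ∣ m
    · rw [if_pos hp2]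
      have hpm : p ∈ m.primeFactors :=
        Nat.mem_primeFactors.mpr ⟨hp, dvd_trans (dvd_pow_self p two_ne_zero) hp2, hm⟩
      have : m.primeFactors.filter (fun ℓ => ℓ = p ∧ p ^ 2 ∣ m)
          = m.primeFactors.filter (fun ℓ => ℓ = p) := by
        refine Finset.filter_congr (fun ℓ _ => ?_)
        simp [hp2]
      rw [this, Finset.filter_eq', if_pos hpm, Finset.card_singleton]
    · rw [if_neg hp2]
      rw [Finset.filter_false_of_mem, Finset.card_empty]
      rintro ℓ _ ⟨_, h⟩
      exact hp2 h
  · rw [Finset.disjoint_filter]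
    rintro ℓ _ h1 ⟨rfl, _⟩
    rw [Nat.mod_self] at h1
    omega

private lemma frontEnd {p m : ℕ} (hp0 : p ≠ 0) (hm2 : 2 ≤ m) :
    ((Finset.Icc 2 m).filter (fun n => m ∣ n ^ p - 1)).card = solCount p m - 1 := by
  classical
  haveI : NeZero m := ⟨by omega⟩
  haveI : Fact (1 < m) := ⟨by omega⟩
  have hiff : ∀ n : ℕ, 1 ≤ n → (m ∣ n ^ p - 1 ↔ ((n : ZMod m)) ^ p = 1) := by
    intro n hn
    have h1 : 1 ≤ n ^ p := Nat.one_le_pow p n (by omega)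
    rw [← Nat.modEq_iff_dvd' h1, ← ZMod.natCast_eq_natCast_iff]
    push_cast
    exact ⟨fun h => h.symm, fun h => h.symm⟩
  have hstep1 : (Finset.Icc 1 m).filter (fun n => m ∣ n ^ p - 1)
      = insert 1 ((Finset.Icc 2 m).filter (fun n => m ∣ n ^ p - 1)) := by
    ext n
    simp only [Finset.mem_insert, Finset.mem_filter, Finset.mem_Icc]
    constructor
    · rintro ⟨⟨h1, h2⟩, h3⟩
      rcases eq_or_ne n 1 with rfl | hne
      · exact Or.inl rfl
      · exact Or.inr ⟨⟨by omega, h2⟩, h3⟩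
    · rintro (rfl | ⟨⟨h1, h2⟩, h3⟩)
      · exact ⟨⟨le_refl 1, by omega⟩, by simp⟩
      · exact ⟨⟨by omega, h2⟩, h3⟩
  have hnotmem : (1 : ℕ) ∉ (Finset.Icc 2 m).filter (fun n => m ∣ n ^ p - 1) := by
    simp
  have hcard1 : ((Finset.Icc 1 m).filter (fun n => m ∣ n ^ p - 1)).card
      = ((Finset.Icc 2 m).filter (fun n => m ∣ n ^ p - 1)).card + 1 := by
    rw [hstep1, Finset.card_insert_of_notMem hnotmem]
  have hcard2 : ((Finset.Icc 1 m).filter (fun n => m ∣ n ^ p - 1)).card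
      = (Finset.univ.filter (fun x : ZMod m => x ^ p = 1)).card := by
    refine Finset.card_bij (fun n _ => (n : ZMod m)) ?_ ?_ ?_
    · intro n hn
      simp only [Finset.mem_filter, Finset.mem_Icc] at hn
      simp only [Finset.mem_filter, Finset.mem_univ, true_and]
      exact (hiff n hn.1.1).mp hn.2
    · intro n1 h1 n2 h2 heq
      simp only [Finset.mem_filter, Finset.mem_Icc] at h1 h2
      rw [ZMod.natCast_eq_natCast_iff] at heq
      have hdvd := heq.dvd
      have hz : (n2 : ℤ) - n1 = 0 := by
        refine Int.eq_zero_of_abs_lt_dvd hdvd ?_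
        rw [abs_lt]
        constructor <;> omega
      exact_mod_cast sub_eq_zero.mp hz |>.symm
    · intro x hx
      simp only [Finset.mem_filter, Finset.mem_univ, true_and] at hx
      have hx0 : x ≠ 0 := by
        intro h0
        rw [h0, zero_pow hp0] at hx
        exact zero_ne_one hx
      have hv1 : 1 ≤ x.val := by
        have := (ZMod.val_eq_zero x).not.mpr hx0
        omega
      refine ⟨x.val, ?_, ?_⟩
      · simp only [Finset.mem_filter, Finset.mem_Icc]
        have hvlt := ZMod.val_lt x
        refine ⟨⟨hv1, by omega⟩, ?_⟩
        rw [hiff x.val hv1]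
        rw [show ((x.val : ℕ) : ZMod m) = x from ZMod.natCast_rightInverse x]
        exact hx
      · exact ZMod.natCast_rightInverse x
  have hcard3 : solCount p m = (Finset.univ.filter (fun x : ZMod m => x ^ p = 1)).card := by
    rw [solCount, Nat.card_eq_fintype_card, Fintype.card_subtype]
  omega

/-- Proposition 2.9: the total number of Rédei permutations (other than the
identity) with 1- and p-cycles, for p an odd prime. -/
theorem stmt_6 (q : ℕ) (hq : ∃ p' k : ℕ, p'.Prime ∧ Odd p' ∧ 0 < k ∧ q = p' ^ k)
    (χ : ℤ) (hχ : χ = 1 ∨ χ = -1) (m : ℕ) (hm : (m : ℤ) = (q : ℤ) - χ)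
    (p : ℕ) (hp : p.Prime) (hpodd : Odd p)
    (r : ℕ) (hr : r = (m.primeFactors.filter (fun ℓ => ℓ % p = 1)).card) :
    (¬ p ^ 2 ∣ m →
      ((Finset.Icc 2 m).filter (fun n => m ∣ n ^ p - 1)).card = p ^ r - 1) ∧
    (p ^ 2 ∣ m →
      ((Finset.Icc 2 m).filter (fun n => m ∣ n ^ p - 1)).card = p ^ (r + 1) - 1) := by
  obtain ⟨p', k, hp', hodd', hk, rfl⟩ := hq
  have hp3 : 3 ≤ p' := by
    rcases hodd' with ⟨t, ht⟩
    have := hp'.two_le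
    omega
  have hq3 : 3 ≤ p' ^ k := le_trans hp3 (Nat.le_self_pow (by omega) p')
  have hm2 : 2 ≤ m := by
    have h1 : (3 : ℤ) ≤ ((p' ^ k : ℕ) : ℤ) := by exact_mod_cast hq3
    rcases hχ with rfl | rfl <;> omega
  have hmain := solCount_formula (m := m) hp hpodd (by omega)
  have hfront := frontEnd (p := p) (m := m) hp.pos.ne' hm2
  rw [← hr] at hmain
  constructor
  · intro h2
    rw [hfront, hmain, if_neg h2, add_zero]
  · intro h2
    rw [hfront, hmain, if_pos h2]
end

section
/- Let d be a proper divisor of m. Then there exists a positive integer n such that m divides n² − 1 and gcd(n−1, m) = d, if and only if d is even, ν₂(d) ∈ {1, ν₂(m) − 1, ν₂(m)}, and gcd(d, m/d) divides 2. -/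
private lemma sq_sub_one_eq (n : ℕ) (hn : 1 ≤ n) : n ^ 2 - 1 = (n - 1) * (n + 1) := by
  obtain ⟨k, rfl⟩ := Nat.exists_eq_add_of_le hn
  have h : (1 + k) ^ 2 = k * (k + 2) + 1 := by ring
  have e1 : 1 + k - 1 = k := by omega
  have e2 : 1 + k + 1 = k + 2 := by omega
  rw [e1, e2, h, Nat.add_sub_cancel]

/-- Assembly lemma for the reverse direction: given a suitable residue `c` mod `2^a`,
construct the witness `n` by CRT. -/
private lemma assemble (m d a e M D c : ℕ)
    (hMm : 2 ^ a * M = m) (hDd : 2 ^ e * D = d)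
    (hcop1 : Nat.Coprime D (M / D)) (hDM : D ∣ M) (hM0 : M ≠ 0)
    (hModd : ¬ 2 ∣ M)
    (hc : ∀ n : ℕ, 1 ≤ n → n ≡ c [MOD 2 ^ a] →
      Nat.gcd (n - 1) (2 ^ a) = 2 ^ e ∧ 2 ^ a ∣ (n - 1) * (n + 1)) :
    ∃ n : ℕ, 0 < n ∧ m ∣ n ^ 2 - 1 ∧ Nat.gcd (n - 1) m = d := by
  have hmpos : 0 < m := hMm ▸ Nat.mul_pos (pow_pos (by norm_num) a) (Nat.pos_of_ne_zero hM0)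
  have hcop2 : Nat.Coprime (2 ^ a) M :=
    (((Nat.Prime.coprime_iff_not_dvd Nat.prime_two).mpr hModd).pow_left a)
  have hMDmul : M / D * D = M := Nat.div_mul_cancel hDM
  have hMDpos : 0 < M / D := by
    rcases Nat.eq_zero_or_pos (M / D) with h | h
    · exact absurd (by rw [← hMDmul, h, zero_mul]) hM0
    · exact h
  obtain ⟨r, hr1, hr2⟩ := Nat.chineseRemainder hcop1 1 (M / D - 1)
  obtain ⟨n₀, hn1, hn2⟩ := Nat.chineseRemainder hcop2 c r
  have h2am : 2 ^ a ∣ m := ⟨M, hMm.symm⟩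
  have hMdm : M ∣ m := ⟨2 ^ a, by rw [← hMm]; ring⟩
  have hnc : n₀ + m ≡ c [MOD 2 ^ a] := by
    have := Nat.ModEq.add hn1 ((Nat.modEq_zero_iff_dvd).mpr h2am)
    simpa using this
  have hnM : n₀ + m ≡ r [MOD M] := by
    have := Nat.ModEq.add hn2 ((Nat.modEq_zero_iff_dvd).mpr hMdm)
    simpa using this
  have hnD : n₀ + m ≡ 1 [MOD D] := (hnM.of_dvd hDM).trans hr1
  have hnMD : n₀ + m ≡ M / D - 1 [MOD M / D] :=
    (hnM.of_dvd ⟨D, hMDmul.symm⟩).trans hr2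
  have hnpos : 1 ≤ n₀ + m := by omega
  have hDn1 : D ∣ n₀ + m - 1 := (Nat.modEq_iff_dvd' hnpos).mp hnD.symm
  have hMDn1 : M / D ∣ n₀ + m + 1 := by
    have h := hnMD.add_right 1
    rw [Nat.sub_add_cancel hMDpos] at h
    exact (Nat.modEq_zero_iff_dvd).mp (h.trans ((Nat.modEq_zero_iff_dvd).mpr dvd_rfl))
  obtain ⟨hgcd2a, h2advd⟩ := hc (n₀ + m) hnpos hnc
  refine ⟨n₀ + m, by omega, ?_, ?_⟩
  · -- m ∣ n^2 - 1
    rw [sq_sub_one_eq _ hnpos]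
    have hMdvd : M ∣ (n₀ + m - 1) * (n₀ + m + 1) := by
      have : D * (M / D) ∣ (n₀ + m - 1) * (n₀ + m + 1) := mul_dvd_mul hDn1 hMDn1
      rwa [Nat.mul_div_cancel' hDM] at this
    have hfin := Nat.Coprime.mul_dvd_of_dvd_of_dvd hcop2 h2advd hMdvd
    rwa [hMm] at hfin
  · have hgMD1 : Nat.gcd (n₀ + m - 1) (M / D) = 1 := by
        have h1 : Nat.gcd (n₀ + m - 1) (M / D) ∣ 2 := by
          have := Nat.dvd_sub ((Nat.gcd_dvd_right (n₀ + m - 1) (M / D)).trans hMDn1)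
            (Nat.gcd_dvd_left (n₀ + m - 1) (M / D))
          rwa [show n₀ + m + 1 - (n₀ + m - 1) = 2 from by omega] at this
        have hodd : ¬ 2 ∣ Nat.gcd (n₀ + m - 1) (M / D) := fun h =>
          hModd (h.trans ((Nat.gcd_dvd_right _ _).trans ⟨D, hMDmul.symm⟩))
        have hle := Nat.le_of_dvd (by norm_num) h1
        have hne : Nat.gcd (n₀ + m - 1) (M / D) ≠ 0 := by
          intro h
          exact absurd (Nat.eq_zero_of_gcd_eq_zero_right h) (by omega)
        omega
    have hgM : Nat.gcd (n₀ + m - 1) M = D := by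
        calc Nat.gcd (n₀ + m - 1) M
            = Nat.gcd (n₀ + m - 1) (D * (M / D)) := by rw [Nat.mul_div_cancel' hDM]
          _ = Nat.gcd (n₀ + m - 1) D * Nat.gcd (n₀ + m - 1) (M / D) :=
              Nat.Coprime.gcd_mul _ hcop1
          _ = D * 1 := by
              rw [hgMD1, Nat.dvd_antisymm (Nat.gcd_dvd_right _ _) (Nat.dvd_gcd hDn1 dvd_rfl)]
          _ = D := mul_one D
    calc Nat.gcd (n₀ + m - 1) m
        = Nat.gcd (n₀ + m - 1) (2 ^ a * M) := by rw [hMm]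
      _ = Nat.gcd (n₀ + m - 1) (2 ^ a) * Nat.gcd (n₀ + m - 1) M :=
          Nat.Coprime.gcd_mul _ hcop2
      _ = 2 ^ e * D := by rw [hgcd2a, hgM]
      _ = d := hDd

/-- Proposition 3.1: characterization of (q, χ, 2)-admissible integers. -/
theorem stmt_7 (q : ℕ) (hq : ∃ p' k : ℕ, p'.Prime ∧ Odd p' ∧ 0 < k ∧ q = p' ^ k)
    (χ : ℤ) (hχ : χ = 1 ∨ χ = -1) (m : ℕ) (hm : (m : ℤ) = (q : ℤ) - χ)
    (d : ℕ) (hdm : d ∣ m) (hdne : d ≠ m) :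
    (∃ n : ℕ, 0 < n ∧ m ∣ n ^ 2 - 1 ∧ Nat.gcd (n - 1) m = d) ↔
      (Even d ∧
        (padicValNat 2 d = 1 ∨ padicValNat 2 d = padicValNat 2 m - 1 ∨
          padicValNat 2 d = padicValNat 2 m) ∧
        Nat.gcd d (m / d) ∣ 2) := by
  -- basic facts about m
  obtain ⟨p', k, hp, hpodd, hk, hqe⟩ := hq
  have hp3 : 3 ≤ p' := by
    obtain ⟨j, hj⟩ := hpodd
    have := hp.two_le
    omega
  have hq3 : 3 ≤ q := by
    calc 3 ≤ p' := hp3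
      _ = p' ^ 1 := (pow_one p').symm
      _ ≤ p' ^ k := Nat.pow_le_pow_right (by omega) hk
      _ = q := hqe.symm
  have hqodd : Odd q := hqe ▸ hpodd.pow
  obtain ⟨j, hj⟩ := hqodd
  have hm2 : 2 ≤ m ∧ 2 ∣ m := by rcases hχ with rfl | rfl <;> constructor <;> omega
  have hm0' : m ≠ 0 := by omega
  have hd0 : d ≠ 0 := by rintro rfl; exact hm0' (Nat.eq_zero_of_zero_dvd hdm)
  have hlem : ∀ x : ℕ, x ≠ 0 → ∀ i : ℕ, 2 ^ i ∣ x ↔ i ≤ padicValNat 2 x :=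
    fun x hx i => padicValNat_dvd_iff_le hx
  set a := padicValNat 2 m with ha
  set e := padicValNat 2 d with he
  have ha1 : 1 ≤ a := (hlem m hm0' 1).mp (by rw [pow_one]; exact hm2.2)
  have hea : e ≤ a := (hlem m hm0' e).mp (pow_padicValNat_dvd.trans hdm)
  constructor
  · rintro ⟨n, hn0, hdvd, hgcd⟩
    have hne1 : n ≠ 1 := by
      rintro rfl
      simp only [Nat.sub_self, Nat.gcd_zero_left] at hgcd
      exact hdne hgcd.symm
    have hnodd : ¬ 2 ∣ n := by
      intro h2n
      have h2sq : 2 ∣ n ^ 2 := h2n.pow (by norm_num)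
      have h4 : 4 ≤ n ^ 2 := by
        calc 4 = 2 ^ 2 := by norm_num
          _ ≤ n ^ 2 := Nat.pow_le_pow_left (by omega) 2
      have h2m1 := hm2.2.trans hdvd
      omega
    have hn3 : 3 ≤ n := by omega
    have hn1 : n - 1 ≠ 0 := by omega
    have hprod : m ∣ (n - 1) * (n + 1) := by rw [← sq_sub_one_eq n (by omega)]; exact hdvd
    have hdn1 : d ∣ n - 1 := hgcd ▸ Nat.gcd_dvd_left _ _
    -- m/d ∣ n+1
    have hcop : Nat.Coprime (m / d) ((n - 1) / d) := by
      have h := Nat.coprime_div_gcd_div_gcd (m := n - 1) (n := m)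
        (by rw [hgcd]; omega)
      rw [hgcd] at h
      exact h.symm
    obtain ⟨kk, hkk⟩ := hprod
    have key : m / d * kk = (n - 1) / d * (n + 1) := by
      apply Nat.eq_of_mul_eq_mul_right (show 0 < d by omega)
      calc m / d * kk * d = m / d * d * kk := by ring
        _ = m * kk := by rw [Nat.div_mul_cancel hdm]
        _ = (n - 1) * (n + 1) := hkk.symm
        _ = (n - 1) / d * d * (n + 1) := by rw [Nat.div_mul_cancel hdn1]
        _ = (n - 1) / d * (n + 1) * d := by ring
    have hmd : m / d ∣ n + 1 := hcop.dvd_of_dvd_mul_left ⟨kk, key.symm⟩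
    have hg2 : Nat.gcd d (m / d) ∣ 2 := by
      have h1 : Nat.gcd d (m / d) ∣ n - 1 := (Nat.gcd_dvd_left _ _).trans hdn1
      have h2 : Nat.gcd d (m / d) ∣ n + 1 := (Nat.gcd_dvd_right _ _).trans hmd
      have h3 := Nat.dvd_sub h2 h1
      rwa [show n + 1 - (n - 1) = 2 from by omega] at h3
    have h2d : 2 ∣ d := by
      rw [← hgcd]
      exact Nat.dvd_gcd (by omega) hm2.2
    set s := padicValNat 2 (n - 1) with hs
    set t := padicValNat 2 (n + 1) with ht
    have hsa : e = min s a := by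
      have h1 : 2 ^ min s a ∣ d := by
        rw [← hgcd]
        exact Nat.dvd_gcd ((hlem _ hn1 _).mpr (min_le_left _ _))
          ((hlem _ hm0' _).mpr (min_le_right _ _))
      have h2 : e ≤ s := (hlem _ hn1 _).mp (pow_padicValNat_dvd.trans hdn1)
      have h4 : min s a ≤ e := (hlem _ hd0 _).mp h1
      omega
    have hst : a ≤ s + t := by
      have h5 : 2 ^ a ∣ (n - 1) * (n + 1) := pow_padicValNat_dvd.trans ⟨kk, hkk⟩
      have h6 : padicValNat 2 ((n - 1) * (n + 1)) = s + t := padicValNat.mul hn1 (by omega)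
      have h7 := (hlem _ (by positivity) _).mp h5
      omega
    have hs1 : 1 ≤ s := (hlem _ hn1 1).mp (by rw [pow_one]; omega)
    have ht1 : 1 ≤ t := (hlem _ (by omega) 1).mp (by rw [pow_one]; omega)
    have hnot : ¬ (2 ≤ s ∧ 2 ≤ t) := by
      rintro ⟨h2s, h2t⟩
      have ha' := (hlem _ hn1 2).mpr h2s
      have hb' := (hlem _ (show n + 1 ≠ 0 by omega) 2).mpr h2t
      norm_num at ha' hb'
      omega
    refine ⟨Nat.even_iff.mpr (by omega), by omega, hg2⟩
  · rintro ⟨hdeven, hval, hg2⟩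
    obtain ⟨rr, hrr⟩ := hdeven
    have h2d : 2 ∣ d := ⟨rr, by omega⟩
    have he1 : 1 ≤ e := (hlem d hd0 1).mp (by rw [pow_one]; exact h2d)
    have h2aM : 2 ^ a ∣ m := pow_padicValNat_dvd
    have h2eD : 2 ^ e ∣ d := pow_padicValNat_dvd
    set M := m / 2 ^ a with hMdef
    set D := d / 2 ^ e with hDdef
    have hMm : 2 ^ a * M = m := Nat.mul_div_cancel' h2aM
    have hDd : 2 ^ e * D = d := Nat.mul_div_cancel' h2eD
    have hM0 : M ≠ 0 := by rintro h; rw [h, mul_zero] at hMm; omega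
    have hD0 : D ≠ 0 := by rintro h; rw [h, mul_zero] at hDd; exact hd0 hDd.symm
    have hModd : ¬ 2 ∣ M := by
      intro h2M
      have hdv : 2 ^ (a + 1) ∣ m := by
        obtain ⟨u, hu⟩ := h2M
        exact ⟨u, by rw [← hMm, hu, pow_succ]; ring⟩
      have := (hlem m hm0' (a + 1)).mp hdv
      omega
    have hDodd : ¬ 2 ∣ D := by
      intro h2D
      have hdv : 2 ^ (e + 1) ∣ d := by
        obtain ⟨u, hu⟩ := h2D
        exact ⟨u, by rw [← hDd, hu, pow_succ]; ring⟩
      have := (hlem d hd0 (e + 1)).mp hdv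
      omega
    have hcopD2 : Nat.Coprime D 2 :=
      ((Nat.Prime.coprime_iff_not_dvd Nat.prime_two).mpr hDodd).symm
    have hDdvd : D ∣ d := ⟨2 ^ e, by rw [← hDd]; ring⟩
    have hDM : D ∣ M := by
      have h1 : D ∣ 2 ^ a * M := by rw [hMm]; exact hDdvd.trans hdm
      exact (hcopD2.pow_right a).dvd_of_dvd_mul_left h1
    have hMDmul : M / D * D = M := Nat.div_mul_cancel hDM
    have hamem : 2 ^ (a - e) * 2 ^ e = 2 ^ a := by
      rw [← pow_add]
      congr 1
      omega
    have hmd_eq : m / d = 2 ^ (a - e) * (M / D) := by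
      apply Nat.eq_of_mul_eq_mul_right (show 0 < d by omega)
      rw [Nat.div_mul_cancel hdm]
      calc m = 2 ^ a * M := hMm.symm
        _ = 2 ^ (a - e) * 2 ^ e * (M / D * D) := by rw [hamem, hMDmul]
        _ = 2 ^ (a - e) * (M / D) * d := by rw [← hDd]; ring
    have hcop1 : Nat.Coprime D (M / D) := by
      have hgD : Nat.gcd D (M / D) ∣ D := Nat.gcd_dvd_left _ _
      have hgodd : ¬ 2 ∣ Nat.gcd D (M / D) := fun h => hDodd (h.trans hgD)
      have hgd : Nat.gcd D (M / D) ∣ d := hgD.trans hDdvd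
      have hgmd : Nat.gcd D (M / D) ∣ m / d := by
        refine (Nat.gcd_dvd_right _ _).trans ?_
        rw [hmd_eq]
        exact dvd_mul_left _ _
      have h2' : Nat.gcd D (M / D) ∣ 2 := (Nat.dvd_gcd hgd hgmd).trans hg2
      have hle := Nat.le_of_dvd (by norm_num) h2'
      have hne : Nat.gcd D (M / D) ≠ 0 := fun h =>
        hD0 (Nat.eq_zero_of_gcd_eq_zero_left h)
      exact (by omega : Nat.gcd D (M / D) = 1)
    have hpea : (0:ℕ) < 2 ^ e := pow_pos (by norm_num) e
    have hpaa : (0:ℕ) < 2 ^ a := pow_pos (by norm_num) a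
    by_cases hA : e = a
    · -- c = 1
      refine assemble m d a e M D 1 hMm hDd hcop1 hDM hM0 hModd ?_
      intro n hn hmod
      have h2an1 : 2 ^ a ∣ n - 1 := (Nat.modEq_iff_dvd' hn).mp hmod.symm
      constructor
      · rw [hA]
        exact Nat.dvd_antisymm (Nat.gcd_dvd_right _ _) (Nat.dvd_gcd h2an1 dvd_rfl)
      · exact h2an1.mul_right _
    · have hlt : e < a := lt_of_le_of_ne hea hA
      by_cases hB : e = 1
      · -- c = 2^a - 1
        have ha2 : 2 ≤ a := by omega
        refine assemble m d a e M D (2 ^ a - 1) hMm hDd hcop1 hDM hM0 hModd ?_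
        intro n hn hmod
        have h2an1 : 2 ^ a ∣ n + 1 := by
          have h := hmod.add_right 1
          rw [Nat.sub_add_cancel hpaa] at h
          exact (Nat.modEq_zero_iff_dvd).mp (h.trans ((Nat.modEq_zero_iff_dvd).mpr dvd_rfl))
        have h4dvd : (4:ℕ) ∣ 2 ^ a := by
          have : (4:ℕ) = 2 ^ 2 := by norm_num
          rw [this]
          exact pow_dvd_pow 2 ha2
        have h4n1 : (4:ℕ) ∣ n + 1 := h4dvd.trans h2an1
        have h2n1 : 2 ∣ n - 1 := by omega
        constructor
        · rw [hB, pow_one]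
          refine Nat.dvd_antisymm ?_ (Nat.dvd_gcd h2n1 (dvd_trans (by norm_num) h4dvd))
          have h3 := Nat.dvd_sub ((Nat.gcd_dvd_right (n - 1) (2 ^ a)).trans h2an1)
            (Nat.gcd_dvd_left (n - 1) (2 ^ a))
          rwa [show n + 1 - (n - 1) = 2 from by omega] at h3
        · exact h2an1.mul_left _
      · -- c = 2^e + 1, with a = e + 1
        have hC : e = a - 1 := by
          rcases hval with h | h | h
          · exact absurd h hB
          · exact h
          · exact absurd h hA
        have he2 : 2 ≤ e := by omega
        have haE : a = e + 1 := by omega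
        refine assemble m d a e M D (2 ^ e + 1) hMm hDd hcop1 hDM hM0 hModd ?_
        intro n hn hmod
        have h2e_n1 : 2 ^ e ∣ n - 1 := by
          have h' : n ≡ 2 ^ e + 1 [MOD 2 ^ e] := hmod.of_dvd (pow_dvd_pow 2 (by omega))
          have h'' : (2:ℕ) ^ e + 1 ≡ 0 + 1 [MOD 2 ^ e] :=
            Nat.ModEq.add_right 1 ((Nat.modEq_zero_iff_dvd).mpr dvd_rfl)
          have h3 : n ≡ 1 [MOD 2 ^ e] := h'.trans (by rw [zero_add] at h''; exact h'')
          exact (Nat.modEq_iff_dvd' hn).mp h3.symm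
        have hnot2a : ¬ 2 ^ a ∣ n - 1 := by
          intro hcon
          have h1 : n ≡ 1 [MOD 2 ^ a] := ((Nat.modEq_iff_dvd' hn).mpr hcon).symm
          have h2 : (1:ℕ) ≡ 2 ^ e + 1 [MOD 2 ^ a] := h1.symm.trans hmod
          have h3 := (Nat.modEq_iff_dvd' (by omega : 1 ≤ 2 ^ e + 1)).mp h2
          rw [Nat.add_sub_cancel] at h3
          have h4 := Nat.le_of_dvd hpea h3
          rw [haE, pow_succ] at h4
          omega
        constructor
        · have h2eg : 2 ^ e ∣ Nat.gcd (n - 1) (2 ^ a) :=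
            Nat.dvd_gcd h2e_n1 (pow_dvd_pow 2 (by omega))
          obtain ⟨i, hi, hgi⟩ := (Nat.dvd_prime_pow Nat.prime_two).mp (Nat.gcd_dvd_right (n-1) (2 ^ a))
          rw [hgi] at h2eg ⊢
          have hei : e ≤ i := (Nat.pow_dvd_pow_iff_le_right (by norm_num)).mp h2eg
          have hia : i ≠ a := by
            intro hia
            apply hnot2a
            rw [← hia, ← hgi]
            exact Nat.gcd_dvd_left _ _
          congr 1
          omega
        · have h4n1 : (4:ℕ) ∣ n - 1 := by
            have h42 : (4:ℕ) = 2 ^ 2 := by norm_num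
            exact (h42 ▸ pow_dvd_pow 2 he2).trans h2e_n1
          have h2n1p : 2 ∣ n + 1 := by omega
          have := mul_dvd_mul h2e_n1 h2n1p
          rwa [haE, pow_succ]
end

section
/- Let d be a proper divisor of m with d even, ν₂(d) ∈ {1, ν₂(m) − 1, ν₂(m)}, and gcd(d, m/d) dividing 2. Then for every integer n with 1 ≤ n ≤ m, the following are equivalent: (1) m divides n² − 1 and gcd(n−1, m) = d; (2) n ≡ k·(m/d) − 1 (mod m), where the allowed values of k are: k ≡ 2·(m/d)^(φ(d)−1) (mod d) if ν₂(d) = ν₂(m); k ≡ (m/(2d))^(φ(d)−1) + d/2 (mod d) if ν₂(m) = ν₂(d) + 1 and ν₂(d) ≥ 1; and k ≡ (m/(2d))^(φ(d)−1) (mod d) or k ≡ (m/(2d))^(φ(d)−1) + d/2 (mod d) if ν₂(d) = 1 and ν₂(m) ≥ 3. -/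
private lemma aux_gcd_dvd_two {d e t k : ℕ} (ht : e * k = d * t + 2) : Nat.gcd t e ∣ 2 := by
  have h1 : Nat.gcd t e ∣ d * t := Dvd.dvd.mul_left (Nat.gcd_dvd_left t e) d
  have h2 : Nat.gcd t e ∣ e * k := Dvd.dvd.mul_right (Nat.gcd_dvd_right t e) k
  have h3 : Nat.gcd t e ∣ d * t + 2 := ht ▸ h2
  simpa using Nat.dvd_sub h3 h1

private lemma coreA {d e k : ℕ} (hd : 2 ≤ d) (he : 2 ≤ e) (hk : 1 ≤ k)
    (heo : ¬ 2 ∣ e) (hged : Nat.gcd d e ∣ 2) :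
    (∃ t, e * k = d * t + 2 ∧ Nat.Coprime t e) ↔
      k ≡ 2 * e ^ (d.totient - 1) [MOD d] := by
  have hcop : Nat.Coprime e d := by
    have h1 : Nat.gcd e d ∣ 2 := by rwa [Nat.gcd_comm]
    rcases (Nat.dvd_prime Nat.prime_two).mp h1 with h | h
    · exact h
    · exact absurd (h ▸ Nat.gcd_dvd_left e d) heo
  have hpos : 0 < d.totient := Nat.totient_pos.mpr (by omega)
  have heul : e ^ d.totient ≡ 1 [MOD d] := Nat.ModEq.pow_totient hcop
  have hpow : e ^ (d.totient - 1) * e = e ^ d.totient := by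
    rw [← pow_succ]; congr 1; omega
  constructor
  · rintro ⟨t, ht, -⟩
    have h1 : e * k ≡ 2 [MOD d] := by
      rw [ht]; exact (Nat.mul_add_mod d t 2 : _)
    calc k = 1 * k := (one_mul k).symm
      _ ≡ e ^ d.totient * k [MOD d] := heul.symm.mul_right k
      _ = e ^ (d.totient - 1) * (e * k) := by rw [← hpow]; ring
      _ ≡ e ^ (d.totient - 1) * 2 [MOD d] := h1.mul_left _
      _ = 2 * e ^ (d.totient - 1) := by ring
  · intro hk'
    have h1 : e * k ≡ 2 [MOD d] := by
      calc e * k ≡ e * (2 * e ^ (d.totient - 1)) [MOD d] := hk'.mul_left e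
        _ = 2 * e ^ d.totient := by rw [← hpow]; ring
        _ ≡ 2 * 1 [MOD d] := heul.mul_left 2
        _ = 2 := by ring
    have hge : 2 ≤ e * k := le_trans he (Nat.le_mul_of_pos_right e hk)
    have h2 : d ∣ e * k - 2 := (Nat.modEq_iff_dvd' hge).mp h1.symm
    obtain ⟨t, ht0⟩ := h2
    have ht : e * k = d * t + 2 := by omega
    refine ⟨t, ht, ?_⟩
    have hg2 := aux_gcd_dvd_two ht
    rcases (Nat.dvd_prime Nat.prime_two).mp hg2 with h | h
    · exact h
    · exact absurd (h ▸ Nat.gcd_dvd_right t e) heo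

private lemma coreB {d e k : ℕ} (hd : 2 ≤ d) (hk : 1 ≤ k)
    (he2 : e % 4 = 2) (hged : Nat.gcd d e ∣ 2) (hdE : 2 ∣ d) :
    (∃ t, e * k = d * t + 2 ∧ Nat.Coprime t e) ↔
      k ≡ (e / 2) ^ (d.totient - 1) + d / 2 [MOD d] := by
  obtain ⟨f, hf⟩ : ∃ f, e = 2 * f := ⟨e / 2, by omega⟩
  obtain ⟨h, hh⟩ : ∃ h, d = 2 * h := ⟨d / 2, by omega⟩
  have hfo : ¬ 2 ∣ f := by omega
  have he : 2 ≤ e := by omega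
  have hfd : Nat.Coprime f d := by
    have h1 : Nat.gcd f d ∣ Nat.gcd e d :=
      Nat.dvd_gcd ((Nat.gcd_dvd_left f d).trans ⟨2, by omega⟩) (Nat.gcd_dvd_right f d)
    have h2 : Nat.gcd f d ∣ 2 := h1.trans (by rwa [Nat.gcd_comm])
    rcases (Nat.dvd_prime Nat.prime_two).mp h2 with hx | hx
    · exact hx
    · exact absurd (hx ▸ Nat.gcd_dvd_left f d) hfo
  have hpos : 0 < d.totient := Nat.totient_pos.mpr (by omega)
  have hpow : f ^ (d.totient - 1) * f = f ^ d.totient := by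
    rw [← pow_succ]; congr 1; omega
  have heul : f ^ d.totient ≡ 1 [MOD d] := Nat.ModEq.pow_totient hfd
  have hef2 : e / 2 = f := by omega
  have hdh2 : d / 2 = h := by omega
  rw [hef2, hdh2]
  have hchief : ∀ x : ℕ, ¬ 2 ∣ x → x * h ≡ h [MOD d] := by
    intro x hx
    obtain ⟨u, hu⟩ : ∃ u, x = 2 * u + 1 := ⟨x / 2, by omega⟩
    have hxh : x * h = h + u * d := by rw [hu, hh]; ring
    rw [hxh]
    exact (Nat.add_mul_mod_self_right h u d : _)
  have hkey : f * (f ^ (d.totient - 1) + h) ≡ 1 + h [MOD d] := by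
    calc f * (f ^ (d.totient - 1) + h) = f ^ (d.totient - 1) * f + f * h := by ring
      _ = f ^ d.totient + f * h := by rw [hpow]
      _ ≡ 1 + h [MOD d] := Nat.ModEq.add heul (hchief f hfo)
  constructor
  · rintro ⟨t, ht, htc⟩
    have hto : ¬ 2 ∣ t := by
      intro h2t
      have h2g : 2 ∣ Nat.gcd t e := Nat.dvd_gcd h2t (by omega)
      rw [Nat.Coprime.gcd_eq_one htc] at h2g
      omega
    obtain ⟨s, hs⟩ : ∃ s, t = 2 * s + 1 := ⟨t / 2, by omega⟩
    have h6 : 2 * (f * k) = 2 * ((h + 1) + s * d) := by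
      calc 2 * (f * k) = e * k := by rw [hf]; ring
        _ = d * t + 2 := ht
        _ = 2 * ((h + 1) + s * d) := by rw [hh, hs]; ring
    have h5 : f * k = (h + 1) + s * d := by omega
    have h7 : f * k ≡ 1 + h [MOD d] := by
      rw [h5]
      have h8 : (h + 1) + s * d ≡ h + 1 [MOD d] := (Nat.add_mul_mod_self_right (h + 1) s d : _)
      simpa [Nat.add_comm] using h8
    exact Nat.ModEq.cancel_left_of_coprime (Nat.coprime_comm.mp hfd) (h7.trans hkey.symm)
  · intro hk'
    have h8 : f * k ≡ 1 + h [MOD d] := (hk'.mul_left f).trans hkey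
    have h9 : e * k ≡ d + 2 [MOD 2 * d] := by
      have h10 := Nat.ModEq.mul_left' (c := 2) h8
      rw [show 2 * (f * k) = e * k by rw [hf]; ring,
        show 2 * (1 + h) = d + 2 by rw [hh]; ring] at h10
      exact h10
    obtain ⟨j, hj⟩ := Nat.modEq_iff_dvd.mp h9
    have hek2 : 2 ≤ e * k := le_trans he (Nat.le_mul_of_pos_right e hk)
    push_cast at hj
    have hdvd : d ∣ e * k - 2 := by
      have hz : (d : ℤ) ∣ ((e * k - 2 : ℕ) : ℤ) := by
        refine ⟨1 - 2 * j, ?_⟩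
        push_cast [hek2]
        linarith
      exact_mod_cast hz
    obtain ⟨t, ht0⟩ := hdvd
    have ht : e * k = d * t + 2 := by omega
    have htz : (t : ℤ) = 1 - 2 * j := by
      have hd0 : (d : ℤ) ≠ 0 := by exact_mod_cast (show d ≠ 0 by omega)
      have hteq : (d : ℤ) * t = (d : ℤ) * (1 - 2 * j) := by
        have htc : ((e : ℤ)) * k = d * t + 2 := by exact_mod_cast ht
        linarith
      exact mul_left_cancel₀ hd0 hteq
    refine ⟨t, ht, ?_⟩
    have hto : ¬ 2 ∣ t := by omega
    rcases (Nat.dvd_prime Nat.prime_two).mp (aux_gcd_dvd_two ht) with hx | hx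
    · exact hx
    · exact absurd (hx ▸ Nat.gcd_dvd_left t e) hto


private lemma aux_gcd_dvd_two' {d e t k : ℕ} (ht : e * k = d * t + 2) : Nat.gcd t e ∣ 2 := by
  have h1 : Nat.gcd t e ∣ d * t := Dvd.dvd.mul_left (Nat.gcd_dvd_left t e) d
  have h2 : Nat.gcd t e ∣ e * k := Dvd.dvd.mul_right (Nat.gcd_dvd_right t e) k
  have h3 : Nat.gcd t e ∣ d * t + 2 := ht ▸ h2
  simpa using Nat.dvd_sub h3 h1

private lemma aux_modsplit' {n a b : ℕ} :
    a ≡ b [MOD n] ↔ (a ≡ b [MOD 2 * n] ∨ a ≡ b + n [MOD 2 * n]) := by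
  constructor
  · intro h
    obtain ⟨j, hj⟩ := Nat.modEq_iff_dvd.mp h
    rcases Int.even_or_odd j with ⟨i, hi⟩ | ⟨i, hi⟩
    · left
      rw [Nat.modEq_iff_dvd]
      exact ⟨i, by rw [hj, hi]; push_cast; ring⟩
    · right
      rw [Nat.modEq_iff_dvd]
      refine ⟨i + 1, ?_⟩
      have h2 : ((b : ℤ) + n) - a = ((b : ℤ) - a) + n := by ring
      push_cast
      rw [h2, hj, hi]
      push_cast
      ring
  · rintro (h | h)
    · exact h.of_mul_left 2
    · have h2 : b + n ≡ b [MOD n] := Nat.add_mod_right b n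
      exact (h.of_mul_left 2).trans h2

private lemma coreC {d e k : ℕ} (hd4 : d % 4 = 2) (hk : 1 ≤ k)
    (he4 : 4 ∣ e) (he0 : 0 < e) (hged : Nat.gcd d e ∣ 2) :
    (∃ t, e * k = d * t + 2 ∧ Nat.Coprime t e) ↔
      (k ≡ (e / 2) ^ (d.totient - 1) [MOD d] ∨
        k ≡ (e / 2) ^ (d.totient - 1) + d / 2 [MOD d]) := by
  obtain ⟨f, hf⟩ : ∃ f, e = 2 * f := ⟨e / 2, by omega⟩
  obtain ⟨d', hd'⟩ : ∃ x, d = 2 * x := ⟨d / 2, by omega⟩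
  have hd'o : ¬ 2 ∣ d' := by omega
  have hd : 2 ≤ d := by omega
  have hfd' : Nat.Coprime f d' := by
    have h1 : Nat.gcd f d' ∣ Nat.gcd e d :=
      Nat.dvd_gcd ((Nat.gcd_dvd_left f d').trans ⟨2, by omega⟩)
        ((Nat.gcd_dvd_right f d').trans ⟨2, by omega⟩)
    have h2 : Nat.gcd f d' ∣ 2 := h1.trans (by rwa [Nat.gcd_comm])
    rcases (Nat.dvd_prime Nat.prime_two).mp h2 with hx | hx
    · exact hx
    · exact absurd (hx ▸ Nat.gcd_dvd_right f d') hd'o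
  have hphi : d.totient = d'.totient := by
    rw [hd', Nat.totient_mul ((Nat.prime_two.coprime_iff_not_dvd).mpr hd'o),
      Nat.totient_two, one_mul]
  have hpos : 0 < d.totient := Nat.totient_pos.mpr (by omega)
  have hpow : f ^ (d.totient - 1) * f = f ^ d'.totient := by
    rw [← pow_succ, ← hphi]; congr 1; omega
  have heul : f ^ d'.totient ≡ 1 [MOD d'] := Nat.ModEq.pow_totient hfd'
  have hkey : f * f ^ (d.totient - 1) ≡ 1 [MOD d'] := by
    calc f * f ^ (d.totient - 1) = f ^ (d.totient - 1) * f := by ring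
      _ = f ^ d'.totient := hpow
      _ ≡ 1 [MOD d'] := heul
  have hef2 : e / 2 = f := by omega
  have hdh2 : d / 2 = d' := by omega
  rw [hef2, hdh2]
  have hsplit := aux_modsplit' (n := d') (a := k) (b := f ^ (d.totient - 1))
  rw [← hd'] at hsplit
  rw [← hsplit]
  constructor
  · rintro ⟨t, ht, htc⟩
    have h6 : 2 * (f * k) = 2 * (d' * t + 1) := by
      calc 2 * (f * k) = e * k := by rw [hf]; ring
        _ = d * t + 2 := ht
        _ = 2 * (d' * t + 1) := by rw [hd']; ring
    have h5 : f * k = d' * t + 1 := by omega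
    have h7 : f * k ≡ 1 [MOD d'] := by
      rw [h5]; exact (Nat.mul_add_mod d' t 1 : _)
    exact Nat.ModEq.cancel_left_of_coprime (Nat.coprime_comm.mp hfd') (h7.trans hkey.symm)
  · intro hk'
    have h7 : f * k ≡ 1 [MOD d'] := (hk'.mul_left f).trans hkey
    have h9 : e * k ≡ 2 [MOD d] := by
      have h10 := Nat.ModEq.mul_left' (c := 2) h7
      rw [show 2 * (f * k) = e * k by rw [hf]; ring, ← hd'] at h10
      simpa using h10
    have hek2 : 2 ≤ e * k := le_trans (by omega) (Nat.le_mul_of_pos_right e hk)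
    have hdvd : d ∣ e * k - 2 := (Nat.modEq_iff_dvd' hek2).mp h9.symm
    obtain ⟨t, ht0⟩ := hdvd
    have ht : e * k = d * t + 2 := by omega
    refine ⟨t, ht, ?_⟩
    have hto : ¬ 2 ∣ t := by
      rintro ⟨s, hs⟩
      obtain ⟨a, ha⟩ := he4
      have h1 : 4 * (a * k) = 4 * (d' * s) + 2 := by
        calc 4 * (a * k) = e * k := by rw [ha]; ring
          _ = d * t + 2 := ht
          _ = 4 * (d' * s) + 2 := by rw [hd', hs]; ring
      omega
    rcases (Nat.dvd_prime Nat.prime_two).mp (aux_gcd_dvd_two' ht) with hx | hx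
    · exact hx
    · exact absurd (hx ▸ Nat.gcd_dvd_left t e) hto


/-- Proposition 3.2: explicit formulas for the Rédei involutions with
d + χ + 1 fixed points. -/
theorem stmt_8 (q : ℕ) (hq : ∃ p' j : ℕ, p'.Prime ∧ Odd p' ∧ 0 < j ∧ q = p' ^ j)
    (χ : ℤ) (hχ : χ = 1 ∨ χ = -1) (m : ℕ) (hm : (m : ℤ) = (q : ℤ) - χ)
    (d : ℕ) (hdm : d ∣ m) (hdne : d ≠ m) (hdeven : Even d)
    (hval : padicValNat 2 d = 1 ∨ padicValNat 2 d = padicValNat 2 m - 1 ∨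
      padicValNat 2 d = padicValNat 2 m)
    (hgcd : Nat.gcd d (m / d) ∣ 2) :
    ∀ n : ℕ, 1 ≤ n → n ≤ m →
      ((m ∣ n ^ 2 - 1 ∧ Nat.gcd (n - 1) m = d) ↔
        ∃ k : ℕ,
          ((padicValNat 2 d = padicValNat 2 m ∧
              k ≡ 2 * (m / d) ^ (Nat.totient d - 1) [MOD d]) ∨
            (padicValNat 2 m = padicValNat 2 d + 1 ∧ 1 ≤ padicValNat 2 d ∧
              k ≡ (m / (2 * d)) ^ (Nat.totient d - 1) + d / 2 [MOD d]) ∨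
            (padicValNat 2 d = 1 ∧ 3 ≤ padicValNat 2 m ∧
              (k ≡ (m / (2 * d)) ^ (Nat.totient d - 1) [MOD d] ∨
                k ≡ (m / (2 * d)) ^ (Nat.totient d - 1) + d / 2 [MOD d]))) ∧
          (n : ℤ) ≡ (k : ℤ) * ((m / d : ℕ) : ℤ) - 1 [ZMOD (m : ℤ)]) := by
  obtain ⟨p', j, hp, hpodd, hj, hqe⟩ := hq
  have hq3 : 3 ≤ q := by
    have hp3 : 3 ≤ p' := by
      have h2 := hp.two_le
      rcases hpodd with ⟨u, hu⟩
      omega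
    calc (3 : ℕ) ≤ p' := hp3
      _ ≤ p' ^ j := Nat.le_self_pow (by omega) p'
      _ = q := hqe.symm
  have hm2 : 2 ≤ m := by rcases hχ with h | h <;> (subst h; omega)
  have hd0 : 0 < d := Nat.pos_of_dvd_of_pos hdm (by omega)
  have hd2 : 2 ≤ d := by obtain ⟨r, hr⟩ := hdeven; omega
  have hdE : 2 ∣ d := by obtain ⟨r, hr⟩ := hdeven; exact ⟨r, by omega⟩
  set e := m / d with he
  have hme : m = d * e := (Nat.mul_div_cancel' hdm).symm
  have he0 : 0 < e := by
    rcases Nat.eq_zero_or_pos e with h0 | h0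
    · rw [h0, mul_zero] at hme; omega
    · exact h0
  have he1 : e ≠ 1 := fun h1 => hdne (by rw [hme, h1, mul_one])
  have he2 : 2 ≤ e := by omega
  haveI : Fact (Nat.Prime 2) := ⟨Nat.prime_two⟩
  have hME : padicValNat 2 m = padicValNat 2 d + padicValNat 2 e := by
    rw [hme]; exact padicValNat.mul (by omega) (by omega)
  have hA1 : 1 ≤ padicValNat 2 d := one_le_padicValNat_of_dvd (by omega) hdE
  -- the core dispatch
  have hcore : ∀ kk : ℕ, 1 ≤ kk →
      ((∃ t, e * kk = d * t + 2 ∧ Nat.Coprime t e) ↔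
        ((padicValNat 2 d = padicValNat 2 m ∧
            kk ≡ 2 * e ^ (Nat.totient d - 1) [MOD d]) ∨
          (padicValNat 2 m = padicValNat 2 d + 1 ∧ 1 ≤ padicValNat 2 d ∧
            kk ≡ (m / (2 * d)) ^ (Nat.totient d - 1) + d / 2 [MOD d]) ∨
          (padicValNat 2 d = 1 ∧ 3 ≤ padicValNat 2 m ∧
            (kk ≡ (m / (2 * d)) ^ (Nat.totient d - 1) [MOD d] ∨
              kk ≡ (m / (2 * d)) ^ (Nat.totient d - 1) + d / 2 [MOD d])))) := by
    rcases (show ¬ 2 ∣ e ∨ e % 4 = 2 ∨ 4 ∣ e by omega) with hsc | hsc | hsc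
    · -- Scenario A : e odd
      have hE0 : padicValNat 2 e = 0 := padicValNat.eq_zero_of_not_dvd hsc
      have hAM : padicValNat 2 d = padicValNat 2 m := by omega
      intro kk hkk
      rw [coreA hd2 he2 hkk hsc hgcd]
      constructor
      · intro hx; exact Or.inl ⟨hAM, hx⟩
      · rintro (⟨-, hx⟩ | ⟨hv, -, -⟩ | ⟨hv1, hv2, -⟩)
        · exact hx
        · omega
        · omega
    · -- Scenario B : e ≡ 2 mod 4
      have hE1 : padicValNat 2 e = 1 := by
        obtain ⟨f, hfe⟩ : ∃ f, e = 2 * f := ⟨e / 2, by omega⟩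
        rw [hfe, padicValNat.mul (by norm_num) (by omega), padicValNat.self (by norm_num),
          padicValNat.eq_zero_of_not_dvd (show ¬ 2 ∣ f by omega)]
      have hBM : padicValNat 2 m = padicValNat 2 d + 1 := by omega
      have hm2d : m / (2 * d) = e / 2 := by
        obtain ⟨f, hfe⟩ : ∃ f, e = 2 * f := ⟨e / 2, by omega⟩
        have h1 : m = (2 * d) * (e / 2) := by
          rw [hme, hfe, show 2 * f / 2 = f by omega]; ring
        rw [h1, Nat.mul_div_cancel_left _ (by omega : 0 < 2 * d)]
      intro kk hkk
      rw [coreB hd2 hkk hsc hgcd hdE, hm2d]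
      constructor
      · intro hx; exact Or.inr (Or.inl ⟨hBM, hA1, hx⟩)
      · rintro (⟨hv, -⟩ | ⟨-, -, hx⟩ | ⟨hv1, hv2, -⟩)
        · omega
        · exact hx
        · omega
    · -- Scenario C : 4 ∣ e
      have hE2 : 2 ≤ padicValNat 2 e := by
        obtain ⟨g, hg⟩ := hsc
        rw [hg, show (4 : ℕ) * g = 2 ^ 2 * g by norm_num,
          padicValNat.mul (by norm_num) (by omega), padicValNat.prime_pow]
        omega
      have hC1 : padicValNat 2 d = 1 := by rcases hval with h | h | h <;> omega
      have hCM : 3 ≤ padicValNat 2 m := by omega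
      have hd4 : d % 4 = 2 := by
        obtain ⟨d1, hd1⟩ : ∃ x, d = 2 * x := ⟨d / 2, by omega⟩
        have hv : padicValNat 2 d = 1 + padicValNat 2 d1 := by
          rw [hd1, padicValNat.mul (by norm_num) (by omega), padicValNat.self (by norm_num)]
        have hnd : ¬ 2 ∣ d1 := by
          intro h2
          have := one_le_padicValNat_of_dvd (show d1 ≠ 0 by omega) h2
          omega
        omega
      have hm2d : m / (2 * d) = e / 2 := by
        obtain ⟨f, hfe⟩ : ∃ f, e = 2 * f := ⟨e / 2, by omega⟩
        have h1 : m = (2 * d) * (e / 2) := by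
          rw [hme, hfe, show 2 * f / 2 = f by omega]; ring
        rw [h1, Nat.mul_div_cancel_left _ (by omega : 0 < 2 * d)]
      intro kk hkk
      rw [coreC hd4 hkk hsc he0 hgcd, hm2d]
      constructor
      · intro hx; exact Or.inr (Or.inr ⟨hC1, hCM, hx⟩)
      · rintro (⟨hv, -⟩ | ⟨hv, -, -⟩ | ⟨-, -, hx⟩)
        · omega
        · omega
        · exact hx
  intro n hn1 hn2
  have hsq : n ^ 2 - 1 = (n - 1) * (n + 1) := by
    cases n with
    | zero => omega
    | succ n' =>
      rw [Nat.succ_sub_one]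
      have h : (n' + 1) ^ 2 = n' * (n' + 1 + 1) + 1 := by ring
      rw [h, Nat.add_sub_cancel]
  have hL : (m ∣ n ^ 2 - 1 ∧ Nat.gcd (n - 1) m = d) ↔
      ∃ k, 1 ≤ k ∧ n + 1 = e * k ∧ ∃ t, e * k = d * t + 2 ∧ Nat.Coprime t e := by
    constructor
    · rintro ⟨hdiv, hgcdn⟩
      have hn2' : 2 ≤ n := by
        rcases Nat.lt_or_ge n 2 with hlt | hge
        · exfalso
          have hn1' : n = 1 := by omega
          rw [hn1'] at hgcdn
          simp at hgcdn
          omega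
        · exact hge
      have hd1 : d ∣ n - 1 := hgcdn ▸ Nat.gcd_dvd_left (n - 1) m
      obtain ⟨t, htdef⟩ := hd1
      have hco : Nat.Coprime t e := by
        have hgm : Nat.gcd (d * t) (d * e) = d * Nat.gcd t e := Nat.gcd_mul_left d t e
        rw [← htdef, ← hme, hgcdn] at hgm
        have h9 : d * 1 = d * Nat.gcd t e := by rw [mul_one]; exact hgm
        exact (Nat.eq_of_mul_eq_mul_left hd0 h9).symm
      have hdivE : e ∣ n + 1 := by
        have h1 : d * e ∣ (n - 1) * (n + 1) := by rw [← hsq, ← hme]; exact hdiv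
        rw [htdef] at h1
        have h2 : e ∣ t * (n + 1) := by
          rcases h1 with ⟨w, hw⟩
          refine ⟨w, Nat.eq_of_mul_eq_mul_left hd0 ?_⟩
          rw [← mul_assoc, ← mul_assoc]
          exact hw
        exact (Nat.Coprime.dvd_of_dvd_mul_left (Nat.coprime_comm.mp hco) h2)
      obtain ⟨kk, hkk⟩ := hdivE
      have hkk1 : 1 ≤ kk := by
        rcases Nat.eq_zero_or_pos kk with h0 | h0
        · rw [h0, mul_zero] at hkk; omega
        · exact h0
      refine ⟨kk, hkk1, hkk, t, ?_, hco⟩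
      rw [← hkk]
      omega
    · rintro ⟨k, hk1, hnk, t, hekt, hco⟩
      have htdef : n - 1 = d * t := by omega
      constructor
      · rw [hme, hsq, htdef, hnk]
        exact ⟨t * k, by ring⟩
      · rw [htdef, hme, Nat.gcd_mul_left, Nat.Coprime.gcd_eq_one hco, mul_one]
  rw [hL]
  constructor
  · rintro ⟨k, hk1, hnk, ht⟩
    refine ⟨k, (hcore k hk1).mp ht, ?_⟩
    have hcast : (n : ℤ) = (k : ℤ) * (e : ℤ) - 1 := by
      have h := hnk
      have h2 : ((n : ℤ) + 1) = (e : ℤ) * k := by exact_mod_cast congrArg (Nat.cast : ℕ → ℤ) h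
      linarith
    rw [hcast]
  · rintro ⟨k, hcond, hmod⟩
    have h1 : (m : ℤ) ∣ ((n : ℤ) + 1) - k * e := by
      have hdv := Int.ModEq.dvd hmod
      have hrw : ((n : ℤ) + 1) - k * e = -(((k : ℤ) * e - 1) - n) := by ring
      rw [hrw]
      exact dvd_neg.mpr hdv
    have h2 : (e : ℤ) ∣ ((n : ℤ) + 1) := by
      have hem : (e : ℤ) ∣ (m : ℤ) := by
        exact_mod_cast Int.natCast_dvd_natCast.mpr ⟨d, by rw [hme]; ring⟩
      have h3 : (e : ℤ) ∣ ((n : ℤ) + 1) - k * e := dvd_trans hem h1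
      have h4 : (e : ℤ) ∣ (k : ℤ) * e := ⟨k, by ring⟩
      have h5 := dvd_add h3 h4
      simpa using h5
    have h2' : e ∣ n + 1 := by
      have : (e : ℤ) ∣ ((n + 1 : ℕ) : ℤ) := by push_cast; exact h2
      exact_mod_cast this
    obtain ⟨k', hk'⟩ := h2'
    have hk'1 : 1 ≤ k' := by
      rcases Nat.eq_zero_or_pos k' with h0 | h0
      · rw [h0, mul_zero] at hk'; omega
      · exact h0
    have hk'z : ((n : ℤ) + 1) = (e : ℤ) * k' := by exact_mod_cast congrArg (Nat.cast : ℕ → ℤ) hk'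
    have h5 : (d : ℤ) ∣ (k' : ℤ) - k := by
      have h6 : ((e : ℤ) * d) ∣ (e * ((k' : ℤ) - k)) := by
        have hmde : (m : ℤ) = (e : ℤ) * d := by exact_mod_cast (by rw [hme]; ring : m = e * d)
        rw [← hmde]
        rwa [show (e : ℤ) * ((k' : ℤ) - k) = ((n : ℤ) + 1) - k * e by rw [hk'z]; ring]
      exact (mul_dvd_mul_iff_left (show (e : ℤ) ≠ 0 by exact_mod_cast (by omega : e ≠ 0))).mp h6
    have hkk' : k ≡ k' [MOD d] := Nat.modEq_iff_dvd.mpr h5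
    have hcond' :
        ((padicValNat 2 d = padicValNat 2 m ∧
            k' ≡ 2 * e ^ (Nat.totient d - 1) [MOD d]) ∨
          (padicValNat 2 m = padicValNat 2 d + 1 ∧ 1 ≤ padicValNat 2 d ∧
            k' ≡ (m / (2 * d)) ^ (Nat.totient d - 1) + d / 2 [MOD d]) ∨
          (padicValNat 2 d = 1 ∧ 3 ≤ padicValNat 2 m ∧
            (k' ≡ (m / (2 * d)) ^ (Nat.totient d - 1) [MOD d] ∨
              k' ≡ (m / (2 * d)) ^ (Nat.totient d - 1) + d / 2 [MOD d]))) := by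
      rcases hcond with ⟨ha, hb⟩ | ⟨ha, hb, hc⟩ | ⟨ha, hb, hc⟩
      · exact Or.inl ⟨ha, hkk'.symm.trans hb⟩
      · exact Or.inr (Or.inl ⟨ha, hb, hkk'.symm.trans hc⟩)
      · rcases hc with hc | hc
        · exact Or.inr (Or.inr ⟨ha, hb, Or.inl (hkk'.symm.trans hc)⟩)
        · exact Or.inr (Or.inr ⟨ha, hb, Or.inr (hkk'.symm.trans hc)⟩)
    exact ⟨k', hk'1, hk', (hcore k' hk'1).mpr hcond'⟩
end

section
/- Let q be a power of an odd prime. The set of integers n with 1 ≤ n ≤ q + 1 such that (q + 1) divides n² − 1 and gcd(n − 1, q + 1) = 2 equals {q} if ν₂(q + 1) < 3, and equals {(q − 1)/2, q} if ν₂(q + 1) ≥ 3. -/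
lemma my_dvd_gcd_mul {m a b : ℕ} (h : m ∣ a * b) : m ∣ Nat.gcd a m * b := by
  have h1 : Nat.gcd a m * b = Nat.gcd (a * b) (m * b) := (Nat.gcd_mul_right a b m).symm
  rw [h1]
  exact Nat.dvd_gcd h (dvd_mul_right m b)

lemma my_key (m n : ℕ) (hm4 : 4 ≤ m) (hm2 : 2 ∣ m) (hn1 : 1 ≤ n) (hn2 : n ≤ m) :
    (m ∣ n ^ 2 - 1 ∧ Nat.gcd (n - 1) m = 2) ↔
      (n = m - 1 ∨ (8 ∣ m ∧ n = m / 2 - 1)) := by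
  constructor
  · rintro ⟨hd, hg⟩
    have h2d : 2 ∣ n - 1 := hg ▸ Nat.gcd_dvd_left _ _
    have hfac : n ^ 2 - 1 = (n - 1) * (n + 1) := by
      obtain ⟨k, rfl⟩ : ∃ k, n = k + 1 := ⟨n - 1, by omega⟩
      have h : (k + 1) ^ 2 = k * (k + 2) + 1 := by ring
      simp [h]
    rw [hfac] at hd
    have h2 : m ∣ 2 * (n + 1) := by
      have := my_dvd_gcd_mul hd
      rwa [hg] at this
    obtain ⟨c, hc⟩ := h2
    have hc0 : c ≠ 0 := by rintro rfl; omega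
    have hc2 : c ≤ 2 := by
      by_contra hcon
      push_neg at hcon
      have : m * 3 ≤ m * c := Nat.mul_le_mul_left m hcon
      omega
    have hc12 : c = 1 ∨ c = 2 := by omega
    rcases hc12 with rfl | rfl
    · -- 2*(n+1) = m
      right
      obtain ⟨t, ht⟩ := h2d
      by_cases hpar : 2 ∣ t
      · exfalso
        have h4 : (4 : ℕ) ∣ Nat.gcd (n - 1) m := Nat.dvd_gcd (by omega) (by omega)
        rw [hg] at h4
        omega
      · constructor <;> omega
    · left; omega
  · rintro (rfl | ⟨h8, rfl⟩)
    · refine ⟨?_, ?_⟩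
      · obtain ⟨u, rfl⟩ : ∃ u, m = u + 4 := ⟨m - 4, by omega⟩
        refine ⟨u + 2, ?_⟩
        have h : (u + 3) ^ 2 = (u + 4) * (u + 2) + 1 := by ring
        have h2 : u + 4 - 1 = u + 3 := by omega
        rw [h2, h]
        simp
      · obtain ⟨w, hw⟩ : ∃ w, m = 2 * (w + 1) := ⟨m / 2 - 1, by omega⟩
        subst hw
        have h1 : 2 * (w + 1) - 1 - 1 = 2 * w := by omega
        rw [h1, Nat.gcd_mul_left]
        have : Nat.gcd w (w + 1) = 1 := by
          have h := Nat.gcd_add_mul_right_right w 1 1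
          simpa using h
        omega
    · obtain ⟨w, hw⟩ : ∃ w, m = 8 * (w + 1) := ⟨m / 8 - 1, by omega⟩
      subst hw
      have hn : 8 * (w + 1) / 2 - 1 = 4 * w + 3 := by omega
      rw [hn]
      refine ⟨⟨2 * w + 1, ?_⟩, ?_⟩
      · have h : (4 * w + 3) ^ 2 = 8 * (w + 1) * (2 * w + 1) + 1 := by ring
        rw [h]; simp
      · have h1 : 4 * w + 3 - 1 = 2 * (2 * w + 1) := by omega
        have h2 : 8 * (w + 1) = 2 * (2 + 2 * (2 * w + 1)) := by omega
        rw [h1, h2, Nat.gcd_mul_left, Nat.gcd_add_mul_right_right]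
        have : Nat.gcd (2 * w + 1) 2 = 1 := Nat.coprime_two_right.mpr ⟨w, by omega⟩
        omega

/-- Proposition 3.9: the Rédei involutions with two fixed points. -/
theorem stmt_11 (q : ℕ) (hq : ∃ p' j : ℕ, p'.Prime ∧ Odd p' ∧ 0 < j ∧ q = p' ^ j) :
    (padicValNat 2 (q + 1) < 3 →
      (Finset.Icc 1 (q + 1)).filter
        (fun n => (q + 1) ∣ n ^ 2 - 1 ∧ Nat.gcd (n - 1) (q + 1) = 2) = {q}) ∧
    (3 ≤ padicValNat 2 (q + 1) →
      (Finset.Icc 1 (q + 1)).filter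
        (fun n => (q + 1) ∣ n ^ 2 - 1 ∧ Nat.gcd (n - 1) (q + 1) = 2) =
        {(q - 1) / 2, q}) := by
  have hq3 : 3 ≤ q := by
    obtain ⟨p, j, hp, hop, hj, rfl⟩ := hq
    have h2 : 2 ≤ p := hp.two_le
    have hne : p ≠ 2 := by rintro rfl; exact (Nat.not_odd_iff_even.mpr (by decide)) hop
    calc 3 ≤ p := by omega
    _ ≤ p ^ j := Nat.le_self_pow (by omega) p
  have hodd : ¬ 2 ∣ q := by
    obtain ⟨p, j, hp, hop, hj, rfl⟩ := hq
    have hoddq : Odd (p ^ j) := hop.pow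
    obtain ⟨k, hk⟩ := hoddq
    omega
  have h8iff : 3 ≤ padicValNat 2 (q + 1) ↔ 8 ∣ q + 1 := by
    haveI : Fact (Nat.Prime 2) := ⟨Nat.prime_two⟩
    rw [← padicValNat_dvd_iff_le (p := 2) (a := q + 1) (by omega)]
    norm_num
  have hm4 : 4 ≤ q + 1 := by omega
  have hm2 : 2 ∣ q + 1 := by omega
  constructor
  · intro hlt
    have h8 : ¬ 8 ∣ q + 1 := fun h => absurd (h8iff.mpr h) (by omega)
    ext n
    simp only [Finset.mem_filter, Finset.mem_Icc, Finset.mem_singleton]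
    constructor
    · rintro ⟨⟨hn1, hn2⟩, hcond⟩
      rcases (my_key (q + 1) n hm4 hm2 hn1 hn2).mp hcond with h | ⟨h8', _⟩
      · omega
      · exact absurd h8' h8
    · rintro rfl
      refine ⟨⟨by omega, by omega⟩, (my_key (n + 1) n hm4 hm2 (by omega) (by omega)).mpr ?_⟩
      left; omega
  · intro hge
    have h8 : 8 ∣ q + 1 := h8iff.mp hge
    ext n
    simp only [Finset.mem_filter, Finset.mem_Icc, Finset.mem_insert, Finset.mem_singleton]
    constructor
    · rintro ⟨⟨hn1, hn2⟩, hcond⟩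
      rcases (my_key (q + 1) n hm4 hm2 hn1 hn2).mp hcond with h | ⟨_, h⟩
      · right; omega
      · left; omega
    · rintro (rfl | rfl)
      · refine ⟨⟨by omega, by omega⟩,
          (my_key (q + 1) ((q - 1) / 2) hm4 hm2 (by omega) (by omega)).mpr ?_⟩
        right; exact ⟨h8, by omega⟩
      · refine ⟨⟨by omega, by omega⟩, (my_key (n + 1) n hm4 hm2 (by omega) (by omega)).mpr ?_⟩
        left; omega
end

section
/- Let q be a power of an odd prime, let χ, χ' ∈ {−1, 1} with χ ≠ χ', and set m = q − χ and m' = q − χ' (as natural numbers). Assume ν₂(m) ≥ 3. Let n, n' be positive integers such that m divides n² − 1, ν₂(gcd(n − 1, m)) = 1, and m' divides n'² − 1. Then, as integers, gcd(n − 1, m) + χ ≠ gcd(n' − 1, m') + χ'. -/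
/-- Corollary 3.8: involutions associated with parameters of distinct
quadratic characters have distinct cycle structures when ν₂(q-χ) ≥ 3 and
ν₂(gcd(n-1, q-χ)) = 1. -/
theorem stmt_13 (q : ℕ) (hq : ∃ p' j : ℕ, p'.Prime ∧ Odd p' ∧ 0 < j ∧ q = p' ^ j)
    (χ χ' : ℤ) (hχ : χ = 1 ∨ χ = -1) (hχ' : χ' = 1 ∨ χ' = -1) (hne : χ ≠ χ')
    (m m' : ℕ) (hm : (m : ℤ) = (q : ℤ) - χ) (hm' : (m' : ℤ) = (q : ℤ) - χ')
    (hν : 3 ≤ padicValNat 2 m)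
    (n n' : ℕ) (hn : 0 < n) (hn' : 0 < n')
    (hinv : m ∣ n ^ 2 - 1)
    (hd : padicValNat 2 (Nat.gcd (n - 1) m) = 1)
    (hinv' : m' ∣ n' ^ 2 - 1) :
    ((Nat.gcd (n - 1) m : ℤ) + χ ≠ (Nat.gcd (n' - 1) m' : ℤ) + χ') := by
  intro heq
  obtain ⟨p', j, hp, hodd, hj, hqe⟩ := hq
  have hq3 : 3 ≤ q := by
    subst hqe
    have h2 := hp.two_le
    have hp3 : 3 ≤ p' := by rcases hodd with ⟨k, hk⟩; omega
    calc 3 ≤ p' := hp3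
      _ ≤ p' ^ j := Nat.le_self_pow (by omega) _
  haveI : Fact (Nat.Prime 2) := ⟨Nat.prime_two⟩
  set g := Nat.gcd (n - 1) m with hg
  set g' := Nat.gcd (n' - 1) m' with hg'
  have hm0 : m ≠ 0 := by rcases hχ with h | h <;> omega
  have hg0 : g ≠ 0 := fun h => hm0 (Nat.eq_zero_of_gcd_eq_zero_right h)
  have h8m : (8 : ℕ) ∣ m := by
    have h1 : (2 : ℕ) ^ 3 ∣ 2 ^ padicValNat 2 m := pow_dvd_pow 2 hν
    exact (by norm_num : (8:ℕ) = 2 ^ 3) ▸ h1.trans pow_padicValNat_dvd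
  have h2g : (2 : ℕ) ∣ g := by
    have h1 : (2 : ℕ) ^ 1 ∣ 2 ^ padicValNat 2 g := pow_dvd_pow 2 (by omega)
    simpa using h1.trans pow_padicValNat_dvd
  have h4g : ¬ (4 : ℕ) ∣ g := by
    intro h
    have : (2:ℕ) ^ 2 ∣ g := by norm_num at h ⊢; exact h
    rw [padicValNat_dvd_iff] at this
    omega
  have h4g' : ¬ (4 : ℕ) ∣ g' := by
    intro h
    have h4m' : (4 : ℕ) ∣ m' := h.trans (Nat.gcd_dvd_right _ _)
    obtain ⟨k, hk⟩ := h4m'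
    obtain ⟨l, hl⟩ := h8m
    rcases hχ with h1 | h1 <;> rcases hχ' with h2 | h2 <;> subst h1 <;> subst h2 <;>
      simp at hne <;> omega
  obtain ⟨a, ha⟩ := h2g
  rcases hχ with h1 | h1 <;> rcases hχ' with h2 | h2 <;> subst h1 <;> subst h2 <;>
    simp at hne <;> omega
end
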